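/- arXiv:2501.08602 — 5 statements merged into one kernel-verified Lean document; each statement's English description precedes it below -/
import Mathlib

section
/- Let s ≥ 0 be an integer and define δ_s = 1 if s ≥ ⌊√s⌋² + ⌊√s⌋ and δ_s = 0 otherwise, q_s = 2⌊√s⌋ + 2 + δ_s, and c_s = s − ⌊√s⌋² − δ_s⌊√s⌋. Then for every even integer n with n > 6⌊√(s+1)⌋ − 6, the generalized Frobenius number of the three consecutive triangular numbers satisfies g(t_n, t_{n+1}, t_{n+2}; s) = ((n+1)(n+2)/4)·(q_s·n + 6c_s) − 1. -/
open Finset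

/-- Number of representations of `m` as `∑ i, a i * x i` with nonnegative integers `x i`
(for positive weights `a i`, every solution satisfies `x i ≤ m`). -/
def repCount {k : ℕ} (a : Fin k → ℕ) (m : ℕ) : ℕ :=
  (Finset.univ.filter (fun x : Fin k → Fin (m + 1) => ∑ i, a i * (x i : ℕ) = m)).card

/-- Representation count extended to the integers (no representations of negative numbers). -/
def repCountZ {k : ℕ} (a : Fin k → ℕ) (m : ℤ) : ℕ :=
  if 0 ≤ m then repCount a m.toNat else 0

/-- The generalized Frobenius number `g(a; s)`: the largest integer having at most `s`
representations by the tuple `a`. -/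
noncomputable def genFrob {k : ℕ} (a : Fin k → ℕ) (s : ℕ) : ℤ :=
  sSup {m : ℤ | repCountZ a m ≤ s}

/-- The `n`-th triangular number `t n = n(n+1)/2`. -/
def t (n : ℕ) : ℕ := n * (n + 1) / 2

/-- `N_s^even = 6⌊√(s+1)⌋ - 6`. -/
def NEven (s : ℕ) : ℤ := 6 * (Nat.sqrt (s + 1) : ℤ) - 6

/-- `N_s^odd = 6⌊(√(4s+5) - 1)/2⌋ - 3`. -/
def NOdd (s : ℕ) : ℤ := 6 * (((Nat.sqrt (4 * s + 5) - 1) / 2 : ℕ) : ℤ) - 3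

/-- `δ_s = 1` if `s ≥ ⌊√s⌋² + ⌊√s⌋`, and `0` otherwise. -/
def deltaS (s : ℕ) : ℤ := if Nat.sqrt s ^ 2 + Nat.sqrt s ≤ s then 1 else 0

/-- `q_s = 2⌊√s⌋ + 2 + δ_s`. -/
def qS (s : ℕ) : ℤ := 2 * (Nat.sqrt s : ℤ) + 2 + deltaS s

/-- `c_s = s - ⌊√s⌋² - δ_s⌊√s⌋`. -/
def cS (s : ℕ) : ℤ := (s : ℤ) - (Nat.sqrt s : ℤ) ^ 2 - deltaS s * (Nat.sqrt s : ℤ)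

/-- For `s = k(k+1) + i` with `0 ≤ i ≤ 2k+1`: `x_s^even`. -/
def xEvenN (k i : ℕ) : ℕ := if i ≤ k then i else i - k - 1

/-- For `s = k(k+1) + i` with `0 ≤ i ≤ 2k+1`: `y_s^even`. -/
def yEvenN (k i : ℕ) : ℕ := if i ≤ k then 2 * (k - i) else 4 * k + 3 - 2 * i

/-- For `s = k(k+1) + i` with `0 ≤ i ≤ 2k+1`: `x_s^odd`. -/
def xOddN (k i : ℕ) : ℕ := if i ≤ k then 2 * i else 2 * (i - k) - 1

/-- For `s = k(k+1) + i` with `0 ≤ i ≤ 2k+1`: `y_s^odd`. -/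
def yOddN (k i : ℕ) : ℕ := if i ≤ k then k - i else 2 * k + 1 - i

lemma sum_range_sub (t m : ℕ) (h : 2*t ≤ m+1) :
    ∑ j ∈ Finset.range t, (m - 2*j) = t*m - t*(t-1) := by
  induction t with
  | zero => simp
  | succ u ih =>
    rw [Finset.sum_range_succ, ih (by omega)]
    have e3 : u*(u-1) + u = u*u := by
      cases u with
      | zero => simp
      | succ v => simp only [Nat.succ_sub_one]; ring
    have h1 : u*u ≤ u*m := Nat.mul_le_mul_left u (by omega)
    have e1 : (u+1)*m = u*m + m := by ring
    have e4 : (u+1)*(u+1-1) = u*u + u := by simp [Nat.succ_sub_one]; ring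
    omega

set_option maxHeartbeats 2000000 in
/-- for even `n > N_s^even`,
`g(t_n, t_{n+1}, t_{n+2}; s) = ((n+1)(n+2)/4)(q_s n + 6 c_s) - 1`. -/
theorem stmt_0 (s n : ℕ) (hn : Even n) (hbound : (n : ℤ) > NEven s) :
    genFrob ![t n, t (n + 1), t (n + 2)] s =
      ((n : ℤ) + 1) * ((n : ℤ) + 2) * (qS s * (n : ℤ) + 6 * cS s) / 4 - 1 := by
  obtain ⟨p, hn2⟩ : ∃ p, n = 2*p := by
    obtain ⟨r, hr⟩ := hn; exact ⟨r, by omega⟩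
  -- basic quantities
  set k := Nat.sqrt s with hk
  set d : ℕ := if k ^ 2 + k ≤ s then 1 else 0 with hd
  set m := 2*k + d - 1 with hm0
  set c := s - k*k - d*k with hc0
  set AA := p*(2*p+1) with hA0
  set BB := (p+1)*(2*p+1) with hB0
  set CC := (p+1)*(2*p+3) with hC0
  set W := p*(m+3) + 3*c with hW0
  set V := p*m + 3*c with hV0
  set G := BB*W - 1 with hG0
  have hd01 : d = 0 ∨ d = 1 := by rw [hd]; split <;> simp
  have hs1 : k*k ≤ s := by have := Nat.sqrt_le' s; rwa [pow_two] at this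
  have hs2 : s < (k+1)*(k+1) := by have := Nat.lt_succ_sqrt' s; rwa [pow_two] at this
  have hdcases : (d = 1 ∧ k*k + k ≤ s) ∨ (d = 0 ∧ s < k*k + k) := by
    rw [hd]; split_ifs with h
    · exact Or.inl ⟨rfl, by rwa [pow_two] at h⟩
    · exact Or.inr ⟨rfl, by rw [pow_two] at h; omega⟩
  have hkd : d = 1 ∨ 1 ≤ k := by
    rcases Nat.eq_zero_or_pos k with h | h
    · left; rcases hdcases with ⟨h1, _⟩ | ⟨h1, h2⟩
      · exact h1
      · rw [h] at h2; simp at h2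
    · right; exact h
  have hc : c + k*k + d*k = s := by
    rw [hc0]
    rcases hdcases with ⟨h1, h2⟩ | ⟨h1, h2⟩ <;> rw [h1] <;> omega
  have hs2' : s < k*k + 2*k + 1 := by
    have e : (k+1)*(k+1) = k*k + 2*k + 1 := by ring
    omega
  have hcub : c + 1 ≤ k + d := by
    rcases hdcases with ⟨h1, h2⟩ | ⟨h1, h2⟩ <;> rw [h1] at hc ⊢ <;> omega
  -- bounds from hbound
  have hr1 : 1 ≤ Nat.sqrt (s+1) := Nat.sqrt_pos.2 (by omega)
  have hpr : 3 * Nat.sqrt (s+1) ≤ p + 2 := by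
    rw [NEven] at hbound; omega
  have hkr : k ≤ Nat.sqrt (s+1) := Nat.sqrt_le_sqrt (by omega)
  have hp1 : 1 ≤ p := by omega
  have hpk : 3*k ≤ p + 2 := by omega
  have hpc : 3*c ≤ p := by
    rcases Nat.lt_or_ge c k with h | h
    · omega
    · -- c = k, d = 1, s = k*k + 2*k
      have hck : c = k := by omega
      have hd1 : d = 1 := by omega
      have hsval : s = k*k + 2*k := by rw [hck, hd1] at hc; omega
      have : Nat.sqrt (s+1) = k+1 := by
        rw [hsval, show k*k+2*k+1 = (k+1)*(k+1) from by ring, Nat.sqrt_eq]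
      omega
  have hm1 : m + 1 = 2*k + d := by rw [hm0]; omega
  have h2cm : 2*c ≤ m := by omega
  have hBB1 : 1 ≤ BB := by
    rw [hB0]; have := Nat.mul_pos (show 0 < p+1 by omega) (show 0 < 2*p+1 by omega); omega
  have hW1 : 3 ≤ W := by
    rw [hW0]; have : 3 ≤ p*(m+3) := le_trans (by omega) (Nat.mul_le_mul hp1 (le_refl _))
    omega
  have hG1 : G + 1 = BB*W := by
    rw [hG0]; have : 1 ≤ BB*W := le_trans hBB1 (Nat.le_mul_of_pos_right BB (by omega))
    omega
  -- integer cast facts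
  have hAZ : (AA:ℤ) = (p:ℤ)*(2*(p:ℤ)+1) := by rw [hA0]; push_cast; ring
  have hBZ : (BB:ℤ) = ((p:ℤ)+1)*(2*(p:ℤ)+1) := by rw [hB0]; push_cast; ring
  have hCZ : (CC:ℤ) = ((p:ℤ)+1)*(2*(p:ℤ)+3) := by rw [hC0]; push_cast; ring
  have hWZ : (W:ℤ) = (p:ℤ)*((m:ℤ)+3) + 3*(c:ℤ) := by rw [hW0]; push_cast; ring
  have hVZ : (V:ℤ) = (p:ℤ)*(m:ℤ) + 3*(c:ℤ) := by rw [hV0]; push_cast; ring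
  have hWV : (W:ℤ) = (V:ℤ) + 3*(p:ℤ) := by rw [hWZ, hVZ]; ring
  have hgZnat : ((G : ℤ)) = (BB:ℤ)*W - 1 := by
    have h := congrArg (Nat.cast (R:=ℤ)) hG1; push_cast at h; omega
  have hGc : (G:ℤ) + 1 = (((p:ℤ)+1)*(2*(p:ℤ)+1)) * (W:ℤ) := by
    rw [hgZnat, hBZ]; ring
  -- triangular number values
  have ht1 : t (2*p) = AA := by
    rw [t, hA0, show 2*p*(2*p+1) = (p*(2*p+1))*2 from by ring,
      Nat.mul_div_cancel _ (by norm_num)]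
  have ht2 : t (2*p+1) = BB := by
    rw [t, hB0, show (2*p+1)*(2*p+1+1) = ((p+1)*(2*p+1))*2 from by ring,
      Nat.mul_div_cancel _ (by norm_num)]
  have ht3 : t (2*p+2) = CC := by
    rw [t, hC0, show (2*p+2)*(2*p+2+1) = ((p+1)*(2*p+3))*2 from by ring,
      Nat.mul_div_cancel _ (by norm_num)]
  have hmat : ![t n, t (n+1), t (n+2)] = ![AA, BB, CC] := by
    subst hn2
    funext idx; fin_cases idx
    · simpa using ht1
    · simpa using ht2
    · simpa using ht3
  -- the finite sets of lattice points
  classical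
  set Afin : Finset (ℕ × ℕ) :=
    (Finset.range k).biUnion (fun j => (Finset.range (m - 2*j)).image (fun i => (i, j))) with hAfin
  have hAmem : ∀ q : ℕ × ℕ, q ∈ Afin ↔ q.2 < k ∧ q.1 + 2*q.2 < m := by
    intro q
    rw [hAfin]
    simp only [Finset.mem_biUnion, Finset.mem_range, Finset.mem_image]
    constructor
    · rintro ⟨j, hj, i, hi, rfl⟩
      exact ⟨hj, by omega⟩
    · rintro ⟨h1, h2⟩
      exact ⟨q.2, h1, q.1, by omega, Prod.mk.eta⟩
  have hAcard : Afin.card = k*k + d*k := by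
    rw [hAfin, Finset.card_biUnion]
    · have heach : ∀ j ∈ Finset.range k,
          ((Finset.range (m - 2*j)).image (fun i => (i, j))).card = m - 2*j := by
        intro j hj
        rw [Finset.card_image_of_injective _ (fun a b h => (Prod.ext_iff.1 h).1),
          Finset.card_range]
      rw [Finset.sum_congr rfl heach, sum_range_sub k m (by omega)]
      have e1 : k*(m+1) = k*m + k := by ring
      have e2 : k*(m+1) = k*(2*k+d) := by rw [hm1]
      have e3 : k*(2*k+d) = 2*(k*k) + d*k := by ring
      have e4 : k*(k-1) + k = k*k := by
        cases k with
        | zero => simp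
        | succ v => simp only [Nat.succ_sub_one]; ring
      omega
    · intro a ha b hb hab
      rw [Function.onFun, Finset.disjoint_left]
      rintro ⟨q1, q2⟩ hqa hqb
      simp only [Finset.mem_image, Finset.mem_range, Prod.mk.injEq] at hqa hqb
      obtain ⟨i1, _, _, h1⟩ := hqa
      obtain ⟨i2, _, _, h2⟩ := hqb
      exact hab (h1.trans h2.symm)
  have hBcard : ∀ c' : ℕ,
      ((Finset.range c').image (fun j => (m - 2*j, j))).card = c' := by
    intro c'
    rw [Finset.card_image_of_injective _ (fun a b h => (Prod.ext_iff.1 h).2),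
      Finset.card_range]
  have hBmem : ∀ c' : ℕ, ∀ q : ℕ × ℕ,
      q ∈ (Finset.range c').image (fun j => (m - 2*j, j)) ↔ q.2 < c' ∧ q.1 = m - 2*q.2 := by
    intro c' q
    simp only [Finset.mem_image, Finset.mem_range]
    constructor
    · rintro ⟨j, hj, rfl⟩
      exact ⟨hj, rfl⟩
    · rintro ⟨h1, h2⟩
      exact ⟨q.2, h1, by rw [← h2]⟩
  have hsum3 : ∀ (N:ℕ) (x : Fin 3 → Fin (N+1)),
      ∑ i, ![AA,BB,CC] i * (x i : ℕ) = AA * (x 0 : ℕ) + BB * (x 1 : ℕ) + CC * (x 2 : ℕ) := by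
    intro N x; simp [Fin.sum_univ_three]
  -- UP : at G there are at most s representations
  have UP : repCount ![AA,BB,CC] G ≤ s := by
    rw [repCount]
    have hcard : ((Afin ∪ (Finset.range c).image (fun j => (m - 2*j, j))).image
        (fun q : ℕ × ℕ => ((p+1)*q.1 + p, (2*p+1)*q.2 + 2*p))).card ≤ s := by
      calc ((Afin ∪ (Finset.range c).image (fun j => (m - 2*j, j))).image
            (fun q : ℕ × ℕ => ((p+1)*q.1 + p, (2*p+1)*q.2 + 2*p))).card
          ≤ (Afin ∪ (Finset.range c).image (fun j => (m - 2*j, j))).card :=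
            Finset.card_image_le
        _ ≤ Afin.card + ((Finset.range c).image (fun j => (m - 2*j, j))).card :=
            Finset.card_union_le _ _
        _ ≤ s := by rw [hAcard, hBcard c]; omega
    refine le_trans (Finset.card_le_card_of_injOn
      (fun x : Fin 3 → Fin (G+1) => ((x 0 : ℕ), (x 2 : ℕ))) ?_ ?_) hcard
    · -- maps to
      intro x hx
      simp only [Finset.mem_coe, Finset.mem_filter, Finset.mem_univ, true_and, hsum3] at hx
      have hxZ : ((p:ℤ)*(2*(p:ℤ)+1))*((x 0 : ℕ):ℤ) + (((p:ℤ)+1)*(2*(p:ℤ)+1))*((x 1 : ℕ):ℤ)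
          + (((p:ℤ)+1)*(2*(p:ℤ)+3))*((x 2 : ℕ):ℤ) = (G:ℤ) := by
        have h := congrArg (Nat.cast (R:=ℤ)) hx
        push_cast at h
        rw [hAZ, hBZ, hCZ] at h
        linarith [h]
      obtain ⟨i, hi⟩ : ∃ i : ℕ, (x 0 : ℕ) = (p+1)*i + p := by
        have hdvd : ((p:ℤ)+1) ∣ ((x 0 : ℕ):ℤ) + 1 :=
          ⟨(2*(p:ℤ)+1)*(W:ℤ) - (((x 0:ℕ):ℤ)*(2*(p:ℤ)-1) + ((x 1:ℕ):ℤ)*(2*(p:ℤ)+1)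
            + ((x 2:ℕ):ℤ)*(2*(p:ℤ)+3)), by linear_combination hxZ + hGc⟩
        have hdvd' : (p+1) ∣ (x 0 : ℕ) + 1 := by exact_mod_cast hdvd
        obtain ⟨u, hu⟩ := hdvd'
        have hu1 : 1 ≤ u := by
          rcases Nat.eq_zero_or_pos u with h | h
          · rw [h, Nat.mul_zero] at hu; omega
          · exact h
        obtain ⟨v, rfl⟩ : ∃ v, u = v + 1 := ⟨u - 1, by omega⟩
        refine ⟨v, ?_⟩
        have e : (p+1)*(v+1) = (p+1)*v + p + 1 := by ring
        omega
      obtain ⟨j, hj⟩ : ∃ j : ℕ, (x 2 : ℕ) = (2*p+1)*j + 2*p := by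
        have hdvd : (2*(p:ℤ)+1) ∣ ((x 2 : ℕ):ℤ) + 1 :=
          ⟨((p:ℤ)+1)*(W:ℤ) - (((x 0:ℕ):ℤ)*(p:ℤ) + ((x 1:ℕ):ℤ)*((p:ℤ)+1)
            + ((x 2:ℕ):ℤ)*((p:ℤ)+2)), by linear_combination hxZ + hGc⟩
        have hdvd' : (2*p+1) ∣ (x 2 : ℕ) + 1 := by exact_mod_cast hdvd
        obtain ⟨u, hu⟩ := hdvd'
        have hu1 : 1 ≤ u := by
          rcases Nat.eq_zero_or_pos u with h | h
          · rw [h, Nat.mul_zero] at hu; omega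
          · exact h
        obtain ⟨v, rfl⟩ : ∃ v, u = v + 1 := ⟨u - 1, by omega⟩
        refine ⟨v, ?_⟩
        have e : (2*p+1)*(v+1) = (2*p+1)*v + 2*p + 1 := by ring
        omega
      have hkey : p*i + (2*p+3)*j + (x 1 : ℕ) + 1 = V := by
        have hBne : (((p:ℤ)+1)*(2*(p:ℤ)+1)) ≠ 0 := by positivity
        have hiZ : ((x 0 : ℕ):ℤ) = ((p:ℤ)+1)*(i:ℤ) + (p:ℤ) := by exact_mod_cast hi
        have hjZ : ((x 2 : ℕ):ℤ) = (2*(p:ℤ)+1)*(j:ℤ) + 2*(p:ℤ) := by exact_mod_cast hj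
        have h5 : (((p:ℤ)+1)*(2*(p:ℤ)+1)) * ((p:ℤ)*(i:ℤ) + (2*(p:ℤ)+3)*(j:ℤ) + ((x 1:ℕ):ℤ) + 1)
            = (((p:ℤ)+1)*(2*(p:ℤ)+1)) * ((V:ℤ)) := by
          linear_combination hxZ - ((p:ℤ)*(2*(p:ℤ)+1))*hiZ - (((p:ℤ)+1)*(2*(p:ℤ)+3))*hjZ
            + hGc + (((p:ℤ)+1)*(2*(p:ℤ)+1))*hWV
        have h6 := mul_left_cancel₀ hBne h5
        exact_mod_cast h6
      have hvlt : p*i + (2*p+3)*j < V := by omega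
      have e0 : p*i + (2*p+3)*j = p*(i+2*j) + 3*j := by ring
      have hijm : i + 2*j ≤ m := by
        by_contra hcon
        push_neg at hcon
        have h6 : p*(m+1) ≤ p*(i+2*j) := Nat.mul_le_mul_left p hcon
        have e7 : p*(m+1) = p*m + p := by ring
        omega
      have hmem : (i, j) ∈ Afin ∪ (Finset.range c).image (fun j => (m - 2*j, j)) := by
        rcases Nat.lt_or_ge (i + 2*j) m with h7 | h7
        · exact Finset.mem_union_left _ ((hAmem (i,j)).2 ⟨by omega, by omega⟩)
        · have h8 : i + 2*j = m := by omega
          have e9 : p*(i+2*j) = p*m := by rw [h8]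
          exact Finset.mem_union_right _ ((hBmem c (i,j)).2 ⟨by omega, by omega⟩)
      exact Finset.mem_image.2 ⟨(i,j), hmem, by rw [Prod.mk.injEq]; exact ⟨hi.symm, hj.symm⟩⟩
    · -- injective
      intro x hx y hy heq
      simp only [Finset.mem_coe, Finset.mem_filter, Finset.mem_univ, true_and, hsum3] at hx hy
      have h0 : (x 0 : ℕ) = (y 0 : ℕ) := congrArg Prod.fst heq
      have h2' : (x 2 : ℕ) = (y 2 : ℕ) := congrArg Prod.snd heq
      rw [h0, h2'] at hx
      have h1 : (x 1 : ℕ) = (y 1 : ℕ) :=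
        Nat.eq_of_mul_eq_mul_left (show 0 < BB by omega) (by omega)
      funext idx; fin_cases idx
      · exact Fin.val_injective h0
      · exact Fin.val_injective h1
      · exact Fin.val_injective h2'
  -- LOW : above G there are at least s+1 representations
  have LOW : ∀ N : ℕ, G < N → s + 1 ≤ repCount ![AA,BB,CC] N := by
    intro N hN
    rw [repCount]
    set xb := N % (p+1) with hxb
    set zb := N % (2*p+1) with hzb
    have hxbp : xb ≤ p := by
      have := Nat.mod_lt N (show 0 < p+1 by omega); omega
    have hzbp : zb ≤ 2*p := by
      have := Nat.mod_lt N (show 0 < 2*p+1 by omega); omega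
    obtain ⟨q1, hq1⟩ : ∃ q1, N = (p+1)*q1 + xb := ⟨N/(p+1), by rw [hxb]; exact (Nat.div_add_mod N (p+1)).symm⟩
    obtain ⟨q2, hq2⟩ : ∃ q2, N = (2*p+1)*q2 + zb := ⟨N/(2*p+1), by rw [hzb]; exact (Nat.div_add_mod N (2*p+1)).symm⟩
    have hq1Z : (N:ℤ) = ((p:ℤ)+1)*(q1:ℤ) + (xb:ℤ) := by exact_mod_cast hq1
    have hq2Z : (N:ℤ) = (2*(p:ℤ)+1)*(q2:ℤ) + (zb:ℤ) := by exact_mod_cast hq2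
    -- the integer parameter M
    obtain ⟨M, hM⟩ : ∃ M : ℤ, (N:ℤ) - (xb:ℤ)*((p:ℤ)*(2*(p:ℤ)+1))
        - (zb:ℤ)*(((p:ℤ)+1)*(2*(p:ℤ)+3)) = (((p:ℤ)+1)*(2*(p:ℤ)+1)) * M := by
      have hcop : IsCoprime ((p:ℤ)+1) (2*(p:ℤ)+1) := ⟨2, -1, by ring⟩
      have hdvd1 : ((p:ℤ)+1) ∣ ((N:ℤ) - (xb:ℤ)*((p:ℤ)*(2*(p:ℤ)+1))
          - (zb:ℤ)*(((p:ℤ)+1)*(2*(p:ℤ)+3))) :=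
        ⟨(q1:ℤ) - (xb:ℤ)*(2*(p:ℤ)-1) - (zb:ℤ)*(2*(p:ℤ)+3), by linear_combination hq1Z⟩
      have hdvd2 : (2*(p:ℤ)+1) ∣ ((N:ℤ) - (xb:ℤ)*((p:ℤ)*(2*(p:ℤ)+1))
          - (zb:ℤ)*(((p:ℤ)+1)*(2*(p:ℤ)+3))) :=
        ⟨(q2:ℤ) - (xb:ℤ)*(p:ℤ) - (zb:ℤ)*((p:ℤ)+2), by linear_combination hq2Z⟩
      exact hcop.mul_dvd hdvd1 hdvd2
    have hMeq : (N:ℤ) = (xb:ℤ)*((p:ℤ)*(2*(p:ℤ)+1)) + (zb:ℤ)*(((p:ℤ)+1)*(2*(p:ℤ)+3))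
        + (((p:ℤ)+1)*(2*(p:ℤ)+1)) * M := by linarith [hM]
    have hMV : (V:ℤ) ≤ M := by
      by_contra hcon
      push_neg at hcon
      have i1 : (xb:ℤ)*((p:ℤ)*(2*(p:ℤ)+1)) ≤ (p:ℤ)*((p:ℤ)*(2*(p:ℤ)+1)) :=
        mul_le_mul_of_nonneg_right (by exact_mod_cast hxbp) (by positivity)
      have i2 : (zb:ℤ)*(((p:ℤ)+1)*(2*(p:ℤ)+3)) ≤ (2*(p:ℤ))*(((p:ℤ)+1)*(2*(p:ℤ)+3)) :=
        mul_le_mul_of_nonneg_right (by exact_mod_cast hzbp) (by positivity)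
      have i3 : (((p:ℤ)+1)*(2*(p:ℤ)+1)) * M ≤ (((p:ℤ)+1)*(2*(p:ℤ)+1)) * ((V:ℤ)-1) :=
        mul_le_mul_of_nonneg_left (by omega) (by positivity)
      have i4 : (p:ℤ)*((p:ℤ)*(2*(p:ℤ)+1)) + (2*(p:ℤ))*(((p:ℤ)+1)*(2*(p:ℤ)+3))
          + (((p:ℤ)+1)*(2*(p:ℤ)+1))*((V:ℤ)-1) = (G:ℤ) := by
        rw [hgZnat, hBZ, hWV]; ring
      have i5 : (G:ℤ) < (N:ℤ) := by exact_mod_cast hN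
      linarith
    have hM0 : 0 ≤ M := le_trans (by positivity) hMV
    have hMnat : ((M.toNat : ℕ) : ℤ) = M := Int.toNat_of_nonneg hM0
    have hVM' : V ≤ M.toNat := by omega
    -- the set of s+1 lattice points
    have hdisj : Disjoint Afin ((Finset.range (c+1)).image (fun j => (m - 2*j, j))) := by
      rw [Finset.disjoint_left]
      intro q hq hq2
      rw [hAmem] at hq
      rw [hBmem (c+1)] at hq2
      omega
    have hScard : (Afin ∪ (Finset.range (c+1)).image (fun j => (m - 2*j, j))).card = s + 1 := by
      rw [Finset.card_union_of_disjoint hdisj, hAcard, hBcard (c+1)]; omega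
    -- every point of S has value at most V
    have hval : ∀ q : ℕ × ℕ, q ∈ Afin ∪ (Finset.range (c+1)).image (fun j => (m - 2*j, j)) →
        p*q.1 + (2*p+3)*q.2 ≤ V := by
      intro q hq
      rcases Finset.mem_union.1 hq with hq | hq
      · rw [hAmem] at hq
        obtain ⟨hjk, hijm⟩ := hq
        have e0 : p*q.1 + (2*p+3)*q.2 = p*(q.1+2*q.2) + 3*q.2 := by ring
        have h6 : p*(q.1+2*q.2+1) ≤ p*m := Nat.mul_le_mul_left p (by omega)
        have e7 : p*(q.1+2*q.2+1) = p*(q.1+2*q.2) + p := by ring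
        omega
      · rw [hBmem (c+1)] at hq
        obtain ⟨hjc, hq1'⟩ := hq
        have h8 : q.1 + 2*q.2 = m := by omega
        have e0 : p*q.1 + (2*p+3)*q.2 = p*(q.1+2*q.2) + 3*q.2 := by ring
        have e9 : p*(q.1+2*q.2) = p*m := by rw [h8]
        omega
    -- each point gives a solution
    have hsol : ∀ q : ℕ × ℕ, q ∈ Afin ∪ (Finset.range (c+1)).image (fun j => (m - 2*j, j)) →
        AA*(xb + (p+1)*q.1) + BB*(M.toNat - (p*q.1 + (2*p+3)*q.2))
          + CC*(zb + (2*p+1)*q.2) = N := by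
      intro q hq
      have hv := hval q hq
      have hvM : p*q.1 + (2*p+3)*q.2 ≤ M.toNat := le_trans hv hVM'
      have goalZ : (AA:ℤ)*((xb:ℤ) + ((p:ℤ)+1)*(q.1:ℤ))
          + (BB:ℤ)*((M.toNat:ℤ) - ((p:ℤ)*(q.1:ℤ) + (2*(p:ℤ)+3)*(q.2:ℤ)))
          + (CC:ℤ)*((zb:ℤ) + (2*(p:ℤ)+1)*(q.2:ℤ)) = (N:ℤ) := by
        rw [hAZ, hBZ, hCZ, hMnat]
        linear_combination -hMeq
      zify [hvM]
      linarith [goalZ]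
    -- bounds, to build Fin values
    have hAA1 : 1 ≤ AA := by
      rw [hA0]
      have := Nat.mul_pos (show 0 < p by omega) (show 0 < 2*p+1 by omega); omega
    have hCC1 : 1 ≤ CC := by
      rw [hC0]
      have := Nat.mul_pos (show 0 < p+1 by omega) (show 0 < 2*p+3 by omega); omega
    have hbnds : ∀ q : ℕ × ℕ, q ∈ Afin ∪ (Finset.range (c+1)).image (fun j => (m - 2*j, j)) →
        xb + (p+1)*q.1 ≤ N ∧ M.toNat - (p*q.1 + (2*p+3)*q.2) ≤ N ∧ zb + (2*p+1)*q.2 ≤ N := by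
      intro q hq
      have hs := hsol q hq
      have b1 : xb + (p+1)*q.1 ≤ AA*(xb + (p+1)*q.1) := Nat.le_mul_of_pos_left _ (by omega)
      have b2 : M.toNat - (p*q.1 + (2*p+3)*q.2) ≤ BB*(M.toNat - (p*q.1 + (2*p+3)*q.2)) :=
        Nat.le_mul_of_pos_left _ (by omega)
      have b3 : zb + (2*p+1)*q.2 ≤ CC*(zb + (2*p+1)*q.2) := Nat.le_mul_of_pos_left _ (by omega)
      omega
    rw [← hScard]
    refine Finset.card_le_card_of_injOn
      (fun q : ℕ × ℕ => ![(⟨(xb + (p+1)*q.1) % (N+1), Nat.mod_lt _ (by omega)⟩ : Fin (N+1)),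
        ⟨(M.toNat - (p*q.1 + (2*p+3)*q.2)) % (N+1), Nat.mod_lt _ (by omega)⟩,
        ⟨(zb + (2*p+1)*q.2) % (N+1), Nat.mod_lt _ (by omega)⟩]) ?_ ?_
    · intro q hq
      obtain ⟨b1, b2, b3⟩ := hbnds q hq
      simp only [Finset.mem_coe, Finset.mem_filter, Finset.mem_univ, true_and, hsum3]
      simp only [Matrix.cons_val_zero, Matrix.cons_val_one, Matrix.head_cons, Matrix.cons_val_two,
        Matrix.tail_cons]
      rw [Nat.mod_eq_of_lt (by omega), Nat.mod_eq_of_lt (by omega), Nat.mod_eq_of_lt (by omega)]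
      exact hsol q hq
    · intro q1' hq1' q2' hq2' heq
      have e0 := congrArg (fun f => ((f 0 : Fin (N+1)) : ℕ)) heq
      have e2 := congrArg (fun f => ((f 2 : Fin (N+1)) : ℕ)) heq
      simp only [Matrix.cons_val_zero, Matrix.cons_val_one, Matrix.head_cons, Matrix.cons_val_two,
        Matrix.tail_cons] at e0 e2
      obtain ⟨b1, b2, b3⟩ := hbnds q1' (Finset.mem_coe.1 hq1')
      obtain ⟨b1', b2', b3'⟩ := hbnds q2' (Finset.mem_coe.1 hq2')
      rw [Nat.mod_eq_of_lt (by omega), Nat.mod_eq_of_lt (by omega)] at e0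
      rw [Nat.mod_eq_of_lt (by omega), Nat.mod_eq_of_lt (by omega)] at e2
      have h1 : q1'.1 = q2'.1 :=
        Nat.eq_of_mul_eq_mul_left (show 0 < p+1 by omega) (by omega)
      have h2 : q1'.2 = q2'.2 :=
        Nat.eq_of_mul_eq_mul_left (show 0 < 2*p+1 by omega) (by omega)
      exact Prod.ext h1 h2
  -- assemble
  have hIs : IsGreatest {x : ℤ | repCountZ ![AA,BB,CC] x ≤ s} ((G:ℤ)) := by
    constructor
    · show repCountZ ![AA,BB,CC] (G:ℤ) ≤ s
      rw [repCountZ, if_pos (by positivity), Int.toNat_natCast]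
      exact UP
    · intro x hx
      by_contra hcon
      push_neg at hcon
      have hx0 : 0 ≤ x := le_trans (by positivity) (le_of_lt hcon)
      have : repCountZ ![AA,BB,CC] x = repCount ![AA,BB,CC] x.toNat := by
        rw [repCountZ, if_pos hx0]
      rw [Set.mem_setOf_eq, this] at hx
      have : G < x.toNat := by omega
      have := LOW x.toNat this
      omega
  have hdS : deltaS s = (d : ℤ) := by
    rw [deltaS, hd, ← hk]; split <;> simp
  have hqS : qS s = 2*(k:ℤ) + 2 + d := by rw [qS, ← hk, hdS]
  have hcS : cS s = (c : ℤ) := by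
    rw [cS, ← hk, hdS, pow_two]
    have := hc; push_cast [← this]; ring
  have hmZ : (m:ℤ) = 2*(k:ℤ) + (d:ℤ) - 1 := by
    have h := congrArg (Nat.cast (R:=ℤ)) hm1; push_cast at h; omega
  have key : ((n:ℤ)+1)*((n:ℤ)+2)*(qS s*(n:ℤ)+6*cS s) = 4*((BB:ℤ)*(W:ℤ)) := by
    rw [hqS, hcS]
    have hBZ : (BB:ℤ) = ((p:ℤ)+1)*(2*(p:ℤ)+1) := by rw [hB0]; push_cast; ring
    have hWZ : (W:ℤ) = (p:ℤ)*((m:ℤ)+3)+3*(c:ℤ) := by rw [hW0]; push_cast; ring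
    have hnZ : (n:ℤ) = 2*(p:ℤ) := by rw [hn2]; push_cast; ring
    rw [hBZ, hWZ, hmZ, hnZ]; ring
  rw [hmat]
  unfold genFrob
  rw [hIs.csSup_eq, hgZnat, key, Int.mul_ediv_cancel_left _ (by norm_num)]
end

section
/- Let s ≥ 0 be an integer and define δ_s = 1 if s ≥ ⌊√s⌋² + ⌊√s⌋ and δ_s = 0 otherwise, q_s = 2⌊√s⌋ + 2 + δ_s, and c_s = s − ⌊√s⌋² − δ_s⌊√s⌋. Then for every odd integer n with n > 6⌊(√(4s+5) − 1)/2⌋ − 3, the generalized Frobenius number of the three consecutive triangular numbers satisfies g(t_n, t_{n+1}, t_{n+2}; s) = ((n+1)(n+2)/4)·(q_s·n + 6c_s − 3δ_s) − 1. -/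
set_option maxHeartbeats 1000000


open Finset

lemma sumA (d K : ℕ) (h : d ≤ K + 1) :
    ∑ t ∈ range (K+1), (2*t + if t < d then 1 else 0) = K*(K+1) + d := by
  rw [Finset.sum_add_distrib]
  have h1 : ∑ t ∈ range (K+1), 2*t = K*(K+1) := by
    rw [← Finset.mul_sum]
    have := Finset.sum_range_id_mul_two (K+1)
    have e1 : (K+1)*(K+1-1) = K*(K+1) := by simp; ring
    omega
  have h2 : ∑ t ∈ range (K+1), (if t < d then 1 else 0) = d := by
    rw [Finset.sum_boole]
    have : (range (K+1)).filter (fun t => t < d) = range d := by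
      ext x; simp; omega
    rw [this]; simp
  omega
lemma sumB (d K : ℕ) (h : d ≤ K) :
    ∑ t ∈ range (K+1), ((2*t - 1) + if 1 ≤ t ∧ t ≤ d then 1 else 0) = K*K + d := by
  rw [Finset.sum_add_distrib]
  have h1 : ∀ n : ℕ, ∑ t ∈ range (n+1), (2*t-1) = n*n := by
    intro n; induction n with
    | zero => simp
    | succ n ih =>
      rw [Finset.sum_range_succ, ih]
      have : (n+1)*(n+1) = n*n + 2*n+1 := by ring
      omega
  have h2 : ∑ t ∈ range (K+1), (if 1 ≤ t ∧ t ≤ d then 1 else 0) = d := by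
    rw [Finset.sum_boole]
    have : (range (K+1)).filter (fun t => 1 ≤ t ∧ t ≤ d) = Finset.Icc 1 d := by
      ext x; simp; omega
    rw [this]; simp
  rw [h1 K, h2]
lemma rep_le (s m K : ℕ) (rbU : ℕ → ℕ) (Ms : ℤ)
    (hsumU : ∑ t ∈ range (K+1), rbU t ≤ s)
    (hU : ∀ i j : ℕ, ((2*m+1 : ℤ)*i + (m+2)*j ≤ Ms) → i ≤ K ∧ j < rbU (K - i))
    (N : ℕ) (hN : (N : ℤ) + 1 = ((m+1)*(2*m+3) : ℤ) * (3*m+1+Ms)) :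
    repCount ![(m+1)*(2*m+1), (m+1)*(2*m+3), (m+2)*(2*m+3)] N ≤ s := by
  unfold repCount
  set P : (Fin 3 → Fin (N+1)) → Prop :=
    fun x => ∑ i, (![(m+1)*(2*m+1), (m+1)*(2*m+3), (m+2)*(2*m+3)] : Fin 3 → ℕ) i * (x i : ℕ) = N with hP
  have Psimp : ∀ v : Fin 3 → Fin (N+1), P v ↔
      (m+1)*(2*m+1)*(v 0:ℕ) + (m+1)*(2*m+3)*(v 1:ℕ) + (m+2)*(2*m+3)*(v 2:ℕ) = N := by
    intro v; rw [hP]; simp [Fin.sum_univ_three]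
  classical
  set f : (Fin 3 → Fin (N+1)) → ((_ : ℕ) × ℕ) :=
    fun v => ⟨K - (((v 0 : ℕ) + 1)/(2*m+3) - 1), ((v 2 : ℕ) + 1)/(m+1) - 1⟩ with hf
  have main : ∀ v ∈ Finset.univ.filter P, ∃ i j : ℕ,
      (v 0 : ℕ) = (2*m+3)*i + (2*m+2) ∧ (v 2 : ℕ) = (m+1)*j + m ∧ i ≤ K ∧ j < rbU (K - i)
      ∧ f v = ⟨K - i, j⟩ := by
    intro v hv
    rw [Finset.mem_filter] at hv
    have hv' := (Psimp v).mp hv.2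
    have E1 : ((m+1)*(2*m+1) : ℤ)*(v 0:ℕ) + ((m+2)*(2*m+3))*(v 2:ℕ) + 1
        = ((m+1)*(2*m+3) : ℤ)*(3*m+1+Ms - (v 1:ℕ)) := by
      have := congrArg (fun x : ℕ => (x : ℤ)) hv'
      push_cast at this ⊢
      linarith [hN, this]
    have hq : ((2*m+3 : ℕ) : ℤ) ∣ ((v 0 : ℕ) : ℤ) + 1 := by
      refine ⟨(m+1)*(3*m+1+Ms - (v 1:ℕ)) - (m+2)*(v 2:ℕ) - m*(v 0:ℕ), ?_⟩
      push_cast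
      linear_combination E1
    have hp : ((m+1 : ℕ) : ℤ) ∣ ((v 2 : ℕ) : ℤ) + 1 := by
      refine ⟨(2*m+3)*(3*m+1+Ms - (v 1:ℕ)) - (2*m+1)*(v 0:ℕ) - (2*m+5)*(v 2:ℕ), ?_⟩
      push_cast
      linear_combination E1
    have hqn : (2*m+3) ∣ ((v 0 : ℕ) + 1) := by exact_mod_cast hq
    have hpn : (m+1) ∣ ((v 2 : ℕ) + 1) := by exact_mod_cast hp
    obtain ⟨i1, hi1⟩ := hqn
    obtain ⟨j1, hj1⟩ := hpn
    have hi1pos : 1 ≤ i1 := by nlinarith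
    have hj1pos : 1 ≤ j1 := by nlinarith
    obtain ⟨i, rfl⟩ : ∃ i, i1 = i + 1 := ⟨i1 - 1, by omega⟩
    obtain ⟨j, rfl⟩ : ∃ j, j1 = j + 1 := ⟨j1 - 1, by omega⟩
    have expand1 : (2*m+3)*(i+1) = (2*m+3)*i + (2*m+3) := by ring
    have expand2 : (m+1)*(j+1) = (m+1)*j + (m+1) := by ring
    have hv0 : (v 0 : ℕ) = (2*m+3)*i + (2*m+2) := by omega
    have hv2 : (v 2 : ℕ) = (m+1)*j + m := by omega
    have key : ((2*m+1 : ℤ))*i + (m+2)*j ≤ Ms := by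
      have hb : ((m+1)*(2*m+3) : ℤ) ≠ 0 := by positivity
      have E2 : ((m+1)*(2*m+3) : ℤ) * ((2*m+1)*i + (m+2)*j)
          = ((m+1)*(2*m+3) : ℤ) * (Ms - (v 1 : ℕ)) := by
        have c0 : ((v 0 : ℕ) : ℤ) = (2*m+3)*i + (2*m+2) := by exact_mod_cast hv0
        have c2 : ((v 2 : ℕ) : ℤ) = (m+1)*j + m := by exact_mod_cast hv2
        rw [c0, c2] at E1
        linear_combination E1
      have := mul_left_cancel₀ hb E2
      have hv1 : (0:ℤ) ≤ (v 1 : ℕ) := by positivity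
      linarith
    obtain ⟨hik, hjr⟩ := hU _ _ key
    refine ⟨i, j, hv0, hv2, hik, hjr, ?_⟩
    rw [hf]
    have d1 : ((v 0 : ℕ) + 1)/(2*m+3) = i+1 := by
      rw [show (v 0:ℕ)+1 = (i+1)*(2*m+3) by rw [hi1]; ring, Nat.mul_div_cancel _ (by omega)]
    have d2 : ((v 2 : ℕ) + 1)/(m+1) = j+1 := by
      rw [show (v 2:ℕ)+1 = (j+1)*(m+1) by rw [hj1]; ring, Nat.mul_div_cancel _ (by omega)]
    simp only [d1, d2, Nat.add_sub_cancel]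
  calc (Finset.univ.filter P).card
      ≤ ((range (K+1)).sigma (fun t => range (rbU t))).card := by
        apply Finset.card_le_card_of_injOn f
        · intro v hv
          obtain ⟨i, j, _, _, hik, hjr, hfv⟩ := main v hv
          rw [hfv, Finset.mem_coe, Finset.mem_sigma]
          exact ⟨by simp, by simpa using hjr⟩
        · intro v hv w hw heq
          obtain ⟨iv, jv, hv0, hv2, hivk, _, hfv⟩ := main v hv
          obtain ⟨iw, jw, hw0, hw2, hiwk, _, hfw⟩ := main w hw
          rw [hfv, hfw] at heq
          simp only [Sigma.mk.inj_iff, heq_eq_eq] at heq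
          have hiv : iv = iw := by omega
          have hjv : jv = jw := heq.2
          subst hiv; subst hjv
          have e0 : (v 0 : ℕ) = (w 0 : ℕ) := by omega
          have e2 : (v 2 : ℕ) = (w 2 : ℕ) := by omega
          have sv := (Psimp v).mp (Finset.mem_filter.mp hv).2
          have sw := (Psimp w).mp (Finset.mem_filter.mp hw).2
          have e1 : (v 1 : ℕ) = (w 1 : ℕ) := by
            have hb : 0 < (m+1)*(2*m+3) := by positivity
            rw [← e0, ← e2] at sw
            have : (m+1)*(2*m+3)*(v 1:ℕ) = (m+1)*(2*m+3)*(w 1:ℕ) := by omega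
            exact Nat.eq_of_mul_eq_mul_left hb this
          funext x
          fin_cases x
          · exact Fin.ext e0
          · exact Fin.ext e1
          · exact Fin.ext e2
  _ ≤ s := by rw [Finset.card_sigma]; simpa using hsumU
lemma rep_ge (s m K : ℕ) (rbL : ℕ → ℕ) (Ms : ℤ)
    (hMs : 0 ≤ Ms + 1)
    (hsumL : s + 1 ≤ ∑ t ∈ range (K+1), rbL t)
    (hL : ∀ t j : ℕ, t ≤ K → j < rbL t → ((2*m+1:ℤ)*((K-t : ℕ):ℤ) + (m+2)*j ≤ Ms + 1))
    (N : ℕ) (hN : ((m+1)*(2*m+3):ℤ)*(3*m+1+Ms) - 1 < (N:ℤ)) :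
    s < repCount ![(m+1)*(2*m+1), (m+1)*(2*m+3), (m+2)*(2*m+3)] N := by
  unfold repCount
  classical
  set P : (Fin 3 → Fin (N+1)) → Prop :=
    fun x => ∑ i, (![(m+1)*(2*m+1), (m+1)*(2*m+3), (m+2)*(2*m+3)] : Fin 3 → ℕ) i * (x i : ℕ) = N with hP
  have Psimp : ∀ v : Fin 3 → Fin (N+1), P v ↔
      (m+1)*(2*m+1)*(v 0:ℕ) + (m+1)*(2*m+3)*(v 1:ℕ) + (m+2)*(2*m+3)*(v 2:ℕ) = N := by
    intro v; rw [hP]; simp [Fin.sum_univ_three]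
  -- residues
  set x0 : ℕ := N % (2*m+3) with hx0
  set z0 : ℕ := N % (m+1) with hz0
  have hx0lt : x0 < 2*m+3 := Nat.mod_lt _ (by omega)
  have hz0lt : z0 < m+1 := Nat.mod_lt _ (by omega)
  obtain ⟨u, hu⟩ : ∃ u, N = (2*m+3)*u + x0 := ⟨N / (2*m+3), by rw [hx0]; exact (Nat.div_add_mod N (2*m+3)).symm⟩
  obtain ⟨w, hw⟩ : ∃ w, N = (m+1)*w + z0 := ⟨N / (m+1), by rw [hz0]; exact (Nat.div_add_mod N (m+1)).symm⟩
  have hq : ((2*m+3 : ℤ)) ∣ ((N:ℤ) - (m+1)*(2*m+1)*x0 - (m+2)*(2*m+3)*z0) := by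
    refine ⟨u - m*x0 - (m+2)*z0, ?_⟩
    have hu' : (N:ℤ) = (2*m+3)*u + x0 := by exact_mod_cast hu
    linear_combination hu'
  have hp : ((m+1 : ℤ)) ∣ ((N:ℤ) - (m+1)*(2*m+1)*x0 - (m+2)*(2*m+3)*z0) := by
    refine ⟨w - (2*m+1)*x0 - (2*m+5)*z0, ?_⟩
    have hw' : (N:ℤ) = (m+1)*w + z0 := by exact_mod_cast hw
    linear_combination hw'
  have hcop : IsCoprime ((m+1 : ℤ)) ((2*m+3 : ℤ)) := ⟨-2, 1, by ring⟩
  obtain ⟨M, hM⟩ := hcop.mul_dvd hp hq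
  have hM' : (N:ℤ) = (m+1)*(2*m+1)*x0 + (m+2)*(2*m+3)*z0 + (m+1)*(2*m+3)*M := by
    linarith [hM]
  have hMge : Ms + 1 ≤ M := by
    by_contra hcon
    push_neg at hcon
    have h1 : (x0:ℤ) ≤ 2*m+2 := by exact_mod_cast Nat.lt_succ_iff.mp hx0lt
    have h2 : (z0:ℤ) ≤ m := by exact_mod_cast Nat.lt_succ_iff.mp hz0lt
    have h3 : ((m+1)*(2*m+1):ℤ)*x0 ≤ (m+1)*(2*m+1)*(2*m+2) :=
      mul_le_mul_of_nonneg_left h1 (by positivity)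
    have h4 : ((m+2)*(2*m+3):ℤ)*z0 ≤ (m+2)*(2*m+3)*m :=
      mul_le_mul_of_nonneg_left h2 (by positivity)
    have h5 : ((m+1)*(2*m+3):ℤ)*M ≤ (m+1)*(2*m+3)*Ms :=
      mul_le_mul_of_nonneg_left (by omega) (by positivity)
    have hid : ((m+1)*(2*m+1):ℤ)*(2*m+2) + (m+2)*(2*m+3)*m + 1 = (m+1)*(2*m+3)*(3*m+1) := by ring
    have hexp : ((m+1)*(2*m+3):ℤ)*(3*m+1+Ms) = (m+1)*(2*m+3)*(3*m+1) + (m+1)*(2*m+3)*Ms := by ring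
    linarith
  -- the injection
  set f : ((_ : ℕ) × ℕ) → (Fin 3 → Fin (N+1)) :=
    fun tj => ![⟨(x0 + (2*m+3)*(K - tj.1)) % (N+1), Nat.mod_lt _ (by omega)⟩,
                ⟨(M - ((2*m+1)*((K - tj.1 : ℕ):ℤ) + (m+2)*tj.2)).toNat % (N+1), Nat.mod_lt _ (by omega)⟩,
                ⟨(z0 + (m+1)*tj.2) % (N+1), Nat.mod_lt _ (by omega)⟩] with hf
  have main : ∀ t j : ℕ, (⟨t, j⟩ : (_ : ℕ) × ℕ) ∈ (range (K+1)).sigma (fun t => range (rbL t)) →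
      (x0 + (2*m+3)*(K - t)) ≤ N ∧ (z0 + (m+1)*j) ≤ N ∧
      (M - ((2*m+1)*((K - t : ℕ):ℤ) + (m+2)*j)).toNat ≤ N ∧ f ⟨t, j⟩ ∈ Finset.univ.filter P := by
    intro t j htj
    rw [Finset.mem_sigma, Finset.mem_range, Finset.mem_range] at htj
    obtain ⟨ht2', hj2'⟩ := htj
    have ht2 : t < K + 1 := ht2'
    have hj2 : j < rbL t := hj2'
    have hW := hL t j (by omega) hj2
    set W : ℤ := (2*m+1)*((K-t : ℕ):ℤ) + (m+2)*j with hWdef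
    have hW0 : 0 ≤ W := by positivity
    have hWM : W ≤ M := le_trans hW hMge
    have hsum : ((m+1)*(2*m+1):ℤ)*(x0 + (2*m+3)*(K-t : ℕ)) + (m+1)*(2*m+3)*(M - W)
        + (m+2)*(2*m+3)*(z0 + (m+1)*j) = N := by
      rw [hM']; rw [hWdef]; ring
    have htn : ((M - W).toNat : ℤ) = M - W := Int.toNat_of_nonneg (by omega)
    have hsumN : (m+1)*(2*m+1)*(x0 + (2*m+3)*(K-t)) + (m+1)*(2*m+3)*(M-W).toNat
        + (m+2)*(2*m+3)*(z0 + (m+1)*j) = N := by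
      have := hsum
      rw [← htn] at this
      exact_mod_cast this
    have hx1 : (x0 + (2*m+3)*(K-t)) ≤ (m+1)*(2*m+1)*(x0 + (2*m+3)*(K-t)) :=
      Nat.le_mul_of_pos_left _ (by positivity)
    have hx2 : (z0 + (m+1)*j) ≤ (m+2)*(2*m+3)*(z0 + (m+1)*j) :=
      Nat.le_mul_of_pos_left _ (by positivity)
    have hx3 : (M - W).toNat ≤ (m+1)*(2*m+3)*(M - W).toNat :=
      Nat.le_mul_of_pos_left _ (by positivity)
    have b1 : (x0 + (2*m+3)*(K-t)) ≤ N := by omega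
    have b2 : (z0 + (m+1)*j) ≤ N := by omega
    have b3 : (M - W).toNat ≤ N := by omega
    refine ⟨b1, b2, b3, ?_⟩
    rw [Finset.mem_filter]
    refine ⟨Finset.mem_univ _, ?_⟩
    rw [Psimp]
    rw [hf]
    simp only [Matrix.cons_val_zero, Matrix.cons_val_one, Matrix.head_cons, Matrix.cons_val_two, Matrix.tail_cons]
    rw [Nat.mod_eq_of_lt (by omega), Nat.mod_eq_of_lt (by omega), Nat.mod_eq_of_lt (by omega)]
    exact hsumN
  have hcard : ((range (K+1)).sigma (fun t => range (rbL t))).card ≤ (Finset.univ.filter P).card := by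
    apply Finset.card_le_card_of_injOn f
    · rintro ⟨t, j⟩ htj; exact (main t j htj).2.2.2
    · rintro ⟨t, j⟩ htj ⟨t', j'⟩ htj' heq
      obtain ⟨b1, b2, _, _⟩ := main t j htj
      obtain ⟨b1', b2', _, _⟩ := main t' j' htj'
      simp only [Finset.mem_coe, Finset.mem_sigma, Finset.mem_range] at htj htj'
      have e0 := congrFun heq 0
      have e2 := congrFun heq 2
      simp [hf] at e0 e2
      have m1 : x0 + (2*m+3)*(K-t) < N+1 := by omega
      have m2 : x0 + (2*m+3)*(K-t') < N+1 := by omega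
      have m3 : z0 + (m+1)*j < N+1 := by omega
      have m4 : z0 + (m+1)*j' < N+1 := by omega
      rw [Nat.mod_eq_of_lt m1, Nat.mod_eq_of_lt m2] at e0
      rw [Nat.mod_eq_of_lt m3, Nat.mod_eq_of_lt m4] at e2
      have ht' : K - t = K - t' := by
        have := e0
        have h23 : (0:ℕ) < 2*m+3 := by omega
        exact Nat.eq_of_mul_eq_mul_left h23 (by omega)
      have hjj : j = j' := by
        have h11 : (0:ℕ) < m+1 := by omega
        exact Nat.eq_of_mul_eq_mul_left h11 (by omega)
      have htt : t = t' := by omega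
      subst htt; subst hjj; rfl
  have hfin : s + 1 ≤ (Finset.univ.filter P).card := by
    calc s + 1 ≤ ∑ t ∈ range (K+1), rbL t := hsumL
    _ = ((range (K+1)).sigma (fun t => range (rbL t))).card := by rw [Finset.card_sigma]; simp
    _ ≤ _ := hcard
  exact Nat.lt_of_lt_of_le (Nat.lt_succ_self s) hfin

lemma skeleton (s m K : ℕ) (rbU rbL : ℕ → ℕ) (Ms : ℤ)
    (hMs : 0 ≤ Ms + 1)
    (hsumU : ∑ t ∈ range (K+1), rbU t ≤ s)
    (hsumL : s + 1 ≤ ∑ t ∈ range (K+1), rbL t)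
    (hU : ∀ i j : ℕ, ((2*m+1 : ℤ)*i + (m+2)*j ≤ Ms) → i ≤ K ∧ j < rbU (K - i))
    (hL : ∀ t j : ℕ, t ≤ K → j < rbL t → ((2*m+1:ℤ)*((K-t : ℕ):ℤ) + (m+2)*j ≤ Ms + 1)) :
    genFrob ![(m+1)*(2*m+1), (m+1)*(2*m+3), (m+2)*(2*m+3)] s
      = ((m+1)*(2*m+3) : ℤ)*(3*m+1+Ms) - 1 := by
  have hFlb : (-1 : ℤ) ≤ ((m+1)*(2*m+3) : ℤ)*(3*m+1+Ms) - 1 := by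
    have h1 : (0:ℤ) ≤ ((m+1)*(2*m+3) : ℤ)*(3*m+1+Ms) := by
      apply mul_nonneg (by positivity)
      have hm0 : (0:ℤ) ≤ (m:ℤ) := by positivity
      linarith
    linarith
  apply IsGreatest.csSup_eq
  constructor
  · show repCountZ _ _ ≤ s
    unfold repCountZ
    by_cases h0 : (0:ℤ) ≤ ((m+1)*(2*m+3) : ℤ)*(3*m+1+Ms) - 1
    · rw [if_pos h0]
      apply rep_le s m K rbU Ms hsumU hU
      rw [Int.toNat_of_nonneg h0]
      push_cast
      ring
    · rw [if_neg h0]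
      exact Nat.zero_le s
  · intro X hX
    show X ≤ _
    by_contra hc
    push_neg at hc
    have hX0 : (0:ℤ) ≤ X := by omega
    have hmem : repCountZ ![(m+1)*(2*m+1), (m+1)*(2*m+3), (m+2)*(2*m+3)] X ≤ s := hX
    unfold repCountZ at hmem
    rw [if_pos hX0] at hmem
    have := rep_ge s m K rbL Ms hMs hsumL hL X.toNat
      (by rw [Int.toNat_of_nonneg hX0]; push_cast; push_cast at hc; linarith)
    omega

/-- for odd `n > N_s^odd`,
`g(t_n, t_{n+1}, t_{n+2}; s) = ((n+1)(n+2)/4)(q_s n + 6 c_s - 3 δ_s) - 1`. -/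
theorem stmt_1 (s n : ℕ) (hn : Odd n) (hbound : (n : ℤ) > NOdd s) :
    genFrob ![t n, t (n + 1), t (n + 2)] s =
      ((n : ℤ) + 1) * ((n : ℤ) + 2) * (qS s * (n : ℤ) + 6 * cS s - 3 * deltaS s) / 4 - 1 := by
  obtain ⟨m, rfl⟩ := hn
  have ht1 : t (2*m+1) = (m+1)*(2*m+1) := by
    have h : (2*m+1)*(2*m+1+1) = (m+1)*(2*m+1)*2 := by ring
    simp only [t]; omega
  have ht2 : t (2*m+1+1) = (m+1)*(2*m+3) := by
    have h : (2*m+1+1)*(2*m+1+1+1) = (m+1)*(2*m+3)*2 := by ring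
    simp only [t]; omega
  have ht3 : t (2*m+1+2) = (m+2)*(2*m+3) := by
    have h : (2*m+1+2)*(2*m+1+2+1) = (m+2)*(2*m+3)*2 := by ring
    simp only [t]; omega
  rw [ht1, ht2, ht3]
  unfold NOdd at hbound
  set k := Nat.sqrt s with hk
  have hk1 : k^2 ≤ s := Nat.sqrt_le' s
  have hk2 : s < (k+1)^2 := Nat.lt_succ_sqrt' s
  have he1 : (k+1)^2 = k^2 + 2*k + 1 := by ring
  have hsqk : ∀ r : ℕ, r^2 ≤ 4*s+5 → r ≤ Nat.sqrt (4*s+5) := fun r hr => Nat.le_sqrt'.mpr hr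
  by_cases hδ : k^2 + k ≤ s
  · -- δ = 1
    have hδ1 : deltaS s = 1 := by unfold deltaS; rw [← hk]; exact if_pos hδ
    set c := s - k^2 - k with hc
    have hck : c ≤ k := by omega
    have hcs : k^2 + k + c = s := by omega
    have hsq : 2*k+1 ≤ Nat.sqrt (4*s+5) := hsqk _ (by nlinarith)
    have hm3k : 3*k ≤ m + 1 := by push_cast at hbound; omega
    -- casts
    have hkc : (3:ℤ)*c ≤ 3*k := by exact_mod_cast Nat.mul_le_mul_left 3 hck
    have hkm : (3:ℤ)*k ≤ (m:ℤ)+1 := by exact_mod_cast hm3k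
    have hMs : (0:ℤ) ≤ ((2*(m:ℤ)+1)*(k:ℤ) + 3*(c:ℤ) - 1) + 1 := by
      have : (0:ℤ) ≤ (2*(m:ℤ)+1)*(k:ℤ) + 3*(c:ℤ) := by positivity
      linarith
    have hU : ∀ i j : ℕ, ((2*(m:ℤ)+1)*i + ((m:ℤ)+2)*j ≤ (2*(m:ℤ)+1)*(k:ℤ) + 3*(c:ℤ) - 1) →
        i ≤ k ∧ j < 2*(k-i) + (if (k-i) < c then 1 else 0) := by
      intro i j h
      have hj0 : (0:ℤ) ≤ ((m:ℤ)+2)*j := by positivity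
      have hik : i ≤ k := by
        by_contra hik
        push_neg at hik
        have h1 : ((k:ℤ)+1) ≤ i := by exact_mod_cast hik
        have h2 : (2*(m:ℤ)+1)*((k:ℤ)+1) ≤ (2*(m:ℤ)+1)*i :=
          mul_le_mul_of_nonneg_left h1 (by positivity)
        linarith
      refine ⟨hik, ?_⟩
      have hT : ((k - i : ℕ) : ℤ) = (k:ℤ) - i := by
        rw [Nat.cast_sub hik]
      have hi' : (i:ℤ) ≤ k := by exact_mod_cast hik
      by_cases hcc : k - i < c
      · rw [if_pos hcc]
        by_contra hj
        push_neg at hj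
        have h1 : 2*((k:ℤ)-i) + 1 ≤ j := by
          rw [← hT]; exact_mod_cast hj
        have h2 : ((m:ℤ)+2)*(2*((k:ℤ)-i)+1) ≤ ((m:ℤ)+2)*j :=
          mul_le_mul_of_nonneg_left h1 (by positivity)
        linarith
      · rw [if_neg hcc]
        push_neg at hcc
        by_contra hj
        push_neg at hj
        have h1 : 2*((k:ℤ)-i) ≤ j := by
          rw [← hT]; exact_mod_cast hj
        have h2 : ((m:ℤ)+2)*(2*((k:ℤ)-i)) ≤ ((m:ℤ)+2)*j :=
          mul_le_mul_of_nonneg_left h1 (by positivity)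
        have h3 : (c:ℤ) ≤ (k:ℤ) - i := by rw [← hT]; exact_mod_cast hcc
        linarith
    have hL : ∀ tt j : ℕ, tt ≤ k → j < 2*tt + (if tt < c+1 then 1 else 0) →
        ((2*(m:ℤ)+1)*((k-tt : ℕ):ℤ) + ((m:ℤ)+2)*j ≤ ((2*(m:ℤ)+1)*(k:ℤ) + 3*(c:ℤ) - 1) + 1) := by
      intro tt j ht hj
      have hT : ((k - tt : ℕ) : ℤ) = (k:ℤ) - tt := by rw [Nat.cast_sub ht]
      rw [hT]
      have ht' : (tt:ℤ) ≤ k := by exact_mod_cast ht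
      by_cases hcc : tt < c+1
      · rw [if_pos hcc] at hj
        have h1 : (j:ℤ) ≤ 2*(tt:ℤ) := by exact_mod_cast Nat.lt_succ_iff.mp hj
        have h2 : ((m:ℤ)+2)*j ≤ ((m:ℤ)+2)*(2*(tt:ℤ)) :=
          mul_le_mul_of_nonneg_left h1 (by positivity)
        have h3 : (tt:ℤ) ≤ c := by exact_mod_cast Nat.lt_succ_iff.mp hcc
        linarith
      · rw [if_neg hcc] at hj
        have h1 : (j:ℤ)+1 ≤ 2*(tt:ℤ) := by exact_mod_cast hj
        have h2 : ((m:ℤ)+2)*j ≤ ((m:ℤ)+2)*(2*(tt:ℤ)-1) :=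
          mul_le_mul_of_nonneg_left (by linarith) (by positivity)
        have hc0 : (0:ℤ) ≤ c := by positivity
        linarith
    have hmain := skeleton s m k (fun t => 2*t + if t < c then 1 else 0)
      (fun t => 2*t + if t < c+1 then 1 else 0) ((2*(m:ℤ)+1)*(k:ℤ) + 3*(c:ℤ) - 1)
      hMs
      (by rw [sumA c k (by omega)]
          have : k*(k+1) = k^2 + k := by ring
          omega)
      (by rw [sumA (c+1) k (by omega)]
          have : k*(k+1) = k^2 + k := by ring
          omega)
      (by intro i j h; exact hU i j (by push_cast at h ⊢; linarith))
      (by intro tt j ht hj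
          have := hL tt j ht hj
          push_cast at this ⊢
          linarith)
    rw [hmain]
    have hqs : qS s = 2*(k:ℤ) + 3 := by unfold qS; rw [← hk, hδ1]; ring
    have hcs' : cS s = (c:ℤ) := by
      unfold cS; rw [← hk, hδ1]
      have h1 : (s:ℤ) = (k:ℤ)^2 + (k:ℤ) + (c:ℤ) := by exact_mod_cast hcs.symm
      rw [h1]; ring
    have h4 : (((2*m+1 : ℕ) : ℤ) + 1) * (((2*m+1 : ℕ) : ℤ) + 2) *
        (qS s * ((2*m+1 : ℕ):ℤ) + 6 * cS s - 3 * deltaS s)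
        = 4*((((m:ℤ)+1)*(2*(m:ℤ)+3))*(3*(m:ℤ)+1+((2*(m:ℤ)+1)*(k:ℤ)+3*(c:ℤ)-1))) := by
      rw [hqs, hcs', hδ1]; push_cast; ring
    rw [h4, Int.mul_ediv_cancel_left _ (by norm_num : (4:ℤ) ≠ 0)]
  · -- δ = 0
    have hδ0 : deltaS s = 0 := by unfold deltaS; rw [← hk]; exact if_neg hδ
    have hkpos : 1 ≤ k := by
      rcases Nat.eq_zero_or_pos k with h0 | h1
      · exfalso; apply hδ; rw [h0]; simp
      · exact h1
    set c := s - k^2 with hc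
    have hck : c + 1 ≤ k := by omega
    have hcs : k^2 + c = s := by omega
    have hmfacts : 3*c + 2 ≤ m ∧ 3*k ≤ m + 4 := by
      by_cases hsplit : k^2 + k ≤ s + 1
      · have hsq : 2*k+1 ≤ Nat.sqrt (4*s+5) := hsqk _ (by nlinarith)
        push_cast at hbound
        constructor <;> omega
      · obtain ⟨k1, hk1'⟩ : ∃ k1, k = k1 + 1 := ⟨k-1, by omega⟩
        have hsq : 2*k1+1 ≤ Nat.sqrt (4*s+5) := hsqk _ (by nlinarith [hk1, hk1'.symm ▸ hk1])
        push_cast at hbound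
        constructor <;> omega
    obtain ⟨hmc, hmk⟩ := hmfacts
    have hmcZ : 3*(c:ℤ) + 2 ≤ (m:ℤ) := by exact_mod_cast hmc
    have hmkZ : 3*(k:ℤ) ≤ (m:ℤ) + 4 := by exact_mod_cast hmk
    have hckZ : (c:ℤ) + 1 ≤ (k:ℤ) := by exact_mod_cast hck
    have hkZ : (1:ℤ) ≤ (k:ℤ) := by exact_mod_cast hkpos
    have hMs : (0:ℤ) ≤ ((2*(m:ℤ)+1)*(k:ℤ) + 3*(c:ℤ) - (m:ℤ)) + 1 := by
      have hc0 : (0:ℤ) ≤ c := by positivity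
      have hp1 : (0:ℤ) ≤ (2*(m:ℤ)+1)*((k:ℤ)-1) :=
        mul_nonneg (by positivity) (by linarith)
      nlinarith [hp1]
    have hU : ∀ i j : ℕ, ((2*(m:ℤ)+1)*i + ((m:ℤ)+2)*j ≤ (2*(m:ℤ)+1)*(k:ℤ) + 3*(c:ℤ) - (m:ℤ)) →
        i ≤ k ∧ j < (2*(k-i) - 1) + (if 1 ≤ k-i ∧ k-i ≤ c then 1 else 0) := by
      intro i j h
      have hj0 : (0:ℤ) ≤ ((m:ℤ)+2)*j := by positivity
      have hik : i ≤ k := by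
        by_contra hik
        push_neg at hik
        have h1 : ((k:ℤ)+1) ≤ i := by exact_mod_cast hik
        have h2 : (2*(m:ℤ)+1)*((k:ℤ)+1) ≤ (2*(m:ℤ)+1)*i :=
          mul_le_mul_of_nonneg_left h1 (by positivity)
        linarith
      refine ⟨hik, ?_⟩
      have hT : ((k - i : ℕ) : ℤ) = (k:ℤ) - i := by rw [Nat.cast_sub hik]
      have hi' : (i:ℤ) ≤ k := by exact_mod_cast hik
      rcases Nat.eq_zero_or_pos (k - i) with hz | hpos
      · exfalso
        have hik' : (i:ℤ) = k := by
          have : i = k := by omega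
          exact_mod_cast this
        rw [hik'] at h
        linarith
      · have hposZ : (1:ℤ) ≤ (k:ℤ) - i := by rw [← hT]; exact_mod_cast hpos
        by_cases hcc : k - i ≤ c
        · rw [if_pos ⟨hpos, hcc⟩]
          by_contra hj
          push_neg at hj
          have h1 : 2*((k:ℤ)-i) ≤ j := by
            have : 2*(k-i) ≤ j := by omega
            rw [← hT]; exact_mod_cast this
          have h2 : ((m:ℤ)+2)*(2*((k:ℤ)-i)) ≤ ((m:ℤ)+2)*j :=
            mul_le_mul_of_nonneg_left h1 (by positivity)
          have h3 : (k:ℤ) - i ≤ c := by rw [← hT]; exact_mod_cast hcc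
          linarith
        · rw [if_neg (by tauto)]
          by_contra hj
          push_neg at hj
          have h1 : 2*((k:ℤ)-i) - 1 ≤ j := by
            have : 2*(k-i) - 1 ≤ j := by omega
            have h5 : ((2*(k-i) - 1 : ℕ) : ℤ) = 2*((k:ℤ)-i) - 1 := by
              rw [Nat.cast_sub (by omega)]; push_cast [hT]; ring
            rw [← h5]; exact_mod_cast this
          have h2 : ((m:ℤ)+2)*(2*((k:ℤ)-i)-1) ≤ ((m:ℤ)+2)*j :=
            mul_le_mul_of_nonneg_left h1 (by positivity)
          have h3 : (c:ℤ) + 1 ≤ (k:ℤ) - i := by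
            have : c + 1 ≤ k - i := by omega
            rw [← hT]; exact_mod_cast this
          linarith
    have hL : ∀ tt j : ℕ, tt ≤ k → j < (2*tt - 1) + (if 1 ≤ tt ∧ tt ≤ c+1 then 1 else 0) →
        ((2*(m:ℤ)+1)*((k-tt : ℕ):ℤ) + ((m:ℤ)+2)*j ≤ ((2*(m:ℤ)+1)*(k:ℤ) + 3*(c:ℤ) - (m:ℤ)) + 1) := by
      intro tt j ht hj
      have hT : ((k - tt : ℕ) : ℤ) = (k:ℤ) - tt := by rw [Nat.cast_sub ht]
      rw [hT]
      have ht' : (tt:ℤ) ≤ k := by exact_mod_cast ht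
      rcases Nat.eq_zero_or_pos tt with hz | hpos
      · exfalso
        rw [hz] at hj
        simp at hj
      · have htZ : (1:ℤ) ≤ (tt:ℤ) := by exact_mod_cast hpos
        by_cases hcc : tt ≤ c+1
        · rw [if_pos ⟨hpos, hcc⟩] at hj
          have h1 : (j:ℤ) ≤ 2*(tt:ℤ) - 1 := by
            have : j + 1 ≤ 2*tt := by omega
            have h5 : ((j + 1 : ℕ) : ℤ) ≤ ((2*tt : ℕ) : ℤ) := by exact_mod_cast this
            push_cast at h5; linarith
          have h2 : ((m:ℤ)+2)*j ≤ ((m:ℤ)+2)*(2*(tt:ℤ)-1) :=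
            mul_le_mul_of_nonneg_left h1 (by positivity)
          have h3 : (tt:ℤ) ≤ (c:ℤ)+1 := by exact_mod_cast hcc
          linarith
        · rw [if_neg (by tauto)] at hj
          have h1 : (j:ℤ) ≤ 2*(tt:ℤ) - 2 := by
            have : j + 2 ≤ 2*tt := by omega
            have h5 : ((j + 2 : ℕ) : ℤ) ≤ ((2*tt : ℕ) : ℤ) := by exact_mod_cast this
            push_cast at h5; linarith
          have h2 : ((m:ℤ)+2)*j ≤ ((m:ℤ)+2)*(2*(tt:ℤ)-2) :=
            mul_le_mul_of_nonneg_left h1 (by positivity)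
          have hc0 : (0:ℤ) ≤ c := by positivity
          linarith
    have hmain := skeleton s m k (fun t => (2*t - 1) + if 1 ≤ t ∧ t ≤ c then 1 else 0)
      (fun t => (2*t - 1) + if 1 ≤ t ∧ t ≤ c+1 then 1 else 0)
      ((2*(m:ℤ)+1)*(k:ℤ) + 3*(c:ℤ) - (m:ℤ))
      hMs
      (by rw [sumB c k (by omega)]
          have : k*k = k^2 := by ring
          omega)
      (by rw [sumB (c+1) k (by omega)]
          have : k*k = k^2 := by ring
          omega)
      (by intro i j h; exact hU i j (by push_cast at h ⊢; linarith))
      (by intro tt j ht hj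
          have := hL tt j ht hj
          push_cast at this ⊢
          linarith)
    rw [hmain]
    have hqs : qS s = 2*(k:ℤ) + 2 := by unfold qS; rw [← hk, hδ0]; ring
    have hcs' : cS s = (c:ℤ) := by
      unfold cS; rw [← hk, hδ0]
      have h1 : (s:ℤ) = (k:ℤ)^2 + (c:ℤ) := by exact_mod_cast hcs.symm
      rw [h1]; ring
    have h4 : (((2*m+1 : ℕ) : ℤ) + 1) * (((2*m+1 : ℕ) : ℤ) + 2) *
        (qS s * ((2*m+1 : ℕ):ℤ) + 6 * cS s - 3 * deltaS s)
        = 4*((((m:ℤ)+1)*(2*(m:ℤ)+3))*(3*(m:ℤ)+1+((2*(m:ℤ)+1)*(k:ℤ)+3*(c:ℤ)-(m:ℤ)))) := by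
      rw [hqs, hcs', hδ0]; push_cast; ring
    rw [h4, Int.mul_ediv_cancel_left _ (by norm_num : (4:ℤ) ≠ 0)]
end

section
/- Let s ≥ 0 and let n be an even integer with n > N_{s+1}^even. If s + 1 ∈ B, i.e. s + 1 = k² or s + 1 = k(k+1) for some integer k ≥ 1, then g(t_n, t_{n+1}, t_{n+2}; s+1) − g(t_n, t_{n+1}, t_{n+2}; s) = (n − 6k + 6)(n+1)(n+2)/4. -/
open Finset

namespace Stmt3Aux


def SS (m M : ℕ) : Finset (ℕ × ℕ) :=
  (range (M+1) ×ˢ range (M+1)).filter (fun p => m * p.1 + (2*m+3) * p.2 ≤ M)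

def R (m M : ℕ) : ℕ := (SS m M).card

def RZ (m : ℕ) (M : ℤ) : ℕ := if 0 ≤ M then R m M.toNat else 0

lemma R_mono (m : ℕ) {M M' : ℕ} (h : M ≤ M') : R m M ≤ R m M' := by
  apply Finset.card_le_card
  intro p hp
  simp only [SS, mem_filter, mem_product, mem_range] at hp ⊢
  exact ⟨⟨by omega, by omega⟩, by omega⟩

lemma filter_linear_card (m M C : ℕ) (hm : 0 < m) (h : C ≤ M) :
    ((range (M+1)).filter (fun u => m * u + C ≤ M)).card = (M - C)/m + 1 := by
  have hset : (range (M+1)).filter (fun u => m * u + C ≤ M) = range ((M-C)/m + 1) := by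
    ext u
    simp only [mem_filter, mem_range, Nat.lt_succ_iff]
    rw [Nat.le_div_iff_mul_le hm, mul_comm u m]
    constructor
    · rintro ⟨h1, h2⟩; omega
    · intro h2
      have h3 : u ≤ m * u := Nat.le_mul_of_pos_left u hm
      omega
  rw [hset, card_range]

lemma R_eq_sum (m M : ℕ) (hm : 0 < m) :
    R m M = ∑ v ∈ range (M+1),
      (if (2*m+3) * v ≤ M then (M - (2*m+3)*v)/m + 1 else 0) := by
  rw [R, SS, Finset.card_eq_sum_card_fiberwise (f := Prod.snd) (t := range (M+1))
    (fun p hp => by simp only [Finset.mem_coe, mem_filter, mem_product] at hp; exact hp.1.2)]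
  apply Finset.sum_congr rfl
  intro v hv
  simp only [mem_range] at hv
  have himg : ((range (M+1) ×ˢ range (M+1)).filter
        (fun p => m * p.1 + (2*m+3) * p.2 ≤ M)).filter (fun p => p.2 = v)
      = ((range (M+1)).filter (fun u => m * u + (2*m+3) * v ≤ M)).image (fun u => (u, v)) := by
    ext ⟨u, v'⟩
    simp only [mem_filter, mem_product, mem_range, mem_image, Prod.mk.injEq]
    constructor
    · rintro ⟨⟨⟨h1, h2⟩, h3⟩, rfl⟩; exact ⟨u, ⟨h1, h3⟩, rfl, rfl⟩
    · rintro ⟨u', ⟨h1, h3⟩, rfl, rfl⟩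
      exact ⟨⟨⟨h1, hv⟩, h3⟩, rfl⟩
  rw [himg, Finset.card_image_of_injective _ (by intro a b hab; simpa using hab)]
  split_ifs with h
  · exact filter_linear_card m M _ hm h
  · rw [Finset.filter_false_of_mem, Finset.card_empty]
    intro u hu
    omega

lemma sum_two_mul (n : ℕ) : ∑ v ∈ range (n+1), 2*v = n*(n+1) := by
  induction n with
  | zero => simp
  | succ n ih => rw [Finset.sum_range_succ, ih]; ring

lemma RGEN (m q r : ℕ) (hm : 0 < m) (hr : r < m) (hq : 3 * ((q-1)/2) ≤ m) :
    R m (q*m + r) = (q/2 + 1) * ((q+1)/2) + (min (q/2) (r/3) + 1) := by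
  set M := q*m + r with hM
  have hqM : q ≤ M := by
    have : q ≤ q*m := Nat.le_mul_of_pos_right q hm
    omega
  rw [R_eq_sum m M hm]
  have hterm : ∀ v, (if (2*m+3)*v ≤ M then (M - (2*m+3)*v)/m + 1 else 0)
      = (if 2*v ≤ q then q - 2*v else 0) + (if 2*v ≤ q ∧ 3*v ≤ r then 1 else 0) := by
    intro v
    by_cases h2 : 2*v ≤ q
    · obtain ⟨d, hd⟩ : ∃ d, q = 2*v + d := ⟨q - 2*v, by omega⟩
      by_cases h3 : 3*v ≤ r
      · obtain ⟨e, he⟩ : ∃ e, r = 3*v + e := ⟨r - 3*v, by omega⟩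
        have hc : (2*m+3)*v ≤ M := by
          rw [hM, hd, he]; nlinarith [Nat.zero_le (d*m), Nat.zero_le e]
        have hsub : M - (2*m+3)*v = d*m + e := by
          have hMe : M = (2*m+3)*v + (d*m + e) := by rw [hM, hd, he]; ring
          rw [hMe, Nat.add_sub_cancel_left]
        rw [if_pos hc, if_pos h2, if_pos (show 2*v ≤ q ∧ 3*v ≤ r from ⟨h2, h3⟩), hsub]
        rw [add_comm (d*m) e, mul_comm d m, Nat.add_mul_div_left _ _ hm,
          Nat.div_eq_of_lt (by omega)]
        omega
      · by_cases hdq : d = 0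
        · have hc : ¬ (2*m+3)*v ≤ M := by
            rw [hM, hd, hdq]
            intro hcon
            nlinarith [hcon]
          rw [if_neg hc, if_pos h2, if_neg (show ¬(2*v ≤ q ∧ 3*v ≤ r) from fun hcon => h3 hcon.2)]
          omega
        · have hv1 : v ≤ (q-1)/2 := by omega
          have h3m : 3*v ≤ m := by omega
          have hc : (2*m+3)*v ≤ M := by
            rw [hM, hd]
            have : 3*v ≤ d*m + r := by
              have : m ≤ d*m := Nat.le_mul_of_pos_left m (by omega)
              omega
            nlinarith [this]
          obtain ⟨f, hf⟩ : ∃ f, m = (3*v - r) + f := ⟨m - (3*v - r), by omega⟩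
          have hsub : M - (2*m+3)*v = (d-1)*m + f := by
            have hMe : M = (2*m+3)*v + ((d-1)*m + f) := by
              obtain ⟨d', hd'⟩ : ∃ d', d = d' + 1 := ⟨d - 1, by omega⟩
              rw [hM, hd, hd']
              simp only [Nat.add_sub_cancel]
              have hr3 : r + (3*v - r) = 3*v := by omega
              nlinarith [hf, hr3]
            rw [hMe, Nat.add_sub_cancel_left]
          rw [if_pos hc, if_pos h2, if_neg (show ¬(2*v ≤ q ∧ 3*v ≤ r) from fun hcon => h3 hcon.2), hsub]
          rw [add_comm ((d-1)*m) f, mul_comm (d-1) m, Nat.add_mul_div_left _ _ hm,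
            Nat.div_eq_of_lt (by omega)]
          omega
    · have hc : ¬ (2*m+3)*v ≤ M := by
        rw [hM]
        intro hcon
        have h1 : (q+1)*m ≤ 2*v*m := by
          apply Nat.mul_le_mul_right
          omega
        nlinarith [hcon, h1]
      rw [if_neg hc, if_neg (show ¬(2*v ≤ q ∧ 3*v ≤ r) from fun hcon => h2 hcon.1), if_neg h2]
  rw [Finset.sum_congr rfl (fun v _ => hterm v), Finset.sum_add_distrib]
  congr 1
  · -- first sum
    rw [← Finset.sum_subset (Finset.range_subset_range.mpr (show q/2+1 ≤ M+1 by omega))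
      (fun x _ hx => by
        rw [if_neg]
        simp only [mem_range] at hx
        omega)]
    obtain ⟨t, d, ht, hd, hd1⟩ : ∃ t d, t = q/2 ∧ q = 2*t + d ∧ d ≤ 1 := ⟨q/2, q - 2*(q/2), rfl, by omega, by omega⟩
    rw [← ht]
    have : ∀ v ∈ range (t+1), (if 2*v ≤ q then q - 2*v else 0) = d + 2*(t - v) := by
      intro v hv
      simp only [mem_range] at hv
      rw [if_pos (by omega)]
      omega
    rw [Finset.sum_congr rfl this, Finset.sum_add_distrib, Finset.sum_const, card_range,
      ← Finset.sum_range_reflect]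
    have : ∀ v ∈ range (t+1), 2*(t - (t + 1 - 1 - v)) = 2*v := by
      intro v hv
      simp only [mem_range] at hv
      omega
    rw [Finset.sum_congr rfl this, sum_two_mul]
    have h1 : (q+1)/2 = d + t := by omega
    rw [h1]
    ring
  · -- second sum
    set c := min (q/2) (r/3) with hc
    have hcb : c ≤ q/2 := by omega
    rw [← Finset.sum_subset (Finset.range_subset_range.mpr (show c+1 ≤ M+1 by omega))
      (fun x _ hx => by
        rw [if_neg]
        simp only [mem_range] at hx
        rw [not_and_or]
        omega)]
    have : ∀ v ∈ range (c+1), (if 2*v ≤ q ∧ 3*v ≤ r then 1 else 0) = 1 := by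
      intro v hv
      simp only [mem_range] at hv
      rw [if_pos ⟨by omega, by omega⟩]
    rw [Finset.sum_congr rfl this, Finset.sum_const, card_range, smul_eq_mul, mul_one]

def T3 (a₀ a₁ a₂ N : ℕ) : Finset ((ℕ × ℕ) × ℕ) :=
  ((range (N+1) ×ˢ range (N+1)) ×ˢ range (N+1)).filter
    (fun p => a₀ * p.1.1 + a₁ * p.1.2 + a₂ * p.2 = N)

lemma repCount_eq_card3 (a₀ a₁ a₂ N : ℕ) :
    repCount ![a₀, a₁, a₂] N = (T3 a₀ a₁ a₂ N).card := by
  apply Finset.card_bij (fun x _ => (((x 0 : ℕ), (x 1 : ℕ)), (x 2 : ℕ)))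
  · intro x hx
    simp only [mem_filter, mem_univ, true_and, Fin.sum_univ_three] at hx
    simp only [T3, mem_filter, mem_product, mem_range]
    refine ⟨⟨⟨(x 0).is_lt, (x 1).is_lt⟩, (x 2).is_lt⟩, ?_⟩
    simpa using hx
  · intro x _ y _ hxy
    simp only [Prod.mk.injEq] at hxy
    funext i
    fin_cases i
    · exact Fin.ext hxy.1.1
    · exact Fin.ext hxy.1.2
    · exact Fin.ext hxy.2
  · rintro ⟨⟨x, y⟩, z⟩ hb
    simp only [T3, mem_filter, mem_product, mem_range] at hb
    obtain ⟨⟨⟨hx, hy⟩, hz⟩, heq⟩ := hb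
    refine ⟨![⟨x, hx⟩, ⟨y, hy⟩, ⟨z, hz⟩], ?_, rfl⟩
    simp only [mem_filter, mem_univ, true_and, Fin.sum_univ_three]
    simpa using heq

lemma L1 (m x₀ z₀ M : ℕ) (hm : 0 < m) :
    R m M ≤ repCount ![m*(2*m+1), (m+1)*(2*m+1), (m+1)*(2*m+3)]
      (x₀*(m*(2*m+1)) + z₀*((m+1)*(2*m+3)) + M*((m+1)*(2*m+1))) := by
  rw [repCount_eq_card3]
  set a := m*(2*m+1) with ha
  set b := (m+1)*(2*m+1) with hb
  set c := (m+1)*(2*m+3) with hc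
  set N := x₀*a + z₀*c + M*b with hN
  have ha1 : 1 ≤ a := by rw [ha]; nlinarith
  have hb2 : 2 ≤ b := by rw [hb]; nlinarith
  have hc1 : 1 ≤ c := by rw [hc]; nlinarith
  apply Finset.card_le_card_of_injOn
      (fun p => ((x₀ + (m+1)*p.1, M - (m*p.1 + (2*m+3)*p.2)), z₀ + (2*m+1)*p.2))
  · intro p hp
    simp only [Finset.mem_coe, SS, mem_filter, mem_product, mem_range] at hp
    obtain ⟨⟨hu, hv⟩, hcond⟩ := hp
    have hu1 : p.1 ≤ m * p.1 := Nat.le_mul_of_pos_left p.1 hm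
    have huM : p.1 ≤ M := by linarith
    have hvM : (2*m+1)*p.2 ≤ M := by
      have : (2*m+1)*p.2 ≤ (2*m+3)*p.2 := Nat.mul_le_mul_right p.2 (by omega)
      linarith
    have f1 : x₀ ≤ x₀ * a := Nat.le_mul_of_pos_right x₀ (by omega)
    have f2 : z₀ ≤ z₀ * c := Nat.le_mul_of_pos_right z₀ (by omega)
    have f3 : M * 2 ≤ M * b := Nat.mul_le_mul_left M hb2
    have f4 : (m+1)*p.1 ≤ (m*p.1) + M := by linarith
    simp only [Finset.mem_coe, T3, mem_filter, mem_product, mem_range]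
    have hmp : m * p.1 ≤ M := le_trans (Nat.le_add_right _ _) hcond
    refine ⟨⟨⟨?_, ?_⟩, ?_⟩, ?_⟩
    · simp only [hN]; linarith
    · have : M - (m*p.1 + (2*m+3)*p.2) ≤ M := Nat.sub_le _ _
      simp only [hN]; linarith
    · simp only [hN]; linarith
    · -- the equation
      obtain ⟨y, hy⟩ := Nat.le.dest hcond
      have hsub : M - (m*p.1 + (2*m+3)*p.2) = y := by omega
      show _ = N
      rw [hsub, hN, ← hy, ha, hb, hc]
      ring
  · intro p hp p' hp' heq
    simp only [Prod.mk.injEq] at heq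
    obtain ⟨⟨e1, _⟩, e3⟩ := heq
    have h1 : p.1 = p'.1 :=
      Nat.eq_of_mul_eq_mul_left (show 0 < m+1 by omega) (Nat.add_left_cancel e1)
    have h2 : p.2 = p'.2 :=
      Nat.eq_of_mul_eq_mul_left (show 0 < 2*m+1 by omega) (Nat.add_left_cancel e3)
    exact Prod.ext h1 h2

lemma solution_structure (m : ℕ) (hm : 0 < m) (x₀ z₀ : ℕ) (hx : x₀ ≤ m) (hz : z₀ ≤ 2*m)
    (M : ℤ) (N : ℕ)
    (hN : (N:ℤ) = x₀*(m*(2*m+1)) + z₀*((m+1)*(2*m+3)) + M*((m+1)*(2*m+1)))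
    (x y z : ℕ) (heq : m*(2*m+1)*x + (m+1)*(2*m+1)*y + (m+1)*(2*m+3)*z = N) :
    ∃ u v : ℕ, x = x₀ + (m+1)*u ∧ z = z₀ + (2*m+1)*v ∧
      M = ((m*u + (2*m+3)*v + y : ℕ) : ℤ) := by
  have heqZ : (m:ℤ)*(2*m+1)*x + (m+1)*(2*m+1)*y + (m+1)*(2*m+3)*z
      = x₀*(m*(2*m+1)) + z₀*((m+1)*(2*m+3)) + M*((m+1)*(2*m+1)) := by
    rw [← hN]; exact_mod_cast heq
  have hd1 : ((m:ℤ)+1) ∣ ((x:ℤ) - x₀) :=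
    ⟨(2*m+1)*(M - y) - (2*m+3)*((z:ℤ) - z₀) - (2*m-1)*((x:ℤ) - x₀),
      by linear_combination heqZ⟩
  have hd2 : (2*(m:ℤ)+1) ∣ ((z:ℤ) - z₀) :=
    ⟨(m+1)*(M - y) - m*((x:ℤ) - x₀) - (m+2)*((z:ℤ) - z₀),
      by linear_combination heqZ⟩
  have hxx : (x₀:ℤ) ≤ x := by
    obtain ⟨tt, ht⟩ := hd1
    rcases le_or_gt 0 tt with h | h
    · nlinarith
    · have h1 : tt ≤ -1 := by omega
      have hx0 : (0:ℤ) ≤ x := Int.natCast_nonneg x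
      nlinarith
  have hzz : (z₀:ℤ) ≤ z := by
    obtain ⟨tt, ht⟩ := hd2
    rcases le_or_gt 0 tt with h | h
    · nlinarith
    · have h1 : tt ≤ -1 := by omega
      have hz0 : (0:ℤ) ≤ z := Int.natCast_nonneg z
      nlinarith
  have hxx' : x₀ ≤ x := by exact_mod_cast hxx
  have hzz' : z₀ ≤ z := by exact_mod_cast hzz
  have hd1' : (m+1) ∣ (x - x₀) := by
    have : ((x - x₀ : ℕ) : ℤ) = (x:ℤ) - x₀ := by omega
    have h2 : ((m+1 : ℕ) : ℤ) ∣ ((x - x₀ : ℕ) : ℤ) := by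
      rw [this]; exact_mod_cast hd1
    exact_mod_cast h2
  have hd2' : (2*m+1) ∣ (z - z₀) := by
    have : ((z - z₀ : ℕ) : ℤ) = (z:ℤ) - z₀ := by omega
    have h2 : ((2*m+1 : ℕ) : ℤ) ∣ ((z - z₀ : ℕ) : ℤ) := by
      rw [this]; exact_mod_cast hd2
    exact_mod_cast h2
  obtain ⟨u, hu⟩ := hd1'
  obtain ⟨v, hv⟩ := hd2'
  have hxu : x = x₀ + (m+1)*u := by
    have h3 : x = x₀ + (x - x₀) := by omega
    rw [hu] at h3; exact h3
  have hzv : z = z₀ + (2*m+1)*v := by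
    have h3 : z = z₀ + (z - z₀) := by omega
    rw [hv] at h3; exact h3
  refine ⟨u, v, hxu, hzv, ?_⟩
  have hbne : ((m:ℤ)+1)*(2*(m:ℤ)+1) ≠ 0 := by positivity
  have hkey : (((m:ℤ)+1)*(2*(m:ℤ)+1)) * (M - ((m*u + (2*m+3)*v + y : ℕ) : ℤ)) = 0 := by
    have hxuZ : (x:ℤ) = x₀ + (m+1)*u := by exact_mod_cast hxu
    have hzvZ : (z:ℤ) = z₀ + (2*m+1)*v := by exact_mod_cast hzv
    push_cast
    push_cast at heqZ
    linear_combination -heqZ + ((m:ℤ)*(2*m+1)) * hxuZ + ((m:ℤ)+1)*(2*(m:ℤ)+3) * hzvZ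
  have := mul_eq_zero.mp hkey
  rcases this with h | h
  · exact absurd h hbne
  · linarith

lemma L2 (m : ℕ) (hm : 0 < m) (x₀ z₀ : ℕ) (hx : x₀ ≤ m) (hz : z₀ ≤ 2*m) (M : ℤ) (N : ℕ)
    (hN : (N:ℤ) = x₀*(m*(2*m+1)) + z₀*((m+1)*(2*m+3)) + M*((m+1)*(2*m+1))) :
    repCount ![m*(2*m+1), (m+1)*(2*m+1), (m+1)*(2*m+3)] N ≤ RZ m M := by
  rw [repCount_eq_card3]
  by_cases hM : 0 ≤ M
  · rw [RZ, if_pos hM]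
    apply Finset.card_le_card_of_injOn (fun p => ((p.1.1 - x₀)/(m+1), (p.2 - z₀)/(2*m+1)))
    · rintro ⟨⟨x, y⟩, z⟩ hp
      simp only [Finset.mem_coe, T3, mem_filter, mem_product, mem_range] at hp
      obtain ⟨-, heq⟩ := hp
      obtain ⟨u, v, hxu, hzv, hMe⟩ := solution_structure m hm x₀ z₀ hx hz M N hN x y z heq
      have hMt : M.toNat = m*u + (2*m+3)*v + y := by
        rw [hMe]; exact Int.toNat_natCast _
      have e1 : (x - x₀)/(m+1) = u := by
        rw [hxu, Nat.add_sub_cancel_left, Nat.mul_div_cancel_left _ (show 0 < m+1 by omega)]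
      have e2 : (z - z₀)/(2*m+1) = v := by
        rw [hzv, Nat.add_sub_cancel_left, Nat.mul_div_cancel_left _ (show 0 < 2*m+1 by omega)]
      simp only [Finset.mem_coe, SS, mem_filter, mem_product, mem_range, e1, e2]
      have hu1 : u ≤ m * u := Nat.le_mul_of_pos_left u hm
      have hv1 : v ≤ (2*m+3) * v := Nat.le_mul_of_pos_left v (by omega)
      exact ⟨⟨by linarith [hMt.ge, hMt.le], by linarith⟩, by linarith⟩
    · rintro ⟨⟨x, y⟩, z⟩ hp ⟨⟨x', y'⟩, z'⟩ hp' hh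
      simp only [Finset.mem_coe, T3, mem_filter, mem_product, mem_range] at hp hp'
      obtain ⟨-, heq⟩ := hp
      obtain ⟨-, heq'⟩ := hp'
      obtain ⟨u, v, hxu, hzv, hMe⟩ := solution_structure m hm x₀ z₀ hx hz M N hN x y z heq
      obtain ⟨u', v', hxu', hzv', hMe'⟩ :=
        solution_structure m hm x₀ z₀ hx hz M N hN x' y' z' heq'
      have e1 : (x - x₀)/(m+1) = u := by
        rw [hxu, Nat.add_sub_cancel_left, Nat.mul_div_cancel_left _ (show 0 < m+1 by omega)]
      have e2 : (z - z₀)/(2*m+1) = v := by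
        rw [hzv, Nat.add_sub_cancel_left, Nat.mul_div_cancel_left _ (show 0 < 2*m+1 by omega)]
      have e1' : (x' - x₀)/(m+1) = u' := by
        rw [hxu', Nat.add_sub_cancel_left, Nat.mul_div_cancel_left _ (show 0 < m+1 by omega)]
      have e2' : (z' - z₀)/(2*m+1) = v' := by
        rw [hzv', Nat.add_sub_cancel_left, Nat.mul_div_cancel_left _ (show 0 < 2*m+1 by omega)]
      simp only [Prod.mk.injEq, e1, e2, e1', e2'] at hh
      obtain ⟨huu, hvv⟩ := hh
      have hxx : x = x' := by rw [hxu, hxu', huu]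
      have hzz : z = z' := by rw [hzv, hzv', hvv]
      have hyy : y = y' := by
        have hby : ((m+1)*(2*m+1))*y = ((m+1)*(2*m+1))*y' := by
          rw [hxx, hzz] at heq
          linarith [heq, heq']
        exact Nat.eq_of_mul_eq_mul_left (by positivity) hby
      simp [hxx, hyy, hzz]
  · rw [RZ, if_neg hM]
    have hemp : T3 (m*(2*m+1)) ((m+1)*(2*m+1)) ((m+1)*(2*m+3)) N = ∅ := by
      rw [Finset.eq_empty_iff_forall_notMem]
      rintro ⟨⟨x, y⟩, z⟩ hp
      simp only [T3, mem_filter, mem_product, mem_range] at hp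
      obtain ⟨-, heq⟩ := hp
      obtain ⟨u, v, -, -, hMe⟩ := solution_structure m hm x₀ z₀ hx hz M N hN x y z heq
      have : (0:ℤ) ≤ M := by rw [hMe]; positivity
      exact hM this
    rw [hemp, Finset.card_empty]

lemma DEC (m N : ℕ) (hm : 0 < m) : ∃ x₀ z₀ : ℕ, ∃ M : ℤ, x₀ ≤ m ∧ z₀ ≤ 2*m ∧
    (N:ℤ) = x₀*(m*(2*m+1)) + z₀*((m+1)*(2*m+3)) + M*((m+1)*(2*m+1)) := by
  have hx : N % (m+1) ≤ m := by
    have := Nat.mod_lt N (show 0 < m+1 by omega); omega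
  have hz : N % (2*m+1) ≤ 2*m := by
    have := Nat.mod_lt N (show 0 < 2*m+1 by omega); omega
  set x₀ := N % (m+1) with hx0
  set z₀ := N % (2*m+1) with hz0
  set D : ℤ := (N:ℤ) - x₀*(m*(2*m+1)) - z₀*((m+1)*(2*m+3)) with hD
  have hdm1 : ((m:ℤ)+1) * (N/(m+1) : ℕ) + x₀ = N := by
    exact_mod_cast congrArg (Nat.cast : ℕ → ℤ) (Nat.div_add_mod N (m+1))
  have hdm2 : (2*(m:ℤ)+1) * (N/(2*m+1) : ℕ) + z₀ = N := by
    exact_mod_cast congrArg (Nat.cast : ℕ → ℤ) (Nat.div_add_mod N (2*m+1))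
  have h1 : ((m:ℤ)+1) ∣ D :=
    ⟨(N/(m+1) : ℕ) - x₀*(2*m-1) - z₀*(2*m+3), by linear_combination -hdm1⟩
  have h2 : (2*(m:ℤ)+1) ∣ D :=
    ⟨(N/(2*m+1) : ℕ) - x₀*m - z₀*(m+2), by linear_combination -hdm2⟩
  have hcop : IsCoprime ((m:ℤ)+1) (2*(m:ℤ)+1) := by
    refine ⟨2, -1, by ring⟩
  have hmul : (((m:ℤ)+1) * (2*(m:ℤ)+1)) ∣ D := hcop.mul_dvd h1 h2
  obtain ⟨M, hMe⟩ := hmul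
  refine ⟨x₀, z₀, M, hx, hz, ?_⟩
  push_cast
  linear_combination hMe




lemma RZ_mono (m : ℕ) {M M' : ℤ} (h : M ≤ M') : RZ m M ≤ RZ m M' := by
  unfold RZ
  split_ifs with h1 h2 h2
  · exact R_mono m (by omega)
  · exact (h2 (le_trans h1 h)).elim
  · exact Nat.zero_le _
  · exact le_rfl

lemma RZ_eval (m q r : ℕ) (hm : 0 < m) (hr : r < m) (hq : 3*((q-1)/2) ≤ m)
    (F : ℤ) (hF : F = ((q*m + r : ℕ) : ℤ)) :
    RZ m F = (q/2+1)*((q+1)/2) + (min (q/2) (r/3) + 1) := by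
  rw [hF, RZ, if_pos (Int.natCast_nonneg _), Int.toNat_natCast]
  exact RGEN m q r hm hr hq

lemma genFrob_eq (m s : ℕ) (hm : 0 < m) (F : ℤ) (hF : -1 ≤ F)
    (hle : RZ m F ≤ s) (hgt : s + 1 ≤ RZ m (F+1)) :
    genFrob ![m*(2*m+1), (m+1)*(2*m+1), (m+1)*(2*m+3)] s
      = (m:ℤ)*((m:ℤ)*(2*(m:ℤ)+1)) + (2*(m:ℤ))*(((m:ℤ)+1)*(2*(m:ℤ)+3))
        + F*(((m:ℤ)+1)*(2*(m:ℤ)+1)) := by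
  have hm1 : (1:ℤ) ≤ (m:ℤ) := by exact_mod_cast hm
  have hbpos : (0:ℤ) < ((m:ℤ)+1)*(2*(m:ℤ)+1) := by positivity
  have hGnn : (0:ℤ) ≤ (m:ℤ)*((m:ℤ)*(2*(m:ℤ)+1)) + (2*(m:ℤ))*(((m:ℤ)+1)*(2*(m:ℤ)+3))
      + F*(((m:ℤ)+1)*(2*(m:ℤ)+1)) := by
    have h1 : -(((m:ℤ)+1)*(2*(m:ℤ)+1)) ≤ F*(((m:ℤ)+1)*(2*(m:ℤ)+1)) := by
      nlinarith [hbpos]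
    nlinarith [h1, hm1]
  have hmemb : repCountZ ![m*(2*m+1), (m+1)*(2*m+1), (m+1)*(2*m+3)]
      ((m:ℤ)*((m:ℤ)*(2*(m:ℤ)+1)) + (2*(m:ℤ))*(((m:ℤ)+1)*(2*(m:ℤ)+3))
        + F*(((m:ℤ)+1)*(2*(m:ℤ)+1))) ≤ s := by
    rw [repCountZ, if_pos hGnn]
    refine le_trans (L2 m hm m (2*m) le_rfl le_rfl F _ ?_) hle
    rw [Int.toNat_of_nonneg hGnn]
    push_cast
    ring
  refine IsGreatest.csSup_eq ⟨hmemb, ?_⟩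
  intro N hNs
  simp only [Set.mem_setOf_eq] at hNs
  by_contra hlt
  push_neg at hlt
  have hN0 : 0 ≤ N := le_trans hGnn hlt.le
  obtain ⟨x₀, z₀, M, hx, hz, hdec⟩ := DEC m N.toNat hm
  rw [Int.toNat_of_nonneg hN0] at hdec
  have hxz1 : (x₀:ℤ) ≤ (m:ℤ) := by exact_mod_cast hx
  have hxz2 : (z₀:ℤ) ≤ 2*(m:ℤ) := by exact_mod_cast hz
  have ht1 : (0:ℤ) ≤ ((m:ℤ) - x₀) * ((m:ℤ)*(2*(m:ℤ)+1)) :=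
    mul_nonneg (by linarith) (by positivity)
  have ht2 : (0:ℤ) ≤ (2*(m:ℤ) - z₀) * (((m:ℤ)+1)*(2*(m:ℤ)+3)) :=
    mul_nonneg (by linarith) (by positivity)
  have hMF : F + 1 ≤ M := by
    by_contra hMF'
    push_neg at hMF'
    have hMle : M ≤ F := by omega
    have hmul : M*(((m:ℤ)+1)*(2*(m:ℤ)+1)) ≤ F*(((m:ℤ)+1)*(2*(m:ℤ)+1)) :=
      mul_le_mul_of_nonneg_right hMle (le_of_lt hbpos)
    nlinarith [hdec, hlt, ht1, ht2, hmul]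
  have hM0 : 0 ≤ M := by omega
  have hNnat : N.toNat = x₀*(m*(2*m+1)) + z₀*((m+1)*(2*m+3)) + M.toNat*((m+1)*(2*m+1)) := by
    have hcast : (N.toNat : ℤ)
        = ((x₀*(m*(2*m+1)) + z₀*((m+1)*(2*m+3)) + M.toNat*((m+1)*(2*m+1)) : ℕ) : ℤ) := by
      rw [Int.toNat_of_nonneg hN0]
      push_cast [Int.toNat_of_nonneg hM0]
      linarith [hdec]
    exact_mod_cast hcast
  have hcontr : s + 1 ≤ repCountZ ![m*(2*m+1), (m+1)*(2*m+1), (m+1)*(2*m+3)] N := by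
    rw [repCountZ, if_pos hN0]
    calc s + 1 ≤ RZ m (F+1) := hgt
      _ ≤ RZ m M := RZ_mono m hMF
      _ = R m M.toNat := by rw [RZ, if_pos hM0]
      _ ≤ _ := by rw [hNnat]; exact L1 m x₀ z₀ M.toNat hm
  omega

end Stmt3Aux

set_option maxHeartbeats 2000000 in
open Stmt3Aux in
/-- for even `n > N_{s+1}^even`, if `s+1 = k²` or `s+1 = k(k+1)` with `k ≥ 1`, then
`g(…; s+1) - g(…; s) = (n - 6k + 6)(n+1)(n+2)/4`. -/
theorem stmt_3 (s n k : ℕ) (hn : Even n) (hbound : (n : ℤ) > NEven (s + 1))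
    (hk : 1 ≤ k) (hsk : s + 1 = k ^ 2 ∨ s + 1 = k * (k + 1)) :
    genFrob ![t n, t (n + 1), t (n + 2)] (s + 1) - genFrob ![t n, t (n + 1), t (n + 2)] s =
      ((n : ℤ) - 6 * k + 6) * ((n : ℤ) + 1) * ((n : ℤ) + 2) / 4 := by
  obtain ⟨m, hm2⟩ := hn
  have hnm : n = 2*m := by omega
  have hsq : Nat.sqrt (s+2) = k := by
    have hk2 : k*k ≤ s+2 ∧ s+2 < (k+1)*(k+1) := by
      rcases hsk with h | h
      · have hkk : k^2 = k*k := sq k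
        constructor
        · omega
        · nlinarith [h]
      · constructor
        · nlinarith [h]
        · nlinarith [h]
    have h1 : k ≤ Nat.sqrt (s+2) := Nat.le_sqrt.mpr hk2.1
    have h2 : Nat.sqrt (s+2) < k+1 := Nat.sqrt_lt.mpr hk2.2
    omega
  have hbk : (n:ℤ) > 6*(k:ℤ) - 6 := by
    rw [NEven, show s+1+1 = s+2 from by omega, hsq] at hbound
    exact hbound
  have hmk : 3*k ≤ m + 2 := by
    have h6 : 6*k < n + 6 := by exact_mod_cast (show (6*k:ℤ) < (n:ℤ) + 6 by linarith)
    omega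
  have hm : 0 < m := by omega
  have hkZ : (1:ℤ) ≤ (k:ℤ) := by exact_mod_cast hk
  have hmZ : (1:ℤ) ≤ (m:ℤ) := by exact_mod_cast hm
  have e0 : t n = m*(2*m+1) := by
    rw [t, hnm, show 2*m*(2*m+1) = 2*(m*(2*m+1)) from by ring,
      Nat.mul_div_cancel_left _ (by norm_num)]
  have e1 : t (n+1) = (m+1)*(2*m+1) := by
    rw [t, hnm, show (2*m+1)*(2*m+1+1) = 2*((m+1)*(2*m+1)) from by ring,
      Nat.mul_div_cancel_left _ (by norm_num)]
  have e2 : t (n+2) = (m+1)*(2*m+3) := by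
    rw [t, hnm, show (2*m+2)*(2*m+2+1) = 2*((m+1)*(2*m+3)) from by ring,
      Nat.mul_div_cancel_left _ (by norm_num)]
  have hveq : ![t n, t (n+1), t (n+2)] = ![m*(2*m+1), (m+1)*(2*m+1), (m+1)*(2*m+3)] := by
    funext i
    fin_cases i <;> simp [e0, e1, e2]
  rw [hveq, hnm]
  have hdiv : ((2*(m:ℕ):ℤ) - 6*(k:ℤ) + 6) * ((2*(m:ℕ):ℤ) + 1) * ((2*(m:ℕ):ℤ) + 2)
      = (((m:ℤ) - 3*(k:ℤ) + 3) * (((m:ℤ)+1)*(2*(m:ℤ)+1))) * 4 := by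
    push_cast
    ring
  push_cast
  rw [hdiv, Int.mul_ediv_cancel _ (by norm_num)]
  rcases hsk with hcase | hcase
  · -- s + 1 = k^2
    have hkk : k^2 = k*k := sq k
    -- evaluate genFrob at s
    have hgf1 : genFrob ![m*(2*m+1), (m+1)*(2*m+1), (m+1)*(2*m+3)] s
        = (m:ℤ)*((m:ℤ)*(2*(m:ℤ)+1)) + (2*(m:ℤ))*(((m:ℤ)+1)*(2*(m:ℤ)+3))
          + ((2*(k:ℤ)-2)*(m:ℤ) + 3*(k:ℤ) - 4)*(((m:ℤ)+1)*(2*(m:ℤ)+1)) := by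
      apply genFrob_eq m s hm _ ?_ ?_ ?_
      · -- -1 ≤ F
        nlinarith [mul_nonneg (show (0:ℤ) ≤ 2*(k:ℤ)-2 by linarith)
          (show (0:ℤ) ≤ (m:ℤ) by positivity)]
      · -- RZ m F ≤ s
        rcases Nat.lt_or_ge k 2 with hk2 | hk2
        · have hk1 : k = 1 := by omega
          subst hk1
          rw [show (2*((1:ℕ):ℤ)-2)*(m:ℤ) + 3*((1:ℕ):ℤ) - 4 = (-1 : ℤ) from by push_cast; ring,
            RZ, if_neg (by norm_num)]
          exact Nat.zero_le _
        · rw [RZ_eval m (2*k-2) (3*k-4) hm (by omega) (by omega) _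
            (by push_cast [show (((2*k-2:ℕ)):ℤ) = 2*(k:ℤ)-2 from by omega,
              show (((3*k-4:ℕ)):ℤ) = 3*(k:ℤ)-4 from by omega]; ring)]
          have d1 : (2*k-2)/2 = k-1 := by omega
          have d2 : (2*k-2+1)/2 = k-1 := by omega
          have d3 : (3*k-4)/3 = k-2 := by omega
          rw [d1, d2, d3, min_eq_right (by omega)]
          obtain ⟨j, rfl⟩ : ∃ j, k = j+2 := ⟨k-2, by omega⟩
          have key : (j+2-1+1)*(j+2-1) + (j+2-2+1) + 1 = (j+2)^2 := by
            have a1 : j+2-1+1 = j+2 := by omega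
            have a2 : j+2-1 = j+1 := by omega
            have a3 : j+2-2+1 = j+1 := by omega
            rw [a1, a2, a3]; ring
          omega
      · -- s + 1 ≤ RZ m (F+1)
        rw [show (2*(k:ℤ)-2)*(m:ℤ) + 3*(k:ℤ) - 4 + 1 = (((2*k-2)*m + (3*k-3) : ℕ) : ℤ) from by
            push_cast [show (((2*k-2:ℕ)):ℤ) = 2*(k:ℤ)-2 from by omega,
              show (((3*k-3:ℕ)):ℤ) = 3*(k:ℤ)-3 from by omega]; ring]
        rw [RZ_eval m (2*k-2) (3*k-3) hm (by omega) (by omega) _ rfl]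
        have d1 : (2*k-2)/2 = k-1 := by omega
        have d2 : (2*k-2+1)/2 = k-1 := by omega
        have d3 : (3*k-3)/3 = k-1 := by omega
        rw [d1, d2, d3, min_self]
        obtain ⟨j, rfl⟩ : ∃ j, k = j+1 := ⟨k-1, by omega⟩
        have key : (j+1-1+1)*(j+1-1) + (j+1-1+1) = (j+1)^2 := by
          have a1 : j+1-1+1 = j+1 := by omega
          have a2 : j+1-1 = j := by omega
          rw [a1, a2]; ring
        omega
    have hgf2 : genFrob ![m*(2*m+1), (m+1)*(2*m+1), (m+1)*(2*m+3)] (s+1)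
        = (m:ℤ)*((m:ℤ)*(2*(m:ℤ)+1)) + (2*(m:ℤ))*(((m:ℤ)+1)*(2*(m:ℤ)+3))
          + ((2*(k:ℤ)-1)*(m:ℤ) - 1)*(((m:ℤ)+1)*(2*(m:ℤ)+1)) := by
      apply genFrob_eq m (s+1) hm _ ?_ ?_ ?_
      · nlinarith [mul_nonneg (show (0:ℤ) ≤ 2*(k:ℤ)-1 by linarith)
          (show (0:ℤ) ≤ (m:ℤ) by positivity)]
      · rw [show (2*(k:ℤ)-1)*(m:ℤ) - 1 = (((2*k-2)*m + (m-1) : ℕ) : ℤ) from by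
            push_cast [show (((2*k-2:ℕ)):ℤ) = 2*(k:ℤ)-2 from by omega,
              show (((m-1:ℕ)):ℤ) = (m:ℤ)-1 from by omega]; ring]
        rw [RZ_eval m (2*k-2) (m-1) hm (by omega) (by omega) _ rfl]
        have d1 : (2*k-2)/2 = k-1 := by omega
        have d2 : (2*k-2+1)/2 = k-1 := by omega
        rw [d1, d2, min_eq_left (by omega)]
        obtain ⟨j, rfl⟩ : ∃ j, k = j+1 := ⟨k-1, by omega⟩
        have key : (j+1-1+1)*(j+1-1) + (j+1-1+1) = (j+1)^2 := by
          have a1 : j+1-1+1 = j+1 := by omega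
          have a2 : j+1-1 = j := by omega
          rw [a1, a2]; ring
        omega
      · rw [show (2*(k:ℤ)-1)*(m:ℤ) - 1 + 1 = (((2*k-1)*m + 0 : ℕ) : ℤ) from by
            push_cast [show (((2*k-1:ℕ)):ℤ) = 2*(k:ℤ)-1 from by omega]; ring]
        rw [RZ_eval m (2*k-1) 0 hm (by omega) (by omega) _ rfl]
        have d1 : (2*k-1)/2 = k-1 := by omega
        have d2 : (2*k-1+1)/2 = k := by omega
        rw [d1, d2]
        obtain ⟨j, rfl⟩ : ∃ j, k = j+1 := ⟨k-1, by omega⟩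
        have key : (j+1-1+1)*(j+1) = (j+1)^2 := by
          have a1 : j+1-1+1 = j+1 := by omega
          rw [a1]; ring
        simp only [Nat.zero_div, Nat.min_zero]
        omega
    rw [hgf1, hgf2]
    ring
  · -- s + 1 = k*(k+1)
    have hgf1 : genFrob ![m*(2*m+1), (m+1)*(2*m+1), (m+1)*(2*m+3)] s
        = (m:ℤ)*((m:ℤ)*(2*(m:ℤ)+1)) + (2*(m:ℤ))*(((m:ℤ)+1)*(2*(m:ℤ)+3))
          + ((2*(k:ℤ)-1)*(m:ℤ) + 3*(k:ℤ) - 4)*(((m:ℤ)+1)*(2*(m:ℤ)+1)) := by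
      apply genFrob_eq m s hm _ ?_ ?_ ?_
      · nlinarith [mul_nonneg (show (0:ℤ) ≤ 2*(k:ℤ)-1 by linarith)
          (show (0:ℤ) ≤ (m:ℤ) by positivity)]
      · rcases Nat.lt_or_ge k 2 with hk2 | hk2
        · have hk1 : k = 1 := by omega
          subst hk1
          rw [show (2*((1:ℕ):ℤ)-1)*(m:ℤ) + 3*((1:ℕ):ℤ) - 4 = ((0*m + (m-1) : ℕ) : ℤ) from by
              push_cast [show (((m-1:ℕ)):ℤ) = (m:ℤ)-1 from by omega]; ring]
          rw [RZ_eval m 0 (m-1) hm (by omega) (by omega) _ rfl]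
          simp only [Nat.zero_div, Nat.zero_min]
          omega
        · rw [show (2*(k:ℤ)-1)*(m:ℤ) + 3*(k:ℤ) - 4 = (((2*k-1)*m + (3*k-4) : ℕ) : ℤ) from by
              push_cast [show (((2*k-1:ℕ)):ℤ) = 2*(k:ℤ)-1 from by omega,
                show (((3*k-4:ℕ)):ℤ) = 3*(k:ℤ)-4 from by omega]; ring]
          rw [RZ_eval m (2*k-1) (3*k-4) hm (by omega) (by omega) _ rfl]
          have d1 : (2*k-1)/2 = k-1 := by omega
          have d2 : (2*k-1+1)/2 = k := by omega
          have d3 : (3*k-4)/3 = k-2 := by omega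
          rw [d1, d2, d3, min_eq_right (by omega)]
          obtain ⟨j, rfl⟩ : ∃ j, k = j+2 := ⟨k-2, by omega⟩
          have key : (j+2-1+1)*(j+2) + (j+2-2+1) + 1 = (j+2)*(j+2+1) := by
            have a1 : j+2-1+1 = j+2 := by omega
            have a3 : j+2-2+1 = j+1 := by omega
            rw [a1, a3]; ring
          omega
      · rw [show (2*(k:ℤ)-1)*(m:ℤ) + 3*(k:ℤ) - 4 + 1 = (((2*k-1)*m + (3*k-3) : ℕ) : ℤ) from by
            push_cast [show (((2*k-1:ℕ)):ℤ) = 2*(k:ℤ)-1 from by omega,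
              show (((3*k-3:ℕ)):ℤ) = 3*(k:ℤ)-3 from by omega]; ring]
        rw [RZ_eval m (2*k-1) (3*k-3) hm (by omega) (by omega) _ rfl]
        have d1 : (2*k-1)/2 = k-1 := by omega
        have d2 : (2*k-1+1)/2 = k := by omega
        have d3 : (3*k-3)/3 = k-1 := by omega
        rw [d1, d2, d3, min_self]
        obtain ⟨j, rfl⟩ : ∃ j, k = j+1 := ⟨k-1, by omega⟩
        have key : (j+1-1+1)*(j+1) + (j+1-1+1) = (j+1)*(j+1+1) := by
          have a1 : j+1-1+1 = j+1 := by omega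
          rw [a1]; ring
        omega
    have hgf2 : genFrob ![m*(2*m+1), (m+1)*(2*m+1), (m+1)*(2*m+3)] (s+1)
        = (m:ℤ)*((m:ℤ)*(2*(m:ℤ)+1)) + (2*(m:ℤ))*(((m:ℤ)+1)*(2*(m:ℤ)+3))
          + (2*(k:ℤ)*(m:ℤ) - 1)*(((m:ℤ)+1)*(2*(m:ℤ)+1)) := by
      apply genFrob_eq m (s+1) hm _ ?_ ?_ ?_
      · nlinarith [mul_nonneg (mul_nonneg (show (0:ℤ) ≤ 2 by norm_num)
          (show (0:ℤ) ≤ (k:ℤ) by positivity)) (show (0:ℤ) ≤ (m:ℤ) by positivity)]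
      · rw [show 2*(k:ℤ)*(m:ℤ) - 1 = (((2*k-1)*m + (m-1) : ℕ) : ℤ) from by
            push_cast [show (((2*k-1:ℕ)):ℤ) = 2*(k:ℤ)-1 from by omega,
              show (((m-1:ℕ)):ℤ) = (m:ℤ)-1 from by omega]; ring]
        rw [RZ_eval m (2*k-1) (m-1) hm (by omega) (by omega) _ rfl]
        have d1 : (2*k-1)/2 = k-1 := by omega
        have d2 : (2*k-1+1)/2 = k := by omega
        rw [d1, d2, min_eq_left (by omega)]
        obtain ⟨j, rfl⟩ : ∃ j, k = j+1 := ⟨k-1, by omega⟩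
        have key : (j+1-1+1)*(j+1) + (j+1-1+1) = (j+1)*(j+1+1) := by
          have a1 : j+1-1+1 = j+1 := by omega
          rw [a1]; ring
        omega
      · rw [show 2*(k:ℤ)*(m:ℤ) - 1 + 1 = ((2*k*m + 0 : ℕ) : ℤ) from by push_cast; ring]
        rw [RZ_eval m (2*k) 0 hm (by omega) (by omega) _ rfl]
        have d1 : (2*k)/2 = k := by omega
        have d2 : (2*k+1)/2 = k := by omega
        rw [d1, d2]
        simp only [Nat.zero_div, Nat.min_zero]
        have key : (k+1)*k = k*(k+1) := by ring
        omega
    rw [hgf1, hgf2]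
    ring
end

section
/- Let s ≥ 0 and let n be an odd integer with n > N_{s+1}^odd. If s + 1 = k² for some integer k ≥ 1, then g(t_n, t_{n+1}, t_{n+2}; s+1) − g(t_n, t_{n+1}, t_{n+2}; s) = (n − 6k + 9)(n+1)(n+2)/4. -/
open Finset

lemma class_param (w : ℕ) (y z y0 z0 : ℕ) (hy0 : y0 < 2*w+1) (hz0 : z0 < w+1)
    (hdvd : (((w+1)*(2*w+1) : ℕ) : ℤ) ∣
      (((w+1)*(2*w+3)*y + (w+2)*(2*w+3)*z : ℕ) : ℤ) - ((w+1)*(2*w+3)*y0 + (w+2)*(2*w+3)*z0 : ℕ)) :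
    ∃ j γ : ℕ, γ*(w+2) ≤ y0 + j*(2*w+1) ∧ y + γ*(w+2) = y0 + j*(2*w+1) ∧ z = z0 + γ*(w+1) := by
  obtain ⟨q, hq⟩ := hdvd
  push_cast at hq
  -- Step 1 : (w+1) ∣ z - z0
  have h1 : (z : ℤ) - z0 = ((w:ℤ)+1) * ((2*(w:ℤ)+1)*q - (2*(w:ℤ)+3)*((y:ℤ)-y0) - (2*(w:ℤ)+5)*((z:ℤ)-z0)) := by
    linear_combination hq
  set g : ℤ := (2*(w:ℤ)+1)*q - (2*(w:ℤ)+3)*((y:ℤ)-y0) - (2*(w:ℤ)+5)*((z:ℤ)-z0) with hgdef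
  have hz0' : (z0 : ℤ) < (w:ℤ) + 1 := by exact_mod_cast hz0
  have hgnn : 0 ≤ g := by nlinarith [Int.natCast_nonneg z, Int.natCast_nonneg z0, Int.natCast_nonneg w]
  -- Step 2 : (2w+1) ∣ 2(y-y0) + 3g
  have hq' : (2*(w:ℤ)+3)*((y:ℤ)-y0) + ((w:ℤ)+2)*(2*(w:ℤ)+3)*g = (2*(w:ℤ)+1)*q := by
    have hne : ((w:ℤ)+1) ≠ 0 := by positivity
    apply mul_left_cancel₀ hne
    linear_combination hq - ((w:ℤ)+2)*(2*(w:ℤ)+3)*h1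
  set d : ℤ := q - ((y:ℤ)-y0) - ((w:ℤ)+3)*g with hddef
  have hd : 2*((y:ℤ)-y0) + 3*g = (2*(w:ℤ)+1)*d := by
    simp only [hddef]; linear_combination hq'
  -- Step 3 : parity
  have hpar : 2 ∣ d + g := by
    have h2 : (2*(w:ℤ)+1)*d - 3*g = 2*((y:ℤ)-y0) := by linarith
    obtain ⟨Wd, hWd⟩ : ∃ Wd, (w:ℤ)*d = Wd := ⟨_, rfl⟩
    rw [show (2*(w:ℤ)+1)*d = 2*((w:ℤ)*d) + d by ring, hWd] at h2
    omega
  obtain ⟨jZ, hjZ⟩ := hpar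
  -- main integer equation
  have hmain : (y : ℤ) + g*((w:ℤ)+2) = y0 + jZ*(2*(w:ℤ)+1) := by
    have : (2:ℤ) * ((y:ℤ) + g*((w:ℤ)+2)) = 2 * ((y0:ℤ) + jZ*(2*(w:ℤ)+1)) := by
      linear_combination hd + (2*(w:ℤ)+1) * hjZ
    linarith
  have hy0' : (y0 : ℤ) ≤ 2*(w:ℤ) := by exact_mod_cast Nat.lt_succ_iff.mp hy0
  have hjnn : 0 ≤ jZ := by
    by_contra h
    push_neg at h
    have h3 : jZ ≤ -1 := by omega
    nlinarith [Int.natCast_nonneg y, Int.natCast_nonneg w,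
      mul_le_mul_of_nonneg_right h3 (by linarith [Int.natCast_nonneg w] : (0:ℤ) ≤ 2*(w:ℤ)+1)]
  refine ⟨jZ.toNat, g.toNat, ?_, ?_, ?_⟩
  · have h4 : (g.toNat : ℤ) * ((w:ℤ)+2) ≤ (y0 : ℤ) + (jZ.toNat:ℤ) * (2*(w:ℤ)+1) := by
      rw [Int.toNat_of_nonneg hgnn, Int.toNat_of_nonneg hjnn]
      nlinarith [Int.natCast_nonneg y]
    exact_mod_cast h4
  · have h5 : (y : ℤ) + (g.toNat : ℤ) * ((w:ℤ)+2) = (y0 : ℤ) + (jZ.toNat : ℤ) * (2*(w:ℤ)+1) := by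
      rw [Int.toNat_of_nonneg hgnn, Int.toNat_of_nonneg hjnn]; exact hmain
    exact_mod_cast h5
  · have h6 : (z : ℤ) = (z0 : ℤ) + (g.toNat : ℤ) * ((w:ℤ)+1) := by
      rw [Int.toNat_of_nonneg hgnn]; linarith [h1]
    exact_mod_cast h6

lemma exists_class (w : ℕ) (N : ℕ) : ∃ y0 z0 : ℕ, y0 < 2*w+1 ∧ z0 < w+1 ∧
    (((w+1)*(2*w+1) : ℕ) : ℤ) ∣ (N : ℤ) - ((w+1)*(2*w+3)*y0 + (w+2)*(2*w+3)*z0 : ℕ) := by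
  set z0 : ℕ := N % (w+1) with hz0def
  set N1 : ℕ := N / (w+1) with hN1def
  have hN : (w+1) * N1 + z0 = N := Nat.div_add_mod N (w+1)
  set v : ℤ := (N1 : ℤ) - 4*(z0 : ℤ) with hvdef
  have hmpos : (0:ℤ) < 2*(w:ℤ)+1 := by positivity
  set y0Z : ℤ := (((w:ℤ)+1)*v) % (2*(w:ℤ)+1) with hy0def
  have hy0nn : 0 ≤ y0Z := Int.emod_nonneg _ (by omega)
  have hy0lt : y0Z < 2*(w:ℤ)+1 := Int.emod_lt_of_pos _ hmpos
  obtain ⟨r, hr⟩ : (2*(w:ℤ)+1) ∣ ((w:ℤ)+1)*v - y0Z := Int.dvd_self_sub_of_emod_eq rfl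
  refine ⟨y0Z.toNat, z0, ?_, Nat.mod_lt _ (by omega), ?_⟩
  · have := hy0lt
    omega
  · refine ⟨2*r - v - y0Z - (z0:ℤ), ?_⟩
    have hNc : ((w:ℤ)+1) * (N1:ℤ) + (z0:ℤ) = (N:ℤ) := by exact_mod_cast hN
    push_cast [Int.toNat_of_nonneg hy0nn]
    linear_combination -hNc - ((w:ℤ)+1)*hvdef + (2*(w:ℤ)+2)*hr

lemma repCount_le (w s y0 β N : ℕ) (hw : 2 ≤ w) (hy0 : y0 < 2*w+1)
    (hN : N + (w+1)*(2*w+1) = (w+1)*(2*w+3)*(y0 + β*(2*w+1)) + (w+2)*(2*w+3)*w)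
    (hcnt : ∑ j ∈ Finset.range β, ((y0 + j*(2*w+1))/(w+2) + 1) ≤ s) :
    repCount ![(w+1)*(2*w+1), (w+1)*(2*w+3), (w+2)*(2*w+3)] N ≤ s := by
  classical
  set A := (w+1)*(2*w+1) with hA
  set B := (w+1)*(2*w+3) with hB
  set C := (w+2)*(2*w+3) with hC
  set S := (Finset.univ.filter
    (fun x : Fin 3 → Fin (N + 1) => ∑ i, (![A, B, C]) i * (x i : ℕ) = N)) with hS
  have hrc : repCount ![A, B, C] N = S.card := rfl
  rw [hrc]
  set T := (Finset.range β).sigma (fun j => Finset.range ((y0 + j*(2*w+1))/(w+2) + 1)) with hT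
  have hcardT : T.card = ∑ j ∈ Finset.range β, ((y0 + j*(2*w+1))/(w+2) + 1) := by
    rw [hT, Finset.card_sigma]
    simp
  set f : (Fin 3 → Fin (N+1)) → ((_ : ℕ) × ℕ) :=
    fun x => ⟨((x 1 : ℕ) + (((x 2 : ℕ)+1)/(w+1) - 1)*(w+2) - y0)/(2*w+1), ((x 2 : ℕ)+1)/(w+1) - 1⟩
    with hf
  have hsum : ∀ x ∈ S, A * (x 0 : ℕ) + B * (x 1 : ℕ) + C * (x 2 : ℕ) = N := by
    intro x hx
    simp only [hS, Finset.mem_filter, Finset.mem_univ, true_and, Fin.sum_univ_three] at hx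
    simpa using hx
  have key : ∀ x ∈ S, (f x).2*(w+2) ≤ y0 + (f x).1*(2*w+1) ∧
      ((x 1 : ℕ)) + (f x).2*(w+2) = y0 + (f x).1*(2*w+1) ∧
      ((x 2 : ℕ)) = w + (f x).2*(w+1) ∧ (f x).1 < β := by
    intro x hx
    have hs := hsum x hx
    have hdvd : ((A : ℕ) : ℤ) ∣ ((B*(x 1 : ℕ) + C*(x 2 : ℕ) : ℕ) : ℤ) - ((B*y0 + C*w : ℕ) : ℤ) := by
      refine ⟨(2*(w:ℤ)+3)*β - (x 0 : ℕ) - 1, ?_⟩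
      have hs' : ((A : ℕ) : ℤ) * (x 0 : ℕ) + B*(x 1 : ℕ) + C*(x 2 : ℕ) = (N:ℤ) := by exact_mod_cast hs
      have hN' : (N:ℤ) + A = B*(y0 + β*(2*w+1)) + C*w := by exact_mod_cast hN
      rw [hA, hB, hC] at hs' hN' ⊢
      push_cast at hs' hN' ⊢
      linear_combination hs' + hN'
    obtain ⟨j, γ, hguard, hyeq, hzeq⟩ := class_param w (x 1 : ℕ) (x 2 : ℕ) y0 w hy0 (by omega) hdvd
    have hγ : ((x 2 : ℕ)+1)/(w+1) - 1 = γ := by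
      rw [hzeq]
      have h9 : w + γ*(w+1) + 1 = (w+1)*(γ+1) := by ring
      rw [h9, Nat.mul_div_cancel_left _ (by omega : 0 < w+1)]
      omega
    have hγ2 : (f x).2 = γ := hγ
    have hj : (f x).1 = j := by
      show ((x 1 : ℕ) + (((x 2 : ℕ)+1)/(w+1) - 1)*(w+2) - y0)/(2*w+1) = j
      rw [hγ]
      have h8 : (x 1 : ℕ) + γ*(w+2) - y0 = j*(2*w+1) := by omega
      rw [h8, Nat.mul_div_cancel _ (by omega : 0 < 2*w+1)]
    have hjβ : j < β := by
      have hyeqZ : ((x 1 : ℕ) : ℤ) + γ*((w:ℤ)+2) = y0 + j*(2*(w:ℤ)+1) := by exact_mod_cast hyeq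
      have hzeqZ : ((x 2 : ℕ) : ℤ) = (w:ℤ) + γ*((w:ℤ)+1) := by exact_mod_cast hzeq
      have hsZ : ((A : ℕ) : ℤ) * (x 0 : ℕ) + B*(x 1 : ℕ) + C*(x 2 : ℕ) = (N:ℤ) := by exact_mod_cast hs
      have hNZ : (N:ℤ) + A = B*(y0 + β*(2*w+1)) + C*w := by exact_mod_cast hN
      rw [hA, hB, hC] at hsZ hNZ
      push_cast at hsZ hNZ
      have hAne : ((w:ℤ)+1)*(2*(w:ℤ)+1) ≠ 0 := by positivity
      have E : ((w:ℤ)+1)*(2*(w:ℤ)+1)*((2*(w:ℤ)+3)*((β:ℤ) - j)) =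
          ((w:ℤ)+1)*(2*(w:ℤ)+1)*(((x 0 : ℕ):ℤ) + 1) := by
        linear_combination (-1 : ℤ)*hNZ + (-1 : ℤ)*hsZ + ((w:ℤ)+1)*(2*(w:ℤ)+3)*hyeqZ +
          ((w:ℤ)+2)*(2*(w:ℤ)+3)*hzeqZ
      have E2 : (2*(w:ℤ)+3)*((β:ℤ) - j) = ((x 0 : ℕ):ℤ) + 1 := mul_left_cancel₀ hAne E
      by_contra hcon
      push_neg at hcon
      have hc : ((β:ℤ) - j) ≤ 0 := by
        have : (j:ℤ) ≥ (β:ℤ) := by exact_mod_cast hcon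
        linarith
      have h0 : (2*(w:ℤ)+3)*((β:ℤ) - j) ≤ 0 :=
        mul_nonpos_of_nonneg_of_nonpos (by positivity) hc
      have := Int.natCast_nonneg (x 0 : ℕ)
      omega
    rw [hγ2, hj]
    exact ⟨hguard, hyeq, hzeq, hjβ⟩
  calc S.card ≤ T.card := by
        apply Finset.card_le_card_of_injOn f
        · intro x hx
          obtain ⟨h1, h2, h3, h4⟩ := key x hx
          rw [hT]
          rw [Finset.mem_coe, Finset.mem_sigma]
          constructor
          · exact Finset.mem_range.mpr h4
          · exact Finset.mem_range.mpr
              (Nat.lt_succ_of_le ((Nat.le_div_iff_mul_le (by omega : 0 < w+2)).mpr h1))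
        · intro x hx x' hx' hfe
          obtain ⟨h1, h2, h3, h4⟩ := key x hx
          obtain ⟨h1', h2', h3', h4'⟩ := key x' hx'
          have hj : (f x).1 = (f x').1 := by rw [hfe]
          have hγ : (f x).2 = (f x').2 := by rw [hfe]
          have hz : (x 2 : ℕ) = (x' 2 : ℕ) := by rw [h3, h3', hγ]
          have hy : (x 1 : ℕ) = (x' 1 : ℕ) := by
            rw [← hj, ← hγ] at h2'
            set t1 := (f x).2*(w+2)
            set t2 := (f x).1*(2*w+1)
            omega
          have hx0 : (x 0 : ℕ) = (x' 0 : ℕ) := by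
            have e := hsum x hx
            have e' := hsum x' hx'
            rw [hz, hy] at e
            have hApos : 0 < A := by rw [hA]; positivity
            have h7 : A * (x 0 : ℕ) = A * (x' 0 : ℕ) := by
              set r1 := B*(x' 1 : ℕ)
              set r2 := C*(x' 2 : ℕ)
              omega
            exact Nat.eq_of_mul_eq_mul_left hApos h7
          funext i
          fin_cases i <;> exact Fin.ext (by assumption)
    _ = _ := hcardT
    _ ≤ s := hcnt

lemma repCount_ge (w s N M : ℕ) (hw : 2 ≤ w)
    (key1 : ∀ y0 < 2*w+1, ∃ β, y0 + β*(2*w+1) ≤ M ∧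
      s + 1 ≤ ∑ j ∈ Finset.range (β+1), ((y0 + j*(2*w+1))/(w+2) + 1))
    (hNbig : (w+1)*(2*w+3)*M + (w+2)*(2*w+3)*w < N + (w+1)*(2*w+1)) :
    s + 1 ≤ repCount ![(w+1)*(2*w+1), (w+1)*(2*w+3), (w+2)*(2*w+3)] N := by
  classical
  set A := (w+1)*(2*w+1) with hA
  set B := (w+1)*(2*w+3) with hB
  set C := (w+2)*(2*w+3) with hC
  have hApos : 0 < A := by rw [hA]; positivity
  have hBpos : 0 < B := by rw [hB]; positivity
  have hCpos : 0 < C := by rw [hC]; positivity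
  set S := (Finset.univ.filter
    (fun x : Fin 3 → Fin (N + 1) => ∑ i, (![A, B, C]) i * (x i : ℕ) = N)) with hS
  have hrc : repCount ![A, B, C] N = S.card := rfl
  rw [hrc]
  obtain ⟨y0, z0, hy0, hz0, hdvd⟩ := exists_class w N
  obtain ⟨β, hβM, hβcnt⟩ := key1 y0 hy0
  -- the top value in the class of N is at most N
  have hVle : B*y0 + C*z0 + β*((2*w+3)*A) ≤ N := by
    obtain ⟨q, hq⟩ := hdvd
    have hquot : ((B*y0 + C*z0 + β*((2*w+3)*A) : ℕ) : ℤ) - (N:ℤ) =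
        ((A:ℕ):ℤ) * ((β:ℤ)*(2*(w:ℤ)+3) - q) := by
      simp only [hA, hB, hC]
      push_cast
      push_cast at hq
      linear_combination -hq
    by_contra hcon
    push_neg at hcon
    have hpos : (0:ℤ) < ((B*y0 + C*z0 + β*((2*w+3)*A) : ℕ) : ℤ) - (N:ℤ) := by
      have : (N:ℤ) < ((B*y0 + C*z0 + β*((2*w+3)*A) : ℕ) : ℤ) := by exact_mod_cast hcon
      omega
    have hge := Int.le_of_dvd hpos ⟨(β:ℤ)*(2*(w:ℤ)+3) - q, hquot⟩
    have h2 : B*y0 + C*z0 + β*((2*w+3)*A) ≤ B*M + C*w := by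
      have hm1 : B*(y0 + β*(2*w+1)) ≤ B*M := Nat.mul_le_mul_left _ hβM
      have hm2 : C*z0 ≤ C*w := Nat.mul_le_mul_left _ (by omega)
      have hexp : B*(y0 + β*(2*w+1)) = B*y0 + β*((2*w+3)*A) := by rw [hA, hB]; ring
      omega
    have h2' : ((B*y0 + C*z0 + β*((2*w+3)*A) : ℕ) : ℤ) ≤ ((B*M + C*w : ℕ) : ℤ) := by
      exact_mod_cast h2
    have hNb' : ((B*M + C*w : ℕ) : ℤ) < (N:ℤ) + ((A:ℕ):ℤ) := by exact_mod_cast hNbig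
    omega
  -- now build s+1 distinct solutions
  set T := (Finset.range (β+1)).sigma
    (fun j => Finset.range ((y0 + j*(2*w+1))/(w+2) + 1)) with hT
  have hcardT : T.card = ∑ j ∈ Finset.range (β+1), ((y0 + j*(2*w+1))/(w+2) + 1) := by
    rw [hT, Finset.card_sigma]; simp
  set ψ : ((_ : ℕ) × ℕ) → (Fin 3 → Fin (N+1)) := fun p =>
    ![⟨min ((N - (B*(y0 + p.1*(2*w+1) - p.2*(w+2)) + C*(z0 + p.2*(w+1))))/A) N, by omega⟩,
      ⟨min (y0 + p.1*(2*w+1) - p.2*(w+2)) N, by omega⟩,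
      ⟨min (z0 + p.2*(w+1)) N, by omega⟩] with hψ
  have hkey : ∀ p ∈ T, (ψ p ∈ S) ∧
      ((ψ p 1 : ℕ) = y0 + p.1*(2*w+1) - p.2*(w+2)) ∧ ((ψ p 2 : ℕ) = z0 + p.2*(w+1)) := by
    intro p hp
    rw [hT, Finset.mem_sigma, Finset.mem_range, Finset.mem_range] at hp
    obtain ⟨hj, hγ⟩ := hp
    have hguard : p.2*(w+2) ≤ y0 + p.1*(2*w+1) :=
      (Nat.le_div_iff_mul_le (by omega : 0 < w+2)).mp (Nat.lt_succ_iff.mp hγ)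
    set yv := y0 + p.1*(2*w+1) - p.2*(w+2) with hyv
    set zv := z0 + p.2*(w+1) with hzv
    -- the value of this pair
    have hval : B*yv + C*zv = B*y0 + C*z0 + p.1*((2*w+3)*A) := by
      have e0 : B*yv + B*(p.2*(w+2)) = B*y0 + B*(p.1*(2*w+1)) := by
        rw [← Nat.mul_add B yv (p.2*(w+2)), ← Nat.mul_add B y0 (p.1*(2*w+1))]
        congr 1
        omega
      have e2 : C*zv = C*z0 + C*(p.2*(w+1)) := by rw [hzv, Nat.mul_add]
      have e3 : C*(p.2*(w+1)) = B*(p.2*(w+2)) := by rw [hB, hC]; ring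
      have e4 : B*(p.1*(2*w+1)) = p.1*((2*w+3)*A) := by rw [hA, hB]; ring
      omega
    have hvle : B*yv + C*zv ≤ N := by
      have : p.1*((2*w+3)*A) ≤ β*((2*w+3)*A) := Nat.mul_le_mul_right _ (by omega)
      omega
    have hdvd2 : A ∣ (N - (B*yv + C*zv)) := by
      have h5 : ((A:ℕ):ℤ) ∣ (N:ℤ) - ((B*yv + C*zv : ℕ):ℤ) := by
        rw [hval]
        obtain ⟨q, hq⟩ := hdvd
        refine ⟨q - (2*(w:ℤ)+3)*p.1, ?_⟩
        simp only [hA, hB, hC]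
        push_cast
        push_cast at hq
        linear_combination hq
      have h6 : ((N - (B*yv + C*zv) : ℕ) : ℤ) = (N:ℤ) - ((B*yv + C*zv : ℕ):ℤ) := by
        omega
      exact_mod_cast h6 ▸ h5
    have hx0 : A * ((N - (B*yv + C*zv))/A) = N - (B*yv + C*zv) := Nat.mul_div_cancel' hdvd2
    have hx0le : (N - (B*yv + C*zv))/A ≤ N := by
      have := Nat.div_le_self (N - (B*yv + C*zv)) A
      omega
    have hyvle : yv ≤ N := by
      have : yv ≤ B*yv := Nat.le_mul_of_pos_left _ hBpos
      omega
    have hzvle : zv ≤ N := by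
      have : zv ≤ C*zv := Nat.le_mul_of_pos_left _ hCpos
      omega
    have hc1 : (ψ p 1 : ℕ) = yv := by
      show min yv N = yv
      omega
    have hc2 : (ψ p 2 : ℕ) = zv := by
      show min zv N = zv
      omega
    have hc0 : (ψ p 0 : ℕ) = (N - (B*yv + C*zv))/A := by
      show min ((N - (B*yv + C*zv))/A) N = _
      omega
    refine ⟨?_, hc1, hc2⟩
    rw [hS, Finset.mem_filter]
    refine ⟨Finset.mem_univ _, ?_⟩
    rw [Fin.sum_univ_three]
    show A * (ψ p 0 : ℕ) + B * (ψ p 1 : ℕ) + C * (ψ p 2 : ℕ) = N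
    rw [hc0, hc1, hc2, hx0]
    omega
  calc s + 1 ≤ T.card := by rw [hcardT]; exact hβcnt
    _ ≤ S.card := by
        apply Finset.card_le_card_of_injOn ψ
        · intro p hp
          exact (hkey p hp).1
        · intro p hp p' hp' hpe
          obtain ⟨-, h1, h2⟩ := hkey p hp
          obtain ⟨-, h1', h2'⟩ := hkey p' hp'
          simp only [Finset.mem_coe, hT, Finset.mem_sigma, Finset.mem_range] at hp hp'
          have hg : p.2*(w+2) ≤ y0 + p.1*(2*w+1) :=
            (Nat.le_div_iff_mul_le (by omega : 0 < w+2)).mp (Nat.lt_succ_iff.mp hp.2)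
          have hg' : p'.2*(w+2) ≤ y0 + p'.1*(2*w+1) :=
            (Nat.le_div_iff_mul_le (by omega : 0 < w+2)).mp (Nat.lt_succ_iff.mp hp'.2)
          have hzz : z0 + p.2*(w+1) = z0 + p'.2*(w+1) := by rw [← h2, ← h2', hpe]
          have hsnd : p.2 = p'.2 :=
            Nat.eq_of_mul_eq_mul_right (by omega : 0 < w+1) (by omega)
          have hyy : y0 + p.1*(2*w+1) - p.2*(w+2) = y0 + p'.1*(2*w+1) - p'.2*(w+2) := by
            rw [← h1, ← h1', hpe]
          rw [hsnd] at hyy hg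
          have hfst : p.1 = p'.1 :=
            Nat.eq_of_mul_eq_mul_right (by omega : 0 < 2*w+1) (by omega)
          exact Sigma.ext hfst (heq_of_eq hsnd)

lemma genFrob_eq (w s M y0 β : ℕ) (hw : 2 ≤ w) (hy0 : y0 < 2*w+1) (hM : M = y0 + β*(2*w+1))
    (hub : ∑ j ∈ Finset.range β, ((y0 + j*(2*w+1))/(w+2) + 1) ≤ s)
    (key1 : ∀ y0' < 2*w+1, ∃ β', y0' + β'*(2*w+1) ≤ M ∧
      s + 1 ≤ ∑ j ∈ Finset.range (β'+1), ((y0' + j*(2*w+1))/(w+2) + 1)) :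
    genFrob ![(w+1)*(2*w+1), (w+1)*(2*w+3), (w+2)*(2*w+3)] s
      = ((w+1)*(2*w+3)*M + (w+2)*(2*w+3)*w : ℤ) - (w+1)*(2*w+1) := by
  set m₀ : ℤ := ((w+1)*(2*w+3)*M + (w+2)*(2*w+3)*w : ℤ) - (w+1)*(2*w+1) with hm₀
  have hm₀nn : 0 ≤ m₀ := by
    rw [hm₀]
    have hh : 2*w ≤ w*w := Nat.mul_le_mul_right w hw
    have hn : (w+1)*(2*w+1) ≤ (w+2)*(2*w+3)*w := by nlinarith [hh, hw]
    have : ((w:ℤ)+1)*(2*w+1) ≤ ((w:ℤ)+2)*(2*w+3)*w := by exact_mod_cast hn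
    have h2 : (0:ℤ) ≤ ((w:ℤ)+1)*(2*w+3)*M := by positivity
    push_cast
    linarith
  have hgr : IsGreatest {m : ℤ | repCountZ ![(w+1)*(2*w+1), (w+1)*(2*w+3), (w+2)*(2*w+3)] m ≤ s} m₀ := by
    constructor
    · -- membership
      show repCountZ _ m₀ ≤ s
      rw [repCountZ, if_pos hm₀nn]
      apply repCount_le w s y0 β _ hw hy0 _ hub
      have : (m₀.toNat : ℤ) + ((w+1)*(2*w+1) : ℕ) = (((w+1)*(2*w+3)*(y0 + β*(2*w+1)) + (w+2)*(2*w+3)*w : ℕ) : ℤ) := by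
        rw [Int.toNat_of_nonneg hm₀nn, hm₀, ← hM]
        push_cast
        ring
      exact_mod_cast this
    · -- upper bound
      intro m hm
      by_contra hcon
      push_neg at hcon
      have hmnn : 0 ≤ m := le_trans hm₀nn (le_of_lt hcon)
      have hm' : repCountZ ![(w+1)*(2*w+1), (w+1)*(2*w+3), (w+2)*(2*w+3)] m ≤ s := hm
      rw [repCountZ, if_pos hmnn] at hm'
      have hge := repCount_ge w s m.toNat M hw key1 ?_
      · omega
      · have h1 : m₀ + 1 ≤ m := hcon
        have h2 : (m.toNat : ℤ) = m := Int.toNat_of_nonneg hmnn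
        have : (((w+1)*(2*w+3)*M + (w+2)*(2*w+3)*w : ℕ) : ℤ) < (m.toNat : ℤ) + (((w+1)*(2*w+1) : ℕ) : ℤ) := by
          push_cast
          rw [hm₀] at h1
          push_cast at h1
          omega
        exact_mod_cast this
  rw [genFrob]
  exact IsGreatest.csSup_eq hgr

lemma sum_odd (m : ℕ) : ∑ j ∈ Finset.range m, (2*j+1) = m*m := by
  induction m with
  | zero => simp
  | succ n ih => rw [Finset.sum_range_succ, ih]; ring

lemma sum_even' (m : ℕ) : ∑ x ∈ Finset.range m, 2*(x+1) = m*m + m := by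
  induction m with
  | zero => simp
  | succ n ih => rw [Finset.sum_range_succ, ih]; ring

/-- Exact count at the candidate value, level `s+1 = k²`. -/

lemma ub_level2 (w k : ℕ) (hw : 2 ≤ w) (hwk : 3*k ≤ w+4) :
    ∑ j ∈ Finset.range k, (((w+1) + j*(2*w+1))/(w+2) + 1) = k*k := by
  rw [← sum_odd k]
  apply Finset.sum_congr rfl
  intro j hj
  rw [Finset.mem_range] at hj
  have hdiv : ((w+1) + j*(2*w+1))/(w+2) = 2*j := by
    apply Nat.div_eq_of_lt_le
    · nlinarith
    · nlinarith
  rw [hdiv]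

/-- Exact count at the candidate value, level `s = k² - 1`, for `k = k''+2 ≥ 2`. -/

lemma ub_level1 (w k'' : ℕ) (hw : 2 ≤ w) (hwk : 3*(k''+2) ≤ w+4) :
    ∑ j ∈ Finset.range (k''+2), (((3*k''+2) + j*(2*w+1))/(w+2) + 1) + 1 = (k''+2)*(k''+2) := by
  rw [Finset.sum_range_succ]
  have h1 : ∑ j ∈ Finset.range (k''+1), (((3*k''+2) + j*(2*w+1))/(w+2) + 1) = (k''+1)*(k''+1) := by
    rw [← sum_odd (k''+1)]
    apply Finset.sum_congr rfl
    intro j hj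
    rw [Finset.mem_range] at hj
    have hdiv : ((3*k''+2) + j*(2*w+1))/(w+2) = 2*j := by
      apply Nat.div_eq_of_lt_le
      · nlinarith
      · nlinarith
    rw [hdiv]
  have h2 : ((3*k''+2) + (k''+1)*(2*w+1))/(w+2) = 2*k''+1 := by
    apply Nat.div_eq_of_lt_le
    · nlinarith
    · nlinarith
  rw [h1, h2]
  ring

/-- KEY1 for level `s+1 = k²` (need `k²+1` representations beyond the bound). -/

lemma key1_level2 (w k' : ℕ) (hw : 2 ≤ w) (hwk : 3*(k'+1) ≤ w + 4) :
    ∀ y0' < 2*w+1, ∃ β', y0' + β'*(2*w+1) ≤ (w+1) + (k'+1)*(2*w+1) ∧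
      (k'+1)*(k'+1) + 1 ≤ ∑ j ∈ Finset.range (β'+1), ((y0' + j*(2*w+1))/(w+2) + 1) := by
  intro y0' hy0'
  by_cases hcase : w + 2 ≤ y0'
  · -- big residue: β' = k'
    refine ⟨k', by nlinarith, ?_⟩
    have hpeel : ∑ j ∈ Finset.range (k'+1), ((y0' + j*(2*w+1))/(w+2) + 1) =
        (∑ x ∈ Finset.range k', ((y0' + (x+1)*(2*w+1))/(w+2) + 1)) + (y0'/(w+2) + 1) := by
      rw [Finset.sum_range_succ']
      simp
    rw [hpeel]
    have hmid : ∑ x ∈ Finset.range k', (2*(x+1)+1) ≤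
        ∑ x ∈ Finset.range k', ((y0' + (x+1)*(2*w+1))/(w+2) + 1) := by
      apply Finset.sum_le_sum
      intro x hx
      rw [Finset.mem_range] at hx
      have : 2*(x+1) ≤ (y0' + (x+1)*(2*w+1))/(w+2) := by
        rw [Nat.le_div_iff_mul_le (by omega : 0 < w+2)]
        nlinarith
      omega
    have hfirst : 2 ≤ y0'/(w+2) + 1 := by
      have : 1 ≤ y0'/(w+2) := by
        rw [Nat.le_div_iff_mul_le (by omega : 0 < w+2)]
        omega
      omega
    have hsum : ∑ x ∈ Finset.range k', (2*(x+1)+1) = k'*k' + k' + k' := by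
      have := sum_even' k'
      calc ∑ x ∈ Finset.range k', (2*(x+1)+1) =
          (∑ x ∈ Finset.range k', 2*(x+1)) + ∑ x ∈ Finset.range k', 1 := by
            rw [← Finset.sum_add_distrib]
        _ = k'*k' + k' + k' := by rw [this]; simp
    nlinarith [hmid, hfirst]
  · -- small residue: β' = k'+1
    push_neg at hcase
    refine ⟨k'+1, by nlinarith, ?_⟩
    have hpeel : ∑ j ∈ Finset.range (k'+2), ((y0' + j*(2*w+1))/(w+2) + 1) =
        (∑ x ∈ Finset.range (k'+1), ((y0' + (x+1)*(2*w+1))/(w+2) + 1)) + (y0'/(w+2) + 1) := by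
      rw [Finset.sum_range_succ']
      simp
    rw [hpeel, Finset.sum_range_succ]
    have hmid : ∑ x ∈ Finset.range k', 2*(x+1) ≤
        ∑ x ∈ Finset.range k', ((y0' + (x+1)*(2*w+1))/(w+2) + 1) := by
      apply Finset.sum_le_sum
      intro x hx
      rw [Finset.mem_range] at hx
      have : 2*x+1 ≤ (y0' + (x+1)*(2*w+1))/(w+2) := by
        rw [Nat.le_div_iff_mul_le (by omega : 0 < w+2)]
        nlinarith
      omega
    have hlast : 2*k'+1 ≤ (y0' + (k'+1)*(2*w+1))/(w+2) + 1 := by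
      have : 2*k' ≤ (y0' + (k'+1)*(2*w+1))/(w+2) := by
        rw [Nat.le_div_iff_mul_le (by omega : 0 < w+2)]
        nlinarith
      omega
    have := sum_even' k'
    nlinarith [hmid, hlast, Nat.zero_le (y0'/(w+2))]

/-- KEY1 for level `s = k² - 1` (need `k²` representations beyond the bound). -/

lemma key1_level1 (w k' M : ℕ) (hw : 2 ≤ w) (hwk : 3*(k'+1) ≤ w + 4)
    (hMa : 2*w + k'*(2*w+1) ≤ M) (hMb : 3*k' + (k'+1)*(2*w+1) ≤ M + 1) :
    ∀ y0' < 2*w+1, ∃ β', y0' + β'*(2*w+1) ≤ M ∧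
      (k'+1)*(k'+1) ≤ ∑ j ∈ Finset.range (β'+1), ((y0' + j*(2*w+1))/(w+2) + 1) := by
  intro y0' hy0'
  by_cases hcase : 3*k' ≤ y0'
  · -- big residue: β' = k'
    refine ⟨k', by nlinarith, ?_⟩
    calc (k'+1)*(k'+1) = ∑ j ∈ Finset.range (k'+1), (2*j+1) := (sum_odd (k'+1)).symm
      _ ≤ _ := by
          apply Finset.sum_le_sum
          intro j hj
          rw [Finset.mem_range] at hj
          have : 2*j ≤ (y0' + j*(2*w+1))/(w+2) := by
            rw [Nat.le_div_iff_mul_le (by omega : 0 < w+2)]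
            nlinarith
          omega
  · -- small residue (forces k' ≥ 1): β' = k'+1
    push_neg at hcase
    have hk1 : 1 ≤ k' := by omega
    refine ⟨k'+1, by nlinarith, ?_⟩
    have hpeel : ∑ j ∈ Finset.range (k'+2), ((y0' + j*(2*w+1))/(w+2) + 1) =
        (∑ x ∈ Finset.range (k'+1), ((y0' + (x+1)*(2*w+1))/(w+2) + 1)) + (y0'/(w+2) + 1) := by
      rw [Finset.sum_range_succ']
      simp
    rw [hpeel, Finset.sum_range_succ]
    have hmid : ∑ x ∈ Finset.range k', 2*(x+1) ≤
        ∑ x ∈ Finset.range k', ((y0' + (x+1)*(2*w+1))/(w+2) + 1) := by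
      apply Finset.sum_le_sum
      intro x hx
      rw [Finset.mem_range] at hx
      have : 2*x+1 ≤ (y0' + (x+1)*(2*w+1))/(w+2) := by
        rw [Nat.le_div_iff_mul_le (by omega : 0 < w+2)]
        nlinarith
      omega
    have hlast : 2*k'+1 ≤ (y0' + (k'+1)*(2*w+1))/(w+2) + 1 := by
      have : 2*k' ≤ (y0' + (k'+1)*(2*w+1))/(w+2) := by
        rw [Nat.le_div_iff_mul_le (by omega : 0 < w+2)]
        nlinarith
      omega
    have := sum_even' k'
    nlinarith [hmid, hlast, Nat.zero_le (y0'/(w+2))]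

/-- for odd `n > N_{s+1}^odd`, if `s+1 = k²` with `k ≥ 1`, then
`g(…; s+1) - g(…; s) = (n - 6k + 9)(n+1)(n+2)/4`. -/
theorem stmt_4 (s n k : ℕ) (hn : Odd n) (hbound : (n : ℤ) > NOdd (s + 1))
    (hk : 1 ≤ k) (hsk : s + 1 = k ^ 2) :
    genFrob ![t n, t (n + 1), t (n + 2)] (s + 1) - genFrob ![t n, t (n + 1), t (n + 2)] s =
      ((n : ℤ) - 6 * k + 9) * ((n : ℤ) + 1) * ((n : ℤ) + 2) / 4 := by
  obtain ⟨w, rfl⟩ := hn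
  -- extract the size bounds from `hbound`
  set q : ℕ := (Nat.sqrt (4 * (s+1) + 5) - 1) / 2 with hqdef
  have hbq : 6*q < 2*w + 4 := by
    have h1 : ((2*w+1 : ℕ) : ℤ) > 6 * (q:ℤ) - 3 := hbound
    omega
  have hsqrt : 2*k ≤ Nat.sqrt (4*(s+1)+5) := by
    rw [Nat.le_sqrt]
    nlinarith [hsk.symm.le]
  have hwk : 3*k ≤ w + 4 := by
    have hq1 : k ≤ q + 1 := by omega
    omega
  have hw2 : 2 ≤ w := by
    rcases Nat.lt_or_ge k 2 with hk2 | hk2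
    · have hk1 : k = 1 := by omega
      have h9 : 4*(s+1)+5 = 9 := by rw [hsk, hk1]; norm_num
      have h3 : 3 ≤ Nat.sqrt (4*(s+1)+5) := by
        rw [Nat.le_sqrt, h9]
      omega
    · omega
  -- identify the triangular numbers
  have ht1 : t (2*w+1) = (w+1)*(2*w+1) := by
    show (2*w+1)*((2*w+1)+1)/2 = (w+1)*(2*w+1)
    rw [show (2*w+1)*((2*w+1)+1) = 2*((w+1)*(2*w+1)) from by ring]
    exact Nat.mul_div_cancel_left _ (by norm_num)
  have ht2 : t (2*w+1+1) = (w+1)*(2*w+3) := by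
    show (2*w+1+1)*((2*w+1+1)+1)/2 = (w+1)*(2*w+3)
    rw [show (2*w+1+1)*((2*w+1+1)+1) = 2*((w+1)*(2*w+3)) from by ring]
    exact Nat.mul_div_cancel_left _ (by norm_num)
  have ht3 : t (2*w+1+2) = (w+2)*(2*w+3) := by
    show (2*w+1+2)*((2*w+1+2)+1)/2 = (w+2)*(2*w+3)
    rw [show (2*w+1+2)*((2*w+1+2)+1) = 2*((w+2)*(2*w+3)) from by ring]
    exact Nat.mul_div_cancel_left _ (by norm_num)
  have hmat : ![t (2*w+1), t (2*w+1+1), t (2*w+1+2)] =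
      ![(w+1)*(2*w+1), (w+1)*(2*w+3), (w+2)*(2*w+3)] := by
    funext i
    fin_cases i <;> simp [ht1, ht2, ht3]
  rw [hmat]
  -- value of genFrob at level s+1
  have hg2 : genFrob ![(w+1)*(2*w+1), (w+1)*(2*w+3), (w+2)*(2*w+3)] (s+1)
      = ((w+1)*(2*w+3)*((w+1) + k*(2*w+1)) + (w+2)*(2*w+3)*w : ℤ) - (w+1)*(2*w+1) := by
    obtain ⟨k', rfl⟩ : ∃ k', k = k' + 1 := ⟨k - 1, by omega⟩
    apply genFrob_eq w (s+1) _ (w+1) (k'+1) hw2 (by omega) rfl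
    · rw [ub_level2 w (k'+1) hw2 hwk]
      have : s + 1 = (k'+1)*(k'+1) := by rw [hsk]; ring
      omega
    · intro y0' hy0'
      obtain ⟨β', h1, h2⟩ := key1_level2 w k' hw2 hwk y0' hy0'
      refine ⟨β', h1, ?_⟩
      have : s + 1 + 1 = (k'+1)*(k'+1) + 1 := by rw [hsk]; ring_nf
      omega
  -- value of genFrob at level s
  have hg1 : genFrob ![(w+1)*(2*w+1), (w+1)*(2*w+3), (w+2)*(2*w+3)] s
      = ((w+1)*(2*w+3)*((3*k + 1) + k*(2*w+1)) + (w+2)*(2*w+3)*w : ℤ)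
        - (w+1)*(2*w+1) - 5*((w+1)*(2*w+3)) := by
    rcases Nat.lt_or_ge k 2 with hk2 | hk2
    · -- k = 1 : s = 0, M₁ = 2w
      have hk1 : k = 1 := by omega
      subst hk1
      have hs0 : s = 0 := by
        have h7 := hsk
        norm_num at h7
        omega
      subst hs0
      have := genFrob_eq w 0 (2*w) (2*w) 0 hw2 (by omega) (by ring) (by simp)
        (by
          intro y0' hy0'
          obtain ⟨β', h1, h2⟩ := key1_level1 w 0 (2*w) hw2 (by omega) (by nlinarith) (by nlinarith) y0' hy0'
          exact ⟨β', h1, by simpa using h2⟩)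
      rw [this]
      push_cast
      ring
    · -- k ≥ 2 : M₁ = (3k-4) + k(2w+1)
      obtain ⟨k'', rfl⟩ : ∃ k'', k = k'' + 2 := ⟨k - 2, by omega⟩
      have := genFrob_eq w s ((3*k''+2) + (k''+2)*(2*w+1)) (3*k''+2) (k''+2) hw2
        (by omega) rfl
        (by
          have h3 := ub_level1 w k'' hw2 hwk
          have h4 : s + 1 = (k''+2)*(k''+2) := by rw [hsk]; ring
          omega)
        (by
          intro y0' hy0'
          obtain ⟨β', h1, h2⟩ := key1_level1 w (k''+1) ((3*k''+2) + (k''+2)*(2*w+1)) hw2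
            (by omega) (by nlinarith) (by nlinarith) y0' hy0'
          refine ⟨β', h1, ?_⟩
          have h5 : s + 1 = (k''+2)*(k''+2) := by rw [hsk]; ring
          have h6 : (k''+1+1)*(k''+1+1) = (k''+2)*(k''+2) := by ring
          omega)
      rw [this]
      push_cast
      ring
  rw [hg1, hg2]
  have hnum : (((2*w+1 : ℕ) : ℤ) - 6*k + 9) * (((2*w+1 : ℕ) : ℤ) + 1) * (((2*w+1 : ℕ) : ℤ) + 2)
      = 4 * ((((w:ℤ)+5) - 3*k) * (((w:ℤ)+1)*(2*(w:ℤ)+3))) := by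
    push_cast
    ring
  rw [hnum, Int.mul_ediv_cancel_left _ (by norm_num)]
  push_cast
  ring
end

section
/- Let s ≥ 0 and let n be an odd integer with n > N_{s+1}^odd. If s + 1 = k(k+1) for some integer k ≥ 1, then g(t_n, t_{n+1}, t_{n+2}; s+1) − g(t_n, t_{n+1}, t_{n+2}; s) = (n − 6k + 3)(n+1)(n+2)/4. -/
open Finset

namespace S5

def AA (h:ℕ) : ℕ := (2*h+1)*(h+1)
def BB (h:ℕ) : ℕ := (h+1)*(2*h+3)
def CC (h:ℕ) : ℕ := (h+2)*(2*h+3)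
def PP (h m : ℕ) : Finset (ℕ×ℕ) :=
  (Finset.range (m+1) ×ˢ Finset.range (m+1)).filter
    fun p => BB h * p.1 + CC h * p.2 ≤ m ∧ AA h ∣ (m - (BB h * p.1 + CC h * p.2))

lemma A_pos (h:ℕ) : 0 < AA h := by unfold AA; positivity
lemma B_pos (h:ℕ) : 0 < BB h := by unfold BB; positivity
lemma C_pos (h:ℕ) : 0 < CC h := by unfold CC; positivity
lemma A_lt_B (h:ℕ) : AA h < BB h := by
  unfold AA BB; nlinarith [h.zero_le]
lemma A_lt_C (h:ℕ) : AA h < CC h := by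
  unfold AA CC; nlinarith [h.zero_le]
lemma nB_eq (h:ℕ) : (2*h+1) * BB h = (2*h+3) * AA h := by unfold AA BB; ring

lemma t_eqA (h:ℕ) : t (2*h+1) = AA h := by
  have e : (2*h+1)*((2*h+1)+1) = ((2*h+1)*(h+1))*2 := by ring
  simp [t, AA, e]

lemma t_eqB (h:ℕ) : t (2*h+1+1) = BB h := by
  have e : (2*h+1+1)*((2*h+1+1)+1) = ((h+1)*(2*h+3))*2 := by ring
  simp [t, BB, e]

lemma t_eqC (h:ℕ) : t (2*h+1+2) = CC h := by
  have e : (2*h+1+2)*((2*h+1+2)+1) = ((h+2)*(2*h+3))*2 := by ring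
  simp [t, CC, e]

lemma mem_PP (h m : ℕ) (p : ℕ×ℕ) : p ∈ PP h m ↔
    BB h * p.1 + CC h * p.2 ≤ m ∧ AA h ∣ (m - (BB h * p.1 + CC h * p.2)) := by
  constructor
  · intro hp
    exact (Finset.mem_filter.mp hp).2
  · intro hx
    refine Finset.mem_filter.mpr ⟨Finset.mem_product.mpr ⟨Finset.mem_range.mpr ?_, Finset.mem_range.mpr ?_⟩, hx⟩
    · have h1 : p.1 ≤ BB h * p.1 := Nat.le_mul_of_pos_left _ (B_pos h)
      exact Nat.lt_succ_of_le (le_trans h1 (le_trans (Nat.le_add_right _ _) hx.1))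
    · have h2 : p.2 ≤ CC h * p.2 := Nat.le_mul_of_pos_left _ (C_pos h)
      exact Nat.lt_succ_of_le (le_trans h2 (le_trans (Nat.le_add_left _ _) hx.1))

lemma repCount_eq (h m : ℕ) : repCount ![AA h, BB h, CC h] m = (PP h m).card := by
  classical
  unfold repCount
  refine Finset.card_bij' (fun x _ => ((x 1 : ℕ), (x 2 : ℕ)))
    (fun p _ => ![⟨(m - (BB h * p.1 + CC h * p.2)) / AA h,
        Nat.lt_succ_of_le (le_trans (Nat.div_le_self _ _) (Nat.sub_le _ _))⟩,
      ⟨min p.1 m, Nat.lt_succ_of_le (min_le_right _ _)⟩,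
      ⟨min p.2 m, Nat.lt_succ_of_le (min_le_right _ _)⟩]) ?_ ?_ ?_ ?_
  · -- forward maps into PP
    intro x hx
    rw [Finset.mem_filter] at hx
    have hsum := hx.2
    rw [Fin.sum_univ_three] at hsum
    simp only [Matrix.cons_val_zero, Matrix.cons_val_one, Matrix.head_cons,
      Matrix.cons_val_two, Matrix.tail_cons] at hsum
    rw [mem_PP]
    dsimp only
    have hnn : 0 ≤ AA h * (x 0 : ℕ) := Nat.zero_le _
    have hsub : m - (BB h * (x 1 : ℕ) + CC h * (x 2 : ℕ)) = AA h * (x 0 : ℕ) :=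
      Nat.sub_eq_of_eq_add (by linarith)
    constructor
    · linarith [Nat.zero_le (AA h * (x 0 : ℕ))]
    · rw [hsub]
      exact Dvd.intro _ rfl
  · -- backward maps into filter
    intro p hp
    rw [mem_PP] at hp
    rw [Finset.mem_filter]
    refine ⟨Finset.mem_univ _, ?_⟩
    rw [Fin.sum_univ_three]
    simp only [Matrix.cons_val_zero, Matrix.cons_val_one, Matrix.head_cons,
      Matrix.cons_val_two, Matrix.tail_cons]
    have hd := hp.2
    have h1 : p.1 ≤ BB h * p.1 := Nat.le_mul_of_pos_left _ (B_pos h)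
    have h2 : p.2 ≤ CC h * p.2 := Nat.le_mul_of_pos_left _ (C_pos h)
    have hmin1 : min p.1 m = p.1 := min_eq_left (by linarith [hp.1])
    have hmin2 : min p.2 m = p.2 := min_eq_left (by linarith [hp.1])
    simp only [Fin.val_mk, hmin1, hmin2]
    have hc : AA h * ((m - (BB h * p.1 + CC h * p.2)) / AA h) = m - (BB h * p.1 + CC h * p.2) :=
      Nat.mul_div_cancel' hd
    have := hp.1
    omega
  · -- left inverse
    intro x hx
    rw [Finset.mem_filter] at hx
    have hsum := hx.2
    rw [Fin.sum_univ_three] at hsum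
    simp only [Matrix.cons_val_zero, Matrix.cons_val_one, Matrix.head_cons,
      Matrix.cons_val_two, Matrix.tail_cons] at hsum
    have hmin1 : min (x 1 : ℕ) m = (x 1 : ℕ) := min_eq_left (Nat.le_of_lt_succ (x 1).isLt)
    have hmin2 : min (x 2 : ℕ) m = (x 2 : ℕ) := min_eq_left (Nat.le_of_lt_succ (x 2).isLt)
    have hsub : m - (BB h * (x 1 : ℕ) + CC h * (x 2 : ℕ)) = AA h * (x 0 : ℕ) :=
      Nat.sub_eq_of_eq_add (by linarith)
    funext i
    fin_cases i
    · apply Fin.ext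
      show (m - (BB h * (x 1 : ℕ) + CC h * (x 2 : ℕ))) / AA h = (x 0 : ℕ)
      rw [hsub, Nat.mul_div_cancel_left _ (A_pos h)]
    · apply Fin.ext
      show min (x 1 : ℕ) m = (x 1 : ℕ)
      exact hmin1
    · apply Fin.ext
      show min (x 2 : ℕ) m = (x 2 : ℕ)
      exact hmin2
  · -- right inverse
    intro p hp
    rw [mem_PP] at hp
    have h1 : p.1 ≤ BB h * p.1 := Nat.le_mul_of_pos_left _ (B_pos h)
    have h2 : p.2 ≤ CC h * p.2 := Nat.le_mul_of_pos_left _ (C_pos h)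
    have := hp.1
    apply Prod.ext
    · show min p.1 m = p.1
      exact min_eq_left (by linarith)
    · show min p.2 m = p.2
      exact min_eq_left (by linarith)

lemma exists_rep (h m : ℕ) : ∃ y₀ z₀ : ℕ, y₀ ≤ 2*h ∧ z₀ ≤ h ∧
    (AA h : ℤ) ∣ ((BB h * y₀ + CC h * z₀ : ℕ) : ℤ) - (m:ℤ) := by
  set z₀ := m % (h+1) with hz₀def
  have hz₀ : z₀ ≤ h := by
    have := Nat.mod_lt m (show 0 < h+1 by omega)
    omega
  have hq1 : (h+1) * (m / (h+1)) + z₀ = m := Nat.div_add_mod m (h+1)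
  set q1 := m / (h+1)
  have h3z : 3*z₀ ≤ m + 3*(2*h+1) := by omega
  set u := m + 3*(2*h+1) - 3*z₀ with hudef
  have hu : u + 3*z₀ = m + 3*(2*h+1) := by omega
  set y₀ := u % (2*h+1) with hy₀def
  have hy₀ : y₀ ≤ 2*h := by
    have := Nat.mod_lt u (show 0 < 2*h+1 by omega)
    omega
  have hQ : (2*h+1) * (u / (2*h+1)) + y₀ = u := Nat.div_add_mod u (2*h+1)
  set Q := u / (2*h+1)
  refine ⟨y₀, z₀, hy₀, hz₀, ?_⟩
  have hcop : IsCoprime ((2*h+1 : ℕ) : ℤ) ((h+1 : ℕ) : ℤ) := by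
    refine ⟨-1, 2, ?_⟩
    push_cast
    ring
  have hAfac : (AA h : ℤ) = ((2*h+1:ℕ):ℤ) * ((h+1:ℕ):ℤ) := by unfold AA; push_cast; ring
  rw [hAfac]
  apply IsCoprime.mul_dvd hcop
  · -- (2h+1) ∣ E
    refine ⟨(h+2)*y₀ + (h+3)*z₀ + 3 - Q, ?_⟩
    have hm' : (m:ℤ) = (u:ℤ) + 3*(z₀:ℤ) - 3*(2*(h:ℤ)+1) := by
      have hcast : (u:ℤ) + 3*(z₀:ℤ) = (m:ℤ) + 3*(2*(h:ℤ)+1) := by exact_mod_cast hu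
      linarith
    have hu' : (u:ℤ) = (2*(h:ℤ)+1) * Q + y₀ := by
      have hcast : (2*(h:ℤ)+1) * (Q:ℤ) + (y₀:ℤ) = (u:ℤ) := by exact_mod_cast hQ
      linarith
    unfold BB CC
    push_cast
    rw [hm', hu']
    ring
  · -- (h+1) ∣ E
    refine ⟨(2*h+3)*y₀ + (2*h+5)*z₀ - q1, ?_⟩
    have hm' : (m:ℤ) = ((h:ℤ)+1) * q1 + z₀ := by
      have hcast : ((h:ℤ)+1) * (q1:ℤ) + (z₀:ℤ) = (m:ℤ) := by exact_mod_cast hq1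
      linarith
    unfold BB CC
    push_cast
    rw [hm']
    ring

lemma classify (h y₀ z₀ y z : ℕ) (hy₀ : y₀ ≤ 2*h) (hz₀ : z₀ ≤ h)
    (hdvd : (AA h : ℤ) ∣ ((BB h * y + CC h * z : ℕ) : ℤ) - ((BB h * y₀ + CC h * z₀ : ℕ) : ℤ)) :
    ∃ w j : ℕ, z = z₀ + (h+1)*w ∧ y + (h+2)*w = y₀ + j*(2*h+1) := by
  obtain ⟨e, he⟩ := hdvd
  have he' : ((h:ℤ)+1)*(2*h+3)*y + ((h:ℤ)+2)*(2*h+3)*z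
      - (((h:ℤ)+1)*(2*h+3)*y₀ + ((h:ℤ)+2)*(2*h+3)*z₀)
      = ((2*(h:ℤ)+1)*((h:ℤ)+1)) * e := by
    have : ((BB h * y + CC h * z : ℕ) : ℤ) - ((BB h * y₀ + CC h * z₀ : ℕ) : ℤ) = (AA h:ℤ) * e := he
    unfold AA BB CC at this
    push_cast at this
    linarith [this]
  -- step 1 : (h+1) ∣ z - z₀
  have h1 : ((h:ℤ)+1) ∣ ((z:ℤ) - z₀) := by
    refine ⟨(2*(h:ℤ)+1)*e - (2*h+3)*((y:ℤ)-y₀) - (2*h+5)*((z:ℤ)-z₀), ?_⟩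
    linarith [he']
  obtain ⟨w', hw'⟩ := h1
  have hw0 : 0 ≤ w' := by
    rcases le_or_gt 0 w' with h'|h'
    · exact h'
    · exfalso
      have h2 : w' ≤ -1 := by omega
      have h3 : ((h:ℤ)+1)*w' ≤ ((h:ℤ)+1)*(-1) :=
        mul_le_mul_of_nonneg_left h2 (by positivity)
      have h4 : (0:ℤ) ≤ (z:ℤ) := Int.natCast_nonneg z
      have h5 : (z₀:ℤ) ≤ h := by exact_mod_cast hz₀
      linarith
  -- step 2
  have hcc : (2*(h:ℤ)+3)*((y:ℤ)-y₀) + (2*(h:ℤ)+3)*((h:ℤ)+2)*w' = (2*(h:ℤ)+1)*e := by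
    have hmul : ((h:ℤ)+1) * ((2*(h:ℤ)+3)*((y:ℤ)-y₀) + (2*(h:ℤ)+3)*((h:ℤ)+2)*w')
        = ((h:ℤ)+1) * ((2*(h:ℤ)+1)*e) := by
      linear_combination he' - (((h:ℤ)+2)*(2*(h:ℤ)+3))*hw'
    exact mul_left_cancel₀ (by positivity) hmul
  have h2 : ((2*(h:ℤ)+1)) ∣ (2*((y:ℤ) - y₀ + (h+2)*w')) := by
    refine ⟨e - ((y:ℤ) - y₀ + (h+2)*w'), ?_⟩
    linear_combination hcc
  have hcop2 : IsCoprime ((2*(h:ℤ)+1)) (2:ℤ) := ⟨1, -(h:ℤ), by ring⟩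
  have h2' : ((2*(h:ℤ)+1)) ∣ ((y:ℤ) - y₀ + (h+2)*w') := hcop2.dvd_of_dvd_mul_left h2
  obtain ⟨j', hj'⟩ := h2'
  have hj0 : 0 ≤ j' := by
    rcases le_or_gt 0 j' with h'|h'
    · exact h'
    · exfalso
      have hj2 : j' ≤ -1 := by omega
      have h3 : (2*(h:ℤ)+1)*j' ≤ (2*(h:ℤ)+1)*(-1) :=
        mul_le_mul_of_nonneg_left hj2 (by positivity)
      have h4 : (0:ℤ) ≤ (y:ℤ) := Int.natCast_nonneg y
      have h5 : (y₀:ℤ) ≤ 2*h := by exact_mod_cast hy₀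
      have h6 : (0:ℤ) ≤ ((h:ℤ)+2)*w' := by positivity
      linarith
  lift w' to ℕ using hw0 with w
  lift j' to ℕ using hj0 with j
  refine ⟨w, j, ?_, ?_⟩
  · exact_mod_cast (by linarith [hw'] : (z:ℤ) = z₀ + (h+1)*w)
  · exact_mod_cast (by linarith [hj'] : (y:ℤ) + (h+2)*w = y₀ + j*(2*h+1))

lemma value_eq (h y₀ z₀ y z w j : ℕ) (hz : z = z₀ + (h+1)*w)
    (hyw : y + (h+2)*w = y₀ + j*(2*h+1)) :
    BB h * y + CC h * z = BB h * y₀ + CC h * z₀ + j*((2*h+1)*BB h) := by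
  have idc : CC h * ((h+1)*w) = BB h * ((h+2)*w) := by unfold BB CC; ring
  have e1 : BB h * (y + (h+2)*w) = BB h * (y₀ + j*(2*h+1)) := by rw [hyw]
  calc BB h * y + CC h * z = BB h * y + CC h * z₀ + CC h * ((h+1)*w) := by rw [hz]; ring
    _ = BB h * y + CC h * z₀ + BB h * ((h+2)*w) := by rw [idc]
    _ = BB h * (y + (h+2)*w) + CC h * z₀ := by ring
    _ = BB h * (y₀ + j*(2*h+1)) + CC h * z₀ := by rw [e1]
    _ = BB h * y₀ + CC h * z₀ + j*((2*h+1)*BB h) := by ring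

lemma card_lower (h m y₀ z₀ K : ℕ) (hz₀ : z₀ ≤ h)
    (hdvd : (AA h : ℤ) ∣ ((BB h * y₀ + CC h * z₀ : ℕ) : ℤ) - (m:ℤ))
    (hval : ∀ j < K, BB h * y₀ + CC h * z₀ + j * ((2*h+1) * BB h) ≤ m) :
    ∑ j ∈ Finset.range K, ((y₀ + j*(2*h+1))/(h+2) + 1) ≤ (PP h m).card := by
  have hcard : ∑ j ∈ Finset.range K, ((y₀ + j*(2*h+1))/(h+2) + 1)
      = ((Finset.range K).sigma (fun j => Finset.range ((y₀ + j*(2*h+1))/(h+2) + 1))).card := by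
    rw [Finset.card_sigma]
    simp
  rw [hcard]
  apply Finset.card_le_card_of_injOn
    (fun q => (y₀ + q.1*(2*h+1) - (h+2)*q.2, z₀ + (h+1)*q.2))
  · rintro ⟨j, w⟩ hq
    rw [Finset.mem_coe, Finset.mem_sigma, Finset.mem_range, Finset.mem_range] at hq
    obtain ⟨hjK, hw⟩ := hq
    have hwle : (h+2)*w ≤ y₀ + j*(2*h+1) := by
      have hw' := Nat.le_of_lt_succ hw
      have h2 := (Nat.le_div_iff_mul_le (show 0 < h+2 by omega)).mp hw'
      linarith
    set y := y₀ + j*(2*h+1) - (h+2)*w with hy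
    have hyw : y + (h+2)*w = y₀ + j*(2*h+1) := by
      rw [hy]; exact Nat.sub_add_cancel hwle
    have hvaleq : BB h * y + CC h * (z₀ + (h+1)*w)
        = BB h * y₀ + CC h * z₀ + j*((2*h+1)*BB h) :=
      value_eq h y₀ z₀ y _ w j rfl hyw
    have hle : BB h * y + CC h * (z₀+(h+1)*w) ≤ m := by rw [hvaleq]; exact hval j hjK
    rw [Finset.mem_coe, mem_PP]
    dsimp only
    refine ⟨hle, ?_⟩
    have e2 : BB h * y + CC h * (z₀+(h+1)*w) = BB h * y₀ + CC h * z₀ + j*((2*h+3)*AA h) := by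
      rw [hvaleq, nB_eq]
    have hcast : ((BB h * y + CC h * (z₀+(h+1)*w) : ℕ):ℤ) - (m:ℤ)
        = (((BB h * y₀ + CC h * z₀ : ℕ)):ℤ) - m + (j:ℤ)*((2*(h:ℤ)+3)*(AA h:ℤ)) := by
      rw [e2]; push_cast; ring
    have hdv3 : (AA h:ℤ) ∣ ((BB h * y + CC h * (z₀+(h+1)*w) : ℕ):ℤ) - (m:ℤ) := by
      rw [hcast]; exact dvd_add hdvd ⟨(j:ℤ)*(2*(h:ℤ)+3), by ring⟩
    have hdv4 : (AA h:ℤ) ∣ ((m - (BB h * y + CC h * (z₀+(h+1)*w)) : ℕ):ℤ) := by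
      rw [Nat.cast_sub hle]
      have := dvd_neg.mpr hdv3
      rwa [neg_sub] at this
    exact_mod_cast hdv4
  · rintro ⟨j, w⟩ hq ⟨j', w'⟩ hq' heq
    rw [Finset.mem_coe, Finset.mem_sigma, Finset.mem_range, Finset.mem_range] at hq hq'
    have hwle : (h+2)*w ≤ y₀ + j*(2*h+1) := by
      have h2 := (Nat.le_div_iff_mul_le (show 0 < h+2 by omega)).mp (Nat.le_of_lt_succ hq.2)
      linarith
    have hwle' : (h+2)*w' ≤ y₀ + j'*(2*h+1) := by
      have h2 := (Nat.le_div_iff_mul_le (show 0 < h+2 by omega)).mp (Nat.le_of_lt_succ hq'.2)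
      linarith
    simp only [Prod.mk.injEq] at heq
    obtain ⟨h1, h2⟩ := heq
    have hww : w = w' := by
      have h3 := Nat.add_left_cancel h2
      exact Nat.eq_of_mul_eq_mul_left (show 0 < h+1 by omega) h3
    subst hww
    have h4 : y₀ + j*(2*h+1) = y₀ + j'*(2*h+1) := by
      have := congrArg (· + (h+2)*w) h1
      rwa [Nat.sub_add_cancel hwle, Nat.sub_add_cancel hwle'] at this
    have hjj : j = j' :=
      Nat.eq_of_mul_eq_mul_right (show 0 < 2*h+1 by omega) (Nat.add_left_cancel h4)
    subst hjj
    rfl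

lemma member_spec (h y₀ m : ℕ) (hy₀ : y₀ ≤ 2*h)
    (hdvd : (AA h : ℤ) ∣ ((BB h * y₀ + CC h * h : ℕ) : ℤ) - (m:ℤ)) :
    ∀ p ∈ PP h m, ∃ w j : ℕ,
      p.2 = h + (h+1)*w ∧ p.1 + (h+2)*w = y₀ + j*(2*h+1) ∧
      ((p.2 - h)/(h+1) = w) ∧ ((p.1 + (h+2)*((p.2 - h)/(h+1)) - y₀)/(2*h+1) = j) ∧
      BB h * p.1 + CC h * p.2 = BB h * y₀ + CC h * h + j*((2*h+1)*BB h) := by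
  intro p hp
  rw [mem_PP] at hp
  obtain ⟨hle, hdp⟩ := hp
  have hd1 : (AA h:ℤ) ∣ ((m - (BB h*p.1+CC h*p.2) : ℕ):ℤ) := Int.natCast_dvd_natCast.mpr hdp
  rw [Nat.cast_sub hle] at hd1
  have hd2 : (AA h:ℤ) ∣ ((BB h*p.1+CC h*p.2 : ℕ):ℤ) - ((BB h*y₀+CC h*h : ℕ):ℤ) := by
    have hsum := dvd_add hd1 hdvd
    have e : (m:ℤ) - ((BB h*p.1+CC h*p.2:ℕ):ℤ) + (((BB h*y₀+CC h*h:ℕ):ℤ) - m)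
        = ((BB h*y₀+CC h*h:ℕ):ℤ) - ((BB h*p.1+CC h*p.2:ℕ):ℤ) := by ring
    rw [e] at hsum
    have := dvd_neg.mpr hsum
    rwa [neg_sub] at this
  obtain ⟨w, j, hz, hyw⟩ := classify h y₀ h p.1 p.2 hy₀ le_rfl hd2
  have c3 : (p.2 - h)/(h+1) = w := by
    rw [hz, Nat.add_sub_cancel_left, Nat.mul_div_cancel_left _ (show 0 < h+1 by omega)]
  have c4 : (p.1 + (h+2)*((p.2 - h)/(h+1)) - y₀)/(2*h+1) = j := by
    rw [c3, hyw, Nat.add_sub_cancel_left, Nat.mul_div_cancel _ (show 0 < 2*h+1 by omega)]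
  exact ⟨w, j, hz, hyw, c3, c4, value_eq h y₀ h p.1 p.2 w j hz hyw⟩

lemma card_upper (h y₀ K m : ℕ) (hy₀ : y₀ ≤ 2*h)
    (hdvd : (AA h : ℤ) ∣ ((BB h * y₀ + CC h * h : ℕ) : ℤ) - (m:ℤ))
    (hm : m + AA h ≤ BB h * y₀ + CC h * h + K*((2*h+1)*BB h)) :
    (PP h m).card ≤ ∑ j ∈ Finset.range K, ((y₀ + j*(2*h+1))/(h+2) + 1) := by
  have hcard : ∑ j ∈ Finset.range K, ((y₀ + j*(2*h+1))/(h+2) + 1)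
      = ((Finset.range K).sigma (fun j => Finset.range ((y₀ + j*(2*h+1))/(h+2) + 1))).card := by
    rw [Finset.card_sigma]
    simp
  rw [hcard]
  apply Finset.card_le_card_of_injOn
    (fun p => ⟨(p.1 + (h+2)*((p.2 - h)/(h+1)) - y₀)/(2*h+1), (p.2 - h)/(h+1)⟩)
  · intro p hp
    obtain ⟨w, j, hz, hyw, c3, c4, hval⟩ := member_spec h y₀ m hy₀ hdvd p hp
    have c4' : (p.1 + (h+2)*w - y₀)/(2*h+1) = j := by
      rw [hyw, Nat.add_sub_cancel_left, Nat.mul_div_cancel _ (show 0 < 2*h+1 by omega)]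
    rw [Finset.mem_coe, Finset.mem_sigma, Finset.mem_range, Finset.mem_range]
    dsimp only
    rw [c3, c4']
    constructor
    · have hlem := ((mem_PP h m p).mp hp).1
      rw [hval] at hlem
      have hAApos := A_pos h
      have hkey : j*((2*h+1)*BB h) + AA h ≤ K*((2*h+1)*BB h) := by linarith
      by_contra hKj
      push_neg at hKj
      have : K*((2*h+1)*BB h) ≤ j*((2*h+1)*BB h) := Nat.mul_le_mul_right _ hKj
      linarith
    · have hwle : w*(h+2) ≤ y₀ + j*(2*h+1) := by
        have : (h+2)*w ≤ p.1 + (h+2)*w := Nat.le_add_left _ _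
        rw [hyw] at this
        linarith
      exact Nat.lt_succ_of_le ((Nat.le_div_iff_mul_le (show 0 < h+2 by omega)).mpr hwle)
  · intro p hp p2 hp2 heq
    rw [Finset.mem_coe] at hp hp2
    obtain ⟨w, j, hz, hyw, c3, c4, hval⟩ := member_spec h y₀ m hy₀ hdvd p hp
    obtain ⟨w2, j2, hz2, hyw2, c32, c42, hval2⟩ := member_spec h y₀ m hy₀ hdvd p2 hp2
    have e1 := congrArg Sigma.fst heq
    have e2 := congrArg Sigma.snd heq
    dsimp only at e1 e2
    have hw : w = w2 := by rw [← c3, ← c32]; exact e2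
    have hj : j = j2 := by rw [← c4, ← c42]; exact e1
    subst hw
    subst hj
    have hp2eq : p.2 = p2.2 := by rw [hz, hz2]
    have hp1eq : p.1 = p2.1 := by
      have hc := hyw.trans hyw2.symm
      exact Nat.add_right_cancel hc
    exact Prod.ext hp1eq hp2eq

lemma sum_two (K : ℕ) : ∑ j ∈ Finset.range K, (2*j+2) = K*K+K := by
  induction K with
  | zero => simp
  | succ n ih => rw [Finset.sum_range_succ, ih]; ring

lemma sum_eval_top (h k : ℕ) (hh : 3*k ≤ h+1) :
    ∑ j ∈ Finset.range k, ((2*h + j*(2*h+1))/(h+2) + 1) = k*k+k := by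
  have hterm : ∀ j ∈ Finset.range k, ((2*h + j*(2*h+1))/(h+2) + 1) = 2*j+2 := by
    intro j hj
    rw [Finset.mem_range] at hj
    have h3j : 3*j+2 ≤ h := by omega
    have hdiv : (2*h + j*(2*h+1))/(h+2) = 2*j+1 := by
      apply Nat.div_eq_of_lt_le
      · have e1 : (2*j+1)*(h+2) = 2*(j*h)+4*j+h+2 := by ring
        have e2 : 2*h + j*(2*h+1) = 2*(j*h)+2*h+j := by ring
        linarith
      · have e1 : (2*j+1+1)*(h+2) = 2*(j*h)+4*j+2*h+4 := by ring
        have e2 : 2*h + j*(2*h+1) = 2*(j*h)+2*h+j := by ring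
        linarith
    rw [hdiv]
  rw [Finset.sum_congr rfl hterm, sum_two]

lemma sum_eval_mid (h K : ℕ) (hh : 3*(K+1) ≤ h+1) :
    ∑ j ∈ Finset.range (K+1), (((h+3*K+1) + j*(2*h+1))/(h+2) + 1) = (K+1)*(K+1)+K := by
  rw [Finset.sum_range_succ]
  have hlast : ((h+3*K+1) + K*(2*h+1))/(h+2) = 2*K := by
    apply Nat.div_eq_of_lt_le
    · have e1 : 2*K*(h+2) = 2*(K*h)+4*K := by ring
      have e2 : (h+3*K+1) + K*(2*h+1) = 2*(K*h)+h+4*K+1 := by ring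
      linarith
    · have e1 : (2*K+1)*(h+2) = 2*(K*h)+4*K+h+2 := by ring
      have e2 : (h+3*K+1) + K*(2*h+1) = 2*(K*h)+h+4*K+1 := by ring
      linarith
  have hterm : ∀ j ∈ Finset.range K, (((h+3*K+1) + j*(2*h+1))/(h+2) + 1) = 2*j+2 := by
    intro j hj
    rw [Finset.mem_range] at hj
    have hjK : 3*j+1 ≤ 3*K := by omega
    have hK2 : 3*K+2 ≤ h := by omega
    have hdiv : ((h+3*K+1) + j*(2*h+1))/(h+2) = 2*j+1 := by
      apply Nat.div_eq_of_lt_le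
      · have e1 : (2*j+1)*(h+2) = 2*(j*h)+4*j+h+2 := by ring
        have e2 : (h+3*K+1) + j*(2*h+1) = 2*(j*h)+h+3*K+j+1 := by ring
        linarith
      · have e1 : (2*j+1+1)*(h+2) = 2*(j*h)+4*j+2*h+4 := by ring
        have e2 : (h+3*K+1) + j*(2*h+1) = 2*(j*h)+h+3*K+j+1 := by ring
        linarith
    rw [hdiv]
  rw [Finset.sum_congr rfl hterm, sum_two, hlast]
  ring

lemma sum_lb_kp1 (h k y₀ : ℕ) (hh : 3*k ≤ h+1) :
    k*(k+1)+1 ≤ ∑ j ∈ Finset.range (k+1), ((y₀ + j*(2*h+1))/(h+2) + 1) := by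
  rw [Finset.sum_range_succ']
  have hterms : ∀ i ∈ Finset.range k, 2*i+2 ≤ (y₀+(i+1)*(2*h+1))/(h+2)+1 := by
    intro i hi
    rw [Finset.mem_range] at hi
    have h3i : 3*i+1 ≤ h := by omega
    have hdiv : 2*i+1 ≤ (y₀+(i+1)*(2*h+1))/(h+2) := by
      rw [Nat.le_div_iff_mul_le (show 0<h+2 by omega)]
      have e1 : (2*i+1)*(h+2) = 2*(i*h)+4*i+h+2 := by ring
      have e2 : y₀+(i+1)*(2*h+1) = y₀+2*(i*h)+2*h+i+1 := by ring
      linarith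
    linarith
  have hsum := Finset.sum_le_sum hterms
  have hst : ∑ i ∈ Finset.range k, (2*i+2) = k*k+k := sum_two k
  have h0 : 1 ≤ (y₀ + 0*(2*h+1))/(h+2) + 1 := Nat.le_add_left _ _
  have hkk : k*(k+1) = k*k+k := by ring
  linarith

lemma sum_lb_big (h k y₀ : ℕ) (hh : 3*k ≤ h+1) (hy : h+3*k ≤ y₀+1) :
    k*(k+1) ≤ ∑ j ∈ Finset.range k, ((y₀ + j*(2*h+1))/(h+2) + 1) := by
  have hterms : ∀ j ∈ Finset.range k, 2*j+2 ≤ (y₀+j*(2*h+1))/(h+2)+1 := by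
    intro j hj
    rw [Finset.mem_range] at hj
    have hy' : h+3*k ≤ y₀+1 := hy
    have hdiv : 2*j+1 ≤ (y₀+j*(2*h+1))/(h+2) := by
      rw [Nat.le_div_iff_mul_le (show 0<h+2 by omega)]
      have e1 : (2*j+1)*(h+2) = 2*(j*h)+4*j+h+2 := by ring
      have e2 : y₀+j*(2*h+1) = y₀+2*(j*h)+j := by ring
      have h3j : 3*j+3 ≤ 3*k := by omega
      linarith
    linarith
  have hsum := Finset.sum_le_sum hterms
  have hst : ∑ j ∈ Finset.range k, (2*j+2) = k*k+k := sum_two k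
  have hkk : k*(k+1) = k*k+k := by ring
  linarith

lemma genFrob_eq_of (S : ℕ) (v : Fin 3 → ℕ) (G : ℕ)
    (hmem : repCount v G ≤ S) (hub : ∀ m : ℕ, G < m → S < repCount v m) :
    genFrob v S = (G:ℤ) := by
  have hgr : IsGreatest {m : ℤ | repCountZ v m ≤ S} (G:ℤ) := by
    constructor
    · show repCountZ v (G:ℤ) ≤ S
      unfold repCountZ
      rw [if_pos (Int.natCast_nonneg G), Int.toNat_natCast]
      exact hmem
    · intro x hx
      by_contra hgt
      push_neg at hgt
      have hx0 : 0 ≤ x := le_trans (Int.natCast_nonneg G) hgt.le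
      lift x to ℕ using hx0
      have hGx : G < x := by exact_mod_cast hgt
      have hub' := hub x hGx
      have hxS : repCountZ v (x:ℤ) ≤ S := hx
      unfold repCountZ at hxS
      rw [if_pos (Int.natCast_nonneg x), Int.toNat_natCast] at hxS
      omega
  exact hgr.csSup_eq

set_option maxHeartbeats 2000000 in
theorem master (h k S Y : ℕ) (hk : 1 ≤ k) (hh : 3*k ≤ h+1)
    (hY1 : h+1 ≤ Y) (hY2 : Y ≤ 2*h) (hS : S ≤ k*(k+1))
    (hsum : ∑ j ∈ Finset.range k, ((Y + j*(2*h+1))/(h+2) + 1) ≤ S)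
    (Hbig : ∀ y₀, Y < y₀ → y₀ ≤ 2*h →
      S+1 ≤ ∑ j ∈ Finset.range k, ((y₀ + j*(2*h+1))/(h+2) + 1)) :
    genFrob ![t (2*h+1), t (2*h+1+1), t (2*h+1+2)] S
      = ((BB h * (Y + (2*h+1)*k) + CC h * h - AA h : ℕ) : ℤ) := by
  have hv : (![t (2*h+1), t (2*h+1+1), t (2*h+1+2)] : Fin 3 → ℕ) = ![AA h, BB h, CC h] := by
    funext i
    fin_cases i
    · show t (2*h+1) = AA h
      exact t_eqA h
    · show t (2*h+1+1) = BB h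
      exact t_eqB h
    · show t (2*h+1+2) = CC h
      exact t_eqC h
  rw [hv]
  have hApos := A_pos h
  have hBpos := B_pos h
  have hCpos := C_pos h
  have hAB := A_lt_B h
  have hAC := A_lt_C h
  have hmul1 : BB h * (Y + (2*h+1)*k) = BB h * Y + k*((2*h+1)*BB h) := by ring
  have hBle : BB h ≤ BB h * (Y + (2*h+1)*k) := Nat.le_mul_of_pos_right _ (by positivity)
  have hAG : AA h ≤ BB h * (Y + (2*h+1)*k) + CC h * h :=
    le_trans (le_of_lt hAB) (le_trans hBle (Nat.le_add_right _ _))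
  have hGA : (BB h * (Y + (2*h+1)*k) + CC h * h - AA h) + AA h
      = BB h * (Y + (2*h+1)*k) + CC h * h := Nat.sub_add_cancel hAG
  apply genFrob_eq_of
  · -- repCount at G ≤ S
    rw [repCount_eq]
    have hGz : ((BB h * (Y + (2*h+1)*k) + CC h * h - AA h : ℕ):ℤ)
        = ((BB h * (Y + (2*h+1)*k) + CC h * h : ℕ):ℤ) - (AA h:ℤ) := by
      rw [Nat.cast_sub hAG]
    have hdvd : (AA h : ℤ) ∣ ((BB h * Y + CC h * h : ℕ) : ℤ)
        - ((BB h * (Y + (2*h+1)*k) + CC h * h - AA h : ℕ):ℤ) := by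
      refine ⟨1 - (k:ℤ)*(2*(h:ℤ)+3), ?_⟩
      rw [hGz]
      unfold AA BB CC
      push_cast
      ring
    have hmle : (BB h * (Y + (2*h+1)*k) + CC h * h - AA h) + AA h
        ≤ BB h * Y + CC h * h + k*((2*h+1)*BB h) := by
      rw [hGA]
      linarith [hmul1]
    have hcu := card_upper h Y k (BB h * (Y + (2*h+1)*k) + CC h * h - AA h) hY2 hdvd hmle
    exact le_trans hcu hsum
  · -- lower bound: every m > G has > S representations
    intro m hm
    rw [repCount_eq]
    obtain ⟨y₀, z₀, hy₀, hz₀, hdvd⟩ := exists_rep h m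
    have hCz : CC h * z₀ ≤ CC h * h := Nat.mul_le_mul_left _ hz₀
    have hBy : BB h * y₀ ≤ BB h * (2*h) := Nat.mul_le_mul_left _ hy₀
    have hVG : BB h * y₀ + CC h * z₀ ≤ BB h * (Y + (2*h+1)*k) + CC h * h - AA h := by
      have h2 : (2*h+1)*1 ≤ (2*h+1)*k := Nat.mul_le_mul_left _ hk
      have h1 : 3*h+2 ≤ Y + (2*h+1)*k := by linarith
      have h3 : BB h * (3*h+2) ≤ BB h * (Y + (2*h+1)*k) := Nat.mul_le_mul_left _ h1
      have h4 : BB h * (3*h+2) = BB h * (2*h) + BB h * (h+2) := by ring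
      have h5 : BB h ≤ BB h * (h+2) := Nat.le_mul_of_pos_right _ (by positivity)
      omega
    have hVm : BB h * y₀ + CC h * z₀ ≤ m := le_trans hVG (le_of_lt hm)
    have hnBpos : 0 < (2*h+1)*BB h := by positivity
    set J := (m - (BB h * y₀ + CC h * z₀))/((2*h+1)*BB h) with hJdef
    clear_value J
    have hdm := Nat.div_add_mod (m - (BB h * y₀ + CC h * z₀)) ((2*h+1)*BB h)
    have hmod := Nat.mod_lt (m - (BB h * y₀ + CC h * z₀)) hnBpos
    have hsubV : (BB h * y₀ + CC h * z₀) + (m - (BB h * y₀ + CC h * z₀)) = m :=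
      Nat.add_sub_cancel' hVm
    have hJmul := Nat.div_mul_le_self (m - (BB h * y₀ + CC h * z₀)) ((2*h+1)*BB h)
    have hJ1 : (BB h * y₀ + CC h * z₀) + J*((2*h+1)*BB h) ≤ m := by
      rw [hJdef]
      linarith [hJmul]
    have hJ2 : m < (BB h * y₀ + CC h * z₀) + (J+1)*((2*h+1)*BB h) := by
      have hexp : (J+1)*((2*h+1)*BB h) = ((2*h+1)*BB h)*J + (2*h+1)*BB h := by ring
      have hdm' : ((2*h+1)*BB h)*J + (m - (BB h * y₀ + CC h * z₀)) % ((2*h+1)*BB h)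
          = m - (BB h * y₀ + CC h * z₀) := by rw [hJdef]; exact hdm
      linarith
    rcases le_or_gt k J with hkJ | hJk
    · -- J ≥ k
      have hval : ∀ j < k+1, BB h * y₀ + CC h * z₀ + j * ((2*h+1) * BB h) ≤ m := by
        intro j hj
        have hjJ : j*((2*h+1)*BB h) ≤ J*((2*h+1)*BB h) :=
          Nat.mul_le_mul_right _ (by omega)
        linarith
      have hlow := card_lower h m y₀ z₀ (k+1) hz₀ hdvd hval
      have hlb := sum_lb_kp1 h k y₀ hh
      linarith
    · -- J + 1 ≤ k
      obtain ⟨D, rfl⟩ : ∃ D, k = J+1+D := ⟨k-(J+1), by omega⟩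
      have hchain : BB h * (Y + (2*h+1)*(J+1+D)) + CC h * h + 1 ≤ m + AA h := by
        linarith [hm, hGA]
      have hGpa_exp : BB h * (Y + (2*h+1)*(J+1+D)) + CC h * h
          = BB h * Y + (J+1)*((2*h+1)*BB h) + D*((2*h+1)*BB h) + CC h * h := by ring
      have hYD : Y + (2*h+1)*D ≤ y₀ := by
        by_contra hcon
        push_neg at hcon
        have hx1 : BB h * Y + D*((2*h+1)*BB h) + 1 + CC h * h
            ≤ BB h * y₀ + CC h * h + AA h := by
          linarith [hchain, hJ2, hGpa_exp, hCz]
        have e : BB h * (Y + (2*h+1)*D) = BB h * Y + D*((2*h+1)*BB h) := by ring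
        have e2 : BB h * (y₀+1) = BB h * y₀ + BB h := by ring
        have hx2 : BB h * (Y + (2*h+1)*D) < BB h * (y₀ + 1) := by linarith
        have := Nat.lt_of_mul_lt_mul_left hx2
        omega
      have hD0 : D = 0 := by
        by_contra hD0
        have hD1 : 1 ≤ D := by omega
        have hge : 2*h+1 ≤ (2*h+1)*D := by
          calc 2*h+1 = (2*h+1)*1 := by ring
            _ ≤ (2*h+1)*D := Nat.mul_le_mul_left (2*h+1) hD1
        linarith [hYD, hY1, hy₀, hge]
      subst hD0
      have hYy : Y ≤ y₀ := by
        have h0 : (2*h+1)*0 = 0 := by ring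
        rw [h0] at hYD
        omega
      rcases lt_or_eq_of_le hYy with hYlt | hYeq
      · have hval : ∀ j < J+1+0, BB h * y₀ + CC h * z₀ + j * ((2*h+1) * BB h) ≤ m := by
          intro j hj
          have hjJ : j*((2*h+1)*BB h) ≤ J*((2*h+1)*BB h) :=
            Nat.mul_le_mul_right _ (by omega)
          linarith
        have hlow := card_lower h m y₀ z₀ (J+1+0) hz₀ hdvd hval
        have hbig := Hbig y₀ hYlt hy₀
        linarith
      · -- y₀ = Y : contradiction via divisibility
        exfalso
        rw [← hYeq] at hJ2 hdvd
        have hz₀h : z₀ = h := by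
          by_contra hzc
          have hzlt : z₀ + 1 ≤ h := by omega
          have hCz2 : CC h * (z₀+1) ≤ CC h * h := Nat.mul_le_mul_left _ hzlt
          have hCz3 : CC h * (z₀+1) = CC h * z₀ + CC h := by ring
          have hGexp : BB h * (Y + (2*h+1)*(J+1+0)) + CC h * h
              = BB h * Y + (J+1)*((2*h+1)*BB h) + CC h * h := by ring
          linarith [hchain, hJ2, hGexp, hCz2, hCz3, hAC]
        have hGpa2 : BB h * (Y + (2*h+1)*(J+1+0)) + CC h * h
            = (BB h * Y + CC h * z₀) + (J+1)*((2*h+3)*AA h) := by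
          rw [hz₀h, ← nB_eq]
          ring
        have hJ2' : m < BB h * Y + CC h * z₀ + (J+1)*((2*h+3)*AA h) := by
          rw [← nB_eq]
          exact hJ2
        have hmG : m < BB h * (Y + (2*h+1)*(J+1+0)) + CC h * h := by
          rw [hGpa2]
          exact hJ2'
        have hdd : (AA h : ℤ) ∣ (((BB h * (Y + (2*h+1)*(J+1+0)) + CC h * h : ℕ)):ℤ) - m := by
          have e : (((BB h * (Y + (2*h+1)*(J+1+0)) + CC h * h : ℕ)):ℤ) - m
              = (((BB h * Y + CC h * z₀ : ℕ)):ℤ) - m + (AA h:ℤ)*(((J:ℤ)+1)*(2*(h:ℤ)+3)) := by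
            rw [hGpa2]
            push_cast
            ring
          rw [e]
          exact dvd_add hdvd (Dvd.intro _ rfl)
        have hpos : 0 < (((BB h * (Y + (2*h+1)*(J+1+0)) + CC h * h : ℕ)):ℤ) - m := by
          have hc : (m:ℤ) < ((BB h * (Y + (2*h+1)*(J+1+0)) + CC h * h : ℕ):ℤ) := by
            exact_mod_cast hmG
          linarith
        have hled := Int.le_of_dvd hpos hdd
        have hmlow : ((BB h * (Y + (2*h+1)*(J+1+0)) + CC h * h : ℕ):ℤ) - (AA h:ℤ) + 1 ≤ (m:ℤ) := by
          have h1 : (BB h * (Y + (2*h+1)*(J+1+0)) + CC h * h - AA h) + 1 ≤ m := hm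
          have h2 : (((BB h * (Y + (2*h+1)*(J+1+0)) + CC h * h - AA h : ℕ)):ℤ) + 1 ≤ (m:ℤ) := by
            exact_mod_cast h1
          rw [Nat.cast_sub hAG] at h2
          exact h2
        linarith

end S5

open S5

/-- for odd `n > N_{s+1}^odd`, if `s+1 = k(k+1)` with `k ≥ 1`, then
`g(…; s+1) - g(…; s) = (n - 6k + 3)(n+1)(n+2)/4`. -/
theorem stmt_5 (s n k : ℕ) (hn : Odd n) (hbound : (n : ℤ) > NOdd (s + 1))
    (hk : 1 ≤ k) (hsk : s + 1 = k * (k + 1)) :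
    genFrob ![t n, t (n + 1), t (n + 2)] (s + 1) - genFrob ![t n, t (n + 1), t (n + 2)] s =
      ((n : ℤ) - 6 * k + 3) * ((n : ℤ) + 1) * ((n : ℤ) + 2) / 4 := by
  obtain ⟨h, hn2⟩ := hn
  have hn3 : n = 2*h+1 := by omega
  subst hn3
  obtain ⟨K, rfl⟩ : ∃ K, k = K+1 := ⟨k-1, by omega⟩
  have hsq : Nat.sqrt (4*(s+1)+5) = 2*(K+1)+1 := by
    have h1 : (2*(K+1)+1)*(2*(K+1)+1) ≤ 4*(s+1)+5 := by rw [hsk]; nlinarith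
    have h2 : 4*(s+1)+5 < (2*(K+1)+2)*(2*(K+1)+2) := by rw [hsk]; nlinarith
    have h3 := Nat.le_sqrt.mpr h1
    have h4 := Nat.sqrt_lt.mpr h2
    omega
  have hNOdd : NOdd (s+1) = 6*((K:ℤ)+1) - 3 := by
    unfold NOdd
    rw [hsq]
    have e : (2*(K+1)+1-1)/2 = K+1 := by omega
    rw [e]
    push_cast
    ring
  rw [hNOdd] at hbound
  have hh : 3*(K+1) ≤ h+1 := by
    have h6 : (6:ℤ)*((K:ℤ)+1) - 3 < ((2*h+1 : ℕ):ℤ) := hbound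
    push_cast at h6
    omega
  have hkk : (K+1)*((K+1)+1) = (K+1)*(K+1)+(K+1) := by ring
  -- genFrob at s+1
  have hM2 := master h (K+1) (s+1) (2*h) (by omega) hh (by omega) le_rfl
    (le_of_eq hsk)
    (by rw [sum_eval_top h (K+1) hh]; linarith [hsk, hkk])
    (by intro y₀ hgt hle; omega)
  -- genFrob at s
  have hsum_mid : ∑ j ∈ Finset.range (K+1), (((h+3*K+1) + j*(2*h+1))/(h+2) + 1) ≤ s := by
    rw [sum_eval_mid h K hh]
    have e2 : (K+1)*((K+1)+1) = (K+1)*(K+1)+K+1 := by ring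
    linarith [hsk]
  have hM1 := master h (K+1) s (h+3*K+1) (by omega) hh (by omega) (by omega)
    (by linarith [hsk, hkk])
    hsum_mid
    (by
      intro y₀ hgt hle
      have hy : h+3*(K+1) ≤ y₀+1 := by omega
      have := sum_lb_big h (K+1) y₀ hh hy
      linarith [hsk])
  rw [hM2, hM1]
  have hAG2 : AA h ≤ BB h * (2*h + (2*h+1)*(K+1)) + CC h * h := by
    have hb : BB h ≤ BB h * (2*h + (2*h+1)*(K+1)) := Nat.le_mul_of_pos_right _ (by positivity)
    linarith [A_lt_B h, Nat.zero_le (CC h * h)]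
  have hAG1 : AA h ≤ BB h * ((h+3*K+1) + (2*h+1)*(K+1)) + CC h * h := by
    have hb : BB h ≤ BB h * ((h+3*K+1) + (2*h+1)*(K+1)) := Nat.le_mul_of_pos_right _ (by positivity)
    linarith [A_lt_B h, Nat.zero_le (CC h * h)]
  rw [Nat.cast_sub hAG2, Nat.cast_sub hAG1]
  have h4 : (((2*h+1:ℕ):ℤ) - 6*(((K+1):ℕ):ℤ) + 3) * (((2*h+1:ℕ):ℤ) + 1) * (((2*h+1:ℕ):ℤ) + 2)
      = 4 * ((((h:ℤ) - 3*K - 1)) * (((h:ℤ)+1) * (2*(h:ℤ)+3))) := by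
    push_cast
    ring
  rw [h4, Int.mul_ediv_cancel_left _ (by norm_num : (4:ℤ) ≠ 0)]
  simp only [AA, BB, CC]
  push_cast
  ring
end
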